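/- arXiv:0708.0758 — 7 statements merged into one kernel-verified Lean document; each statement's English description precedes it below -/
import Mathlib

section
/- Let F be a free group of rank m and let ℤ^r be the free abelian group of rank r with basis t_1, …, t_r, where r ≤ m. If φ : F → ℤ^r is a surjective group homomorphism, then there exists a basis e_1, …, e_m of the free group F such that φ(e_i) = t_i for 1 ≤ i ≤ r and φ(e_i) = 0 for r+1 ≤ i ≤ m. -/
/-- The element `t_i` of the free abelian group `ℤ^r` (written multiplicatively),
with basis `t_1, …, t_r` realised as the coordinate vectors `Pi.single i 1`. -/
def tbasis (r : ℕ) (i : Fin r) : Multiplicative (Fin r → ℤ) :=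
  Multiplicative.ofAdd (Pi.single i (1 : ℤ))

/-- A family `e : Fin m → F` is a basis of the free group `F` (of rank `m`) if the induced
homomorphism from the free group on `m` letters is an isomorphism. -/
def IsFreeBasis {F : Type} [Group F] {m : ℕ} (e : Fin m → F) : Prop :=
  Function.Bijective (FreeGroup.lift e : FreeGroup (Fin m) →* F)


namespace FreeBasisAux
variable {F : Type} [Group F] {m r : ℕ}

lemma isFreeBasis_comp {e : Fin m → F} (he : IsFreeBasis e)
    (v : Fin m → FreeGroup (Fin m))
    (hv : Function.Bijective (FreeGroup.lift v : FreeGroup (Fin m) →* FreeGroup (Fin m))) :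
    IsFreeBasis (fun x => FreeGroup.lift e (v x)) := by
  have h : (FreeGroup.lift (fun x => FreeGroup.lift e (v x)) : FreeGroup (Fin m) →* F)
      = (FreeGroup.lift e).comp (FreeGroup.lift v) :=
    FreeGroup.ext_hom _ _ (by simp)
  show Function.Bijective (FreeGroup.lift (fun x => FreeGroup.lift e (v x)) : FreeGroup (Fin m) →* F)
  rw [h]; exact he.comp hv

lemma bij_of_inv (v w : Fin m → FreeGroup (Fin m))
    (h1 : ∀ x, FreeGroup.lift v (w x) = FreeGroup.of x)
    (h2 : ∀ x, FreeGroup.lift w (v x) = FreeGroup.of x) :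
    Function.Bijective (FreeGroup.lift v : FreeGroup (Fin m) →* FreeGroup (Fin m)) := by
  have e1 : (FreeGroup.lift v).comp (FreeGroup.lift w) = MonoidHom.id _ :=
    FreeGroup.ext_hom _ _ (by simp [h1])
  have e2 : (FreeGroup.lift w).comp (FreeGroup.lift v) = MonoidHom.id _ :=
    FreeGroup.ext_hom _ _ (by simp [h2])
  exact Function.bijective_iff_has_inverse.2
    ⟨FreeGroup.lift w, fun x => DFunLike.congr_fun e2 x, fun x => DFunLike.congr_fun e1 x⟩

lemma isFreeBasis_update_mul {e : Fin m → F} (he : IsFreeBasis e) {i j : Fin m}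
    (hij : i ≠ j) (n : ℤ) :
    IsFreeBasis (Function.update e i (e i * (e j) ^ n)) := by
  set v : Fin m → FreeGroup (Fin m) :=
    Function.update FreeGroup.of i (FreeGroup.of i * (FreeGroup.of j) ^ n) with hv
  set w : Fin m → FreeGroup (Fin m) :=
    Function.update FreeGroup.of i (FreeGroup.of i * (FreeGroup.of j) ^ (-n)) with hw
  have hbij : Function.Bijective (FreeGroup.lift v : FreeGroup (Fin m) →* FreeGroup (Fin m)) := by
    apply bij_of_inv v w
    · intro x
      by_cases hx : x = i
      · subst hx
        simp [v, w, Function.update_of_ne hij.symm, mul_assoc, ← zpow_add]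
      · simp [v, w, Function.update_of_ne hx]
    · intro x
      by_cases hx : x = i
      · subst hx
        simp [v, w, Function.update_of_ne hij.symm, mul_assoc, ← zpow_add]
      · simp [v, w, Function.update_of_ne hx]
  have h2 := isFreeBasis_comp he v hbij
  have : (fun x => FreeGroup.lift e (v x)) = Function.update e i (e i * (e j) ^ n) := by
    funext x
    by_cases hx : x = i
    · subst hx; simp [v]
    · simp [v, Function.update_of_ne hx]
  rwa [this] at h2

lemma isFreeBasis_update_inv {e : Fin m → F} (he : IsFreeBasis e) (i : Fin m) :
    IsFreeBasis (Function.update e i (e i)⁻¹) := by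
  set v : Fin m → FreeGroup (Fin m) := Function.update FreeGroup.of i (FreeGroup.of i)⁻¹ with hv
  have hbij : Function.Bijective (FreeGroup.lift v : FreeGroup (Fin m) →* FreeGroup (Fin m)) := by
    apply bij_of_inv v v <;>
    · intro x
      by_cases hx : x = i
      · subst hx; simp [v]
      · simp [v, Function.update_of_ne hx]
  have h2 := isFreeBasis_comp he v hbij
  have : (fun x => FreeGroup.lift e (v x)) = Function.update e i (e i)⁻¹ := by
    funext x
    by_cases hx : x = i
    · subst hx; simp [v]
    · simp [v, Function.update_of_ne hx]
  rwa [this] at h2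

lemma isFreeBasis_comp_equiv {e : Fin m → F} (he : IsFreeBasis e) (σ : Equiv.Perm (Fin m)) :
    IsFreeBasis (e ∘ σ) := by
  set v : Fin m → FreeGroup (Fin m) := fun x => FreeGroup.of (σ x) with hv
  set w : Fin m → FreeGroup (Fin m) := fun x => FreeGroup.of (σ.symm x) with hw
  have hbij : Function.Bijective (FreeGroup.lift v : FreeGroup (Fin m) →* FreeGroup (Fin m)) :=
    bij_of_inv v w (fun x => by simp [v, w]) (fun x => by simp [v, w])
  have h2 := isFreeBasis_comp he v hbij
  have : (fun x => FreeGroup.lift e (v x)) = e ∘ σ := by funext x; simp [v]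
  rwa [this] at h2


/-- the integer matrix entry: coordinate `j` of `φ (e i)` -/
def ent (φ : F →* Multiplicative (Fin r → ℤ)) (e : Fin m → F) (i : Fin m) (j : Fin r) : ℤ :=
  Multiplicative.toAdd (φ (e i)) j

variable (φ : F →* Multiplicative (Fin r → ℤ))

lemma ent_update_ne (e : Fin m → F) {i i' : Fin m} (h : i' ≠ i) (x : F) (j : Fin r) :
    ent φ (Function.update e i x) i' j = ent φ e i' j := by
  simp [ent, Function.update_of_ne h]

lemma ent_update_mul_same (e : Fin m → F) (i i2 : Fin m) (n : ℤ) (j : Fin r) :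
    ent φ (Function.update e i (e i * (e i2) ^ n)) i j = ent φ e i j + n * ent φ e i2 j := by
  simp [ent, map_mul, map_zpow, toAdd_mul, toAdd_zpow, Pi.smul_apply, smul_eq_mul]

lemma ent_update_inv_same (e : Fin m → F) (i : Fin m) (j : Fin r) :
    ent φ (Function.update e i (e i)⁻¹) i j = - ent φ e i j := by
  simp [ent]

lemma ent_comp_equiv (e : Fin m → F) (σ : Equiv.Perm (Fin m)) (i : Fin m) (j : Fin r) :
    ent φ (e ∘ σ) i j = ent φ e (σ i) j := rfl

/-- invariant: the first `k` rows of the matrix agree with the identity matrix -/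
def Adapted (k : ℕ) (e : Fin m → F) : Prop :=
  ∀ (i : Fin m) (j : Fin r), (j : ℕ) < k → ent φ e i j = if (i : ℕ) = (j : ℕ) then 1 else 0

lemma exists_repr {e : Fin m → F} (he : IsFreeBasis e) (g : F) :
    ∃ n : Fin m → ℤ,
      Multiplicative.toAdd (φ g) = ∑ i, n i • Multiplicative.toAdd (φ (e i)) := by
  obtain ⟨w, rfl⟩ := he.surjective g
  induction w with
  | C1 => exact ⟨0, by simp⟩
  | of x =>
    refine ⟨Pi.single x 1, ?_⟩
    have hp : (FreeGroup.lift e) (pure x) = e x := FreeGroup.lift_apply_of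
    rw [Finset.sum_eq_single x]
    · simp [hp]
    · intro b _ hb; rw [Pi.single_eq_of_ne hb, zero_smul]
    · intro hx; exact absurd (Finset.mem_univ x) hx
  | inv_of x ih =>
    obtain ⟨n, hn⟩ := ih
    refine ⟨-n, ?_⟩
    simp only [map_inv, toAdd_inv, hn, Pi.neg_apply, neg_smul, ← Finset.sum_neg_distrib]
  | mul x y ihx ihy =>
    obtain ⟨n1, h1⟩ := ihx
    obtain ⟨n2, h2⟩ := ihy
    refine ⟨n1 + n2, ?_⟩
    simp [map_mul, toAdd_mul, h1, h2, add_smul, Finset.sum_add_distrib]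


lemma exists_comb (hφ : Function.Surjective φ) {e : Fin m → F} (he : IsFreeBasis e)
    {k : ℕ} (ha : Adapted φ k e) (hk : k < r) :
    ∃ n : Fin m → ℤ, (∀ i : Fin m, (i : ℕ) < k → n i = 0) ∧
      (∑ i, n i * ent φ e i ⟨k, hk⟩) = 1 := by
  obtain ⟨g, hg⟩ := hφ (Multiplicative.ofAdd (Pi.single (⟨k, hk⟩ : Fin r) (1 : ℤ)))
  obtain ⟨n, hn⟩ := exists_repr φ he g
  rw [hg] at hn
  have hval : ∀ j : Fin r, (Pi.single (⟨k, hk⟩ : Fin r) (1 : ℤ) : Fin r → ℤ) j = ∑ i, n i * ent φ e i j := by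
    intro j
    have h := congrFun hn j
    simpa [ent, Finset.sum_apply, Pi.smul_apply, smul_eq_mul] using h
  refine ⟨n, ?_, ?_⟩
  · intro i hi
    have hir : (i : ℕ) < r := lt_trans hi hk
    have hne : (⟨(i : ℕ), hir⟩ : Fin r) ≠ ⟨k, hk⟩ := by
      simp only [ne_eq, Fin.mk.injEq]; omega
    have h := hval ⟨i, hir⟩
    rw [Pi.single_eq_of_ne hne, Finset.sum_eq_single i] at h
    · rw [ha i ⟨i, hir⟩ hi] at h
      simpa using h.symm
    · intro b _ hb
      rw [ha b ⟨i, hir⟩ hi]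
      have : ¬((b : ℕ) = (i : ℕ)) := fun hh => hb (Fin.ext hh)
      simp [this]
    · intro hh; exact absurd (Finset.mem_univ i) hh
  · have h := hval ⟨k, hk⟩
    rw [Pi.single_eq_same] at h
    exact h.symm


lemma euclid (hφ : Function.Surjective φ) {k : ℕ} (hk : k < r) (hkm : k < m) :
    ∀ N : ℕ, ∀ e : Fin m → F, IsFreeBasis e → Adapted φ k e →
      (∑ i : Fin m, if k ≤ (i : ℕ) then (ent φ e i ⟨k, hk⟩).natAbs else 0) ≤ N →
      ∃ e' : Fin m → F, IsFreeBasis e' ∧ Adapted φ k e' ∧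
        ent φ e' ⟨k, hkm⟩ ⟨k, hk⟩ = 1 ∧
        ∀ i : Fin m, k < (i : ℕ) → ent φ e' i ⟨k, hk⟩ = 0 := by
  intro N
  induction N using Nat.strong_induction_on with
  | _ N IH =>
  intro e he ha hsum
  obtain ⟨n, hn0, hn1⟩ := exists_comb φ hφ he ha hk
  set c : Fin m → ℤ := fun i => ent φ e i ⟨k, hk⟩ with hc
  by_cases hall : ∀ i : Fin m, k ≤ (i : ℕ) → c i = 0
  · exfalso
    have h0 : (∑ i, n i * c i) = 0 := Finset.sum_eq_zero (by
      intro i _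
      rcases lt_or_ge (i : ℕ) k with h | h
      · rw [hn0 i h, zero_mul]
      · rw [hall i h, mul_zero])
    rw [hn1] at h0
    exact one_ne_zero h0
  push_neg at hall
  obtain ⟨iw, hiwk, hiw0⟩ := hall
  set S : Finset (Fin m) := Finset.univ.filter (fun i => k ≤ (i : ℕ) ∧ c i ≠ 0) with hS
  have hSne : S.Nonempty := ⟨iw, by simp [S, hiwk, hiw0]⟩
  obtain ⟨i0, hi0S, hmin⟩ := S.exists_min_image (fun i => (c i).natAbs) hSne
  have hi0k : k ≤ (i0 : ℕ) := (Finset.mem_filter.mp hi0S).2.1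
  have hi0ne : c i0 ≠ 0 := (Finset.mem_filter.mp hi0S).2.2
  by_cases hone : ∀ i : Fin m, k ≤ (i : ℕ) → i ≠ i0 → c i = 0
  · -- terminal case : `c i0 = ±1` and all other entries in the row vanish
    have hu : c i0 = 1 ∨ c i0 = -1 := by
      have hsingle : (∑ i, n i * c i) = n i0 * c i0 := by
        apply Finset.sum_eq_single i0
        · intro b _ hb
          rcases lt_or_ge (b : ℕ) k with h | h
          · rw [hn0 b h, zero_mul]
          · rw [hone b h hb, mul_zero]
        · intro h; exact absurd (Finset.mem_univ i0) h
      have hmul : n i0 * c i0 = 1 := by rw [← hsingle, hn1]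
      have : IsUnit (c i0) := isUnit_of_mul_isUnit_right (M := ℤ) (by rw [hmul]; exact isUnit_one)
      exact Int.isUnit_iff.mp this
    obtain ⟨e1, he1, ha1, h1a, h1b⟩ :
        ∃ e1, IsFreeBasis e1 ∧ Adapted φ k e1 ∧ ent φ e1 i0 ⟨k, hk⟩ = 1 ∧
          ∀ i, i ≠ i0 → ent φ e1 i ⟨k, hk⟩ = c i := by
      rcases hu with h | h
      · exact ⟨e, he, ha, h, fun i _ => rfl⟩
      · refine ⟨Function.update e i0 (e i0)⁻¹, isFreeBasis_update_inv he i0, ?_, ?_, ?_⟩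
        · intro i j hj
          by_cases hii : i = i0
          · subst hii
            rw [ent_update_inv_same, ha i j hj]
            have hne : ¬((i : ℕ) = (j : ℕ)) := by omega
            simp [hne]
          · rw [ent_update_ne φ e hii, ha i j hj]
        · rw [ent_update_inv_same]
          have : ent φ e i0 ⟨k, hk⟩ = c i0 := rfl
          rw [this, h]; norm_num
        · intro i hi; rw [ent_update_ne φ e hi]
    set σ : Equiv.Perm (Fin m) := Equiv.swap (⟨k, hkm⟩ : Fin m) i0 with hσ
    have hσk : ∀ i : Fin m, k ≤ (i : ℕ) → k ≤ ((σ i : Fin m) : ℕ) := by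
      intro i hi
      rcases eq_or_ne i ⟨k, hkm⟩ with h | h
      · rw [hσ, h, Equiv.swap_apply_left]; exact hi0k
      · rcases eq_or_ne i i0 with h2 | h2
        · rw [hσ, h2, Equiv.swap_apply_right]
        · rw [hσ, Equiv.swap_apply_of_ne_of_ne h h2]; exact hi
    have hσlt : ∀ i : Fin m, (i : ℕ) < k → σ i = i := by
      intro i hi
      apply Equiv.swap_apply_of_ne_of_ne
      · intro hh; rw [hh] at hi; simp at hi
      · intro hh; rw [hh] at hi; omega
    refine ⟨e1 ∘ σ, isFreeBasis_comp_equiv he1 σ, ?_, ?_, ?_⟩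
    · intro i j hj
      rw [ent_comp_equiv]
      rcases lt_or_ge (i : ℕ) k with h | h
      · rw [hσlt i h, ha1 i j hj]
      · have h2 := hσk i h
        rw [ha1 (σ i) j hj]
        have hne1 : ¬(((σ i : Fin m) : ℕ) = (j : ℕ)) := by omega
        have hne2 : ¬((i : ℕ) = (j : ℕ)) := by omega
        simp [hne1, hne2]
    · rw [ent_comp_equiv, hσ, Equiv.swap_apply_left]; exact h1a
    · intro i hi
      rw [ent_comp_equiv]
      by_cases hii : i = i0
      · have hval := congrArg Fin.val hii
        have hkne : (⟨k, hkm⟩ : Fin m) ≠ i0 := by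
          intro hh
          have h5 := congrArg Fin.val hh
          simp only [] at h5
          omega
        rw [hσ, hii, Equiv.swap_apply_right, h1b ⟨k, hkm⟩ hkne]
        exact hone ⟨k, hkm⟩ (le_refl k) hkne
      · have hiK : i ≠ ⟨k, hkm⟩ := by
          intro hh; rw [hh] at hi; simp at hi
        rw [hσ, Equiv.swap_apply_of_ne_of_ne hiK hii, h1b i hii]
        exact hone i (le_of_lt hi) hii
  · -- recursive case : reduce the minimal entry
    push_neg at hone
    obtain ⟨i1, hi1k, hi1ne, hi1c⟩ := hone
    set q : ℤ := c i1 / c i0 with hq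
    set e' : Fin m → F := Function.update e i1 (e i1 * (e i0) ^ (-q)) with he'def
    have he'b : IsFreeBasis e' := isFreeBasis_update_mul he hi1ne (-q)
    have hent1 : ent φ e' i1 ⟨k, hk⟩ = c i1 % c i0 := by
      rw [he'def, ent_update_mul_same, Int.emod_def]
      have h1 : ent φ e i1 ⟨k, hk⟩ = c i1 := rfl
      have h2 : ent φ e i0 ⟨k, hk⟩ = c i0 := rfl
      rw [h1, h2, hq]; ring
    have hentne : ∀ i, i ≠ i1 → ∀ j : Fin r, ent φ e' i j = ent φ e i j := by
      intro i hi j; rw [he'def, ent_update_ne φ e hi]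
    have ha' : Adapted φ k e' := by
      intro i j hj
      by_cases hii : i = i1
      · subst hii
        rw [he'def, ent_update_mul_same, ha i j hj, ha i0 j hj]
        have h1 : ¬((i : ℕ) = (j : ℕ)) := by omega
        have h2 : ¬((i0 : ℕ) = (j : ℕ)) := by omega
        simp [h1, h2]
      · rw [hentne i hii j]; exact ha i j hj
    have hlt : (ent φ e' i1 ⟨k, hk⟩).natAbs < (c i1).natAbs := by
      rw [hent1]
      have h1 : 0 ≤ c i1 % c i0 := Int.emod_nonneg _ hi0ne
      have h2 : c i1 % c i0 < |c i0| := Int.emod_lt_abs _ hi0ne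
      have h3 := Int.natAbs_lt_natAbs_of_nonneg_of_lt h1 h2
      rw [Int.natAbs_abs] at h3
      have h4 : (c i0).natAbs ≤ (c i1).natAbs := hmin i1 (by simp [S, hi1k, hi1c])
      omega
    have hsum' : (∑ i : Fin m, if k ≤ (i : ℕ) then (ent φ e' i ⟨k, hk⟩).natAbs else 0) < N := by
      have hstep : (∑ i : Fin m, if k ≤ (i : ℕ) then (ent φ e' i ⟨k, hk⟩).natAbs else 0)
          < (∑ i : Fin m, if k ≤ (i : ℕ) then (ent φ e i ⟨k, hk⟩).natAbs else 0) := by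
        apply Finset.sum_lt_sum
        · intro i _
          by_cases hii : i = i1
          · subst hii
            rw [if_pos hi1k, if_pos hi1k]
            exact le_of_lt hlt
          · rw [hentne i hii]
        · refine ⟨i1, Finset.mem_univ i1, ?_⟩
          rw [if_pos hi1k, if_pos hi1k]
          exact hlt
      omega
    exact IH _ hsum' e' he'b ha' (le_refl _)


lemma clear_step {k : ℕ} (hk : k < r) (hkm : k < m) :
    ∀ L : ℕ, L ≤ k → ∀ e : Fin m → F, IsFreeBasis e → Adapted φ k e →
      ent φ e ⟨k, hkm⟩ ⟨k, hk⟩ = 1 →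
      (∀ i : Fin m, k < (i : ℕ) → ent φ e i ⟨k, hk⟩ = 0) →
      ∃ e' : Fin m → F, IsFreeBasis e' ∧ Adapted φ k e' ∧
        ent φ e' ⟨k, hkm⟩ ⟨k, hk⟩ = 1 ∧
        (∀ i : Fin m, k < (i : ℕ) → ent φ e' i ⟨k, hk⟩ = 0) ∧
        (∀ i : Fin m, (i : ℕ) < L → ent φ e' i ⟨k, hk⟩ = 0) := by
  intro L
  induction L with
  | zero =>
    intro _ e he ha h1 h2
    exact ⟨e, he, ha, h1, h2, fun i hi => absurd hi (Nat.not_lt_zero _)⟩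
  | succ L IHL =>
    intro hL e0 he0 ha0 h10 h20
    obtain ⟨e, he, ha, h1, h2, h3⟩ := IHL (le_of_lt hL) e0 he0 ha0 h10 h20
    have hLm : L < m := lt_trans (lt_of_lt_of_le hL (le_refl k)) hkm
    set iL : Fin m := ⟨L, hLm⟩ with hiL
    have hne : iL ≠ ⟨k, hkm⟩ := by
      intro hh; have := congrArg Fin.val hh; simp only [iL] at this; omega
    set cL : ℤ := ent φ e iL ⟨k, hk⟩ with hcL
    set e' : Fin m → F := Function.update e iL (e iL * (e ⟨k, hkm⟩) ^ (-cL)) with he'def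
    have he'b : IsFreeBasis e' := isFreeBasis_update_mul he hne (-cL)
    have hentne : ∀ i, i ≠ iL → ∀ j : Fin r, ent φ e' i j = ent φ e i j := by
      intro i hi j; rw [he'def, ent_update_ne φ e hi]
    have ha' : Adapted φ k e' := by
      intro i j hj
      by_cases hii : i = iL
      · rw [hii, he'def, ent_update_mul_same, ha iL j hj, ha ⟨k, hkm⟩ j hj]
        have hkj : ¬((k : ℕ) = (j : ℕ)) := by omega
        have hvi := congrArg Fin.val hii
        simp only [hkj, if_false, mul_zero, add_zero, hvi]
      · rw [hentne i hii j]; exact ha i j hj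
    have hKne : (⟨k, hkm⟩ : Fin m) ≠ iL := fun hh => hne hh.symm
    refine ⟨e', he'b, ha', ?_, ?_, ?_⟩
    · rw [hentne ⟨k, hkm⟩ hKne ⟨k, hk⟩]; exact h1
    · intro i hi
      have hine : i ≠ iL := by
        intro hh; have := congrArg Fin.val hh; simp only [iL] at this; omega
      rw [hentne i hine ⟨k, hk⟩]; exact h2 i hi
    · intro i hi
      rcases Nat.lt_succ_iff_lt_or_eq.mp hi with h | h
      · have hine : i ≠ iL := by
          intro hh; have := congrArg Fin.val hh; simp only [iL] at this; omega
        rw [hentne i hine ⟨k, hk⟩]; exact h3 i h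
      · have hii : i = iL := Fin.ext h
        subst hii
        rw [he'def, ent_update_mul_same, h1]
        rw [← hcL]
        ring

lemma stage (hr : r ≤ m) (hφ : Function.Surjective φ) (b : Fin m → F) (hb : IsFreeBasis b) :
    ∀ k : ℕ, k ≤ r → ∃ e : Fin m → F, IsFreeBasis e ∧ Adapted φ k e := by
  intro k
  induction k with
  | zero => exact fun _ => ⟨b, hb, fun i j hj => absurd hj (Nat.not_lt_zero _)⟩
  | succ k IHk =>
    intro hk1
    have hk : k < r := hk1
    have hkm : k < m := lt_of_lt_of_le hk hr
    obtain ⟨e, he, ha⟩ := IHk (le_of_lt hk)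
    obtain ⟨e1, he1, ha1, hb1, hc1⟩ := euclid φ hφ hk hkm _ e he ha (le_refl _)
    obtain ⟨e2, he2, ha2, hb2, hc2, hd2⟩ := clear_step φ hk hkm k (le_refl k) e1 he1 ha1 hb1 hc1
    refine ⟨e2, he2, ?_⟩
    intro i j hj
    rcases Nat.lt_succ_iff_lt_or_eq.mp hj with h | h
    · exact ha2 i j h
    · have hjj : j = ⟨k, hk⟩ := Fin.ext h
      subst hjj
      rcases lt_trichotomy ((i : ℕ)) k with h1 | h1 | h1
      · rw [hd2 i h1]
        have : ¬((i : ℕ) = k) := by omega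
        simp [this]
      · have hii : i = ⟨k, hkm⟩ := Fin.ext h1
        subst hii
        rw [hb2]
        simp
      · rw [hc2 i h1]
        have : ¬((i : ℕ) = k) := by omega
        simp [this]

end FreeBasisAux

/-- Let `F` be a free group of rank `m` and `r ≤ m`.  If `φ : F → ℤ^r` is a surjective
homomorphism then there is a basis `e_1, …, e_m` of `F` with `φ(e_i) = t_i` for `i ≤ r`
and `φ(e_i) = 0` for `i > r`. -/
theorem free_basis_adapted_to_surjection_onto_free_abelian
    (m r : ℕ) (hr : r ≤ m) (F : Type) [Group F]
    (b : Fin m → F) (hb : IsFreeBasis b)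
    (φ : F →* Multiplicative (Fin r → ℤ)) (hφ : Function.Surjective φ) :
    ∃ e : Fin m → F, IsFreeBasis e ∧
      ∀ i : Fin m, φ (e i) =
        if h : (i : ℕ) < r then tbasis r ⟨i, h⟩ else 1 := by
  obtain ⟨e, he, ha⟩ := FreeBasisAux.stage φ hr hφ b hb r (le_refl r)
  refine ⟨e, he, ?_⟩
  intro i
  by_cases h : (i : ℕ) < r
  · rw [dif_pos h]
    apply Multiplicative.toAdd.injective
    funext j
    have hj := ha i j j.isLt
    rw [show (Multiplicative.toAdd (φ (e i))) j = FreeBasisAux.ent φ e i j from rfl, hj]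
    have htb : Multiplicative.toAdd (tbasis r ⟨i, h⟩) j
        = (Pi.single (⟨i, h⟩ : Fin r) (1 : ℤ) : Fin r → ℤ) j := rfl
    rw [htb, Pi.single_apply]
    by_cases hij : (i : ℕ) = (j : ℕ)
    · have hji : j = ⟨i, h⟩ := Fin.ext hij.symm
      rw [if_pos hij, if_pos hji]
    · have hji : ¬(j = (⟨i, h⟩ : Fin r)) := by
        intro hh; exact hij (by rw [hh])
      rw [if_neg hij, if_neg hji]
  · rw [dif_neg h]
    apply Multiplicative.toAdd.injective
    funext j
    have hj := ha i j j.isLt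
    rw [show (Multiplicative.toAdd (φ (e i))) j = FreeBasisAux.ent φ e i j from rfl, hj]
    have : ¬((i : ℕ) = (j : ℕ)) := by have := j.isLt; omega
    simp [this]
end

section
/- Let F be a free group of finite rank m and let Ab : F → F/[F,F] be the abelianisation homomorphism, so that A = F/[F,F] is a free abelian group of rank m. If s_1, …, s_m is any ℤ-basis of A, then there exists a basis f_1, …, f_m of the free group F such that Ab(f_i) = s_i for all i. -/
open Matrix

namespace LB
variable {m : ℕ}

abbrev F₀ (m : ℕ) := FreeGroup (Fin m)
abbrev A (m : ℕ) := FreeAbelianGroup (Fin m)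

/-- abelianization map into the free abelian group -/
def abm (x : F₀ m) : A m := Additive.ofMul (Abelianization.of x)

/-- the additive hom induced by an endomorphism of the free group -/
def ind (φ : F₀ m →* F₀ m) : A m →+ A m := MonoidHom.toAdditive (Abelianization.map φ)

lemma ind_abm (φ : F₀ m →* F₀ m) (x : F₀ m) : ind φ (abm x) = abm (φ x) := by
  show Additive.ofMul ((Abelianization.map φ) (Additive.toMul (Additive.ofMul (Abelianization.of x)))) = _
  rw [show Additive.toMul (Additive.ofMul (Abelianization.of x)) = Abelianization.of x from rfl, Abelianization.map_of]
  rfl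

def e (i : Fin m) : A m := abm (FreeGroup.of i)

/-- `M` is realizable by an automorphism of the free group -/
def Liftable (M : Matrix (Fin m) (Fin m) ℤ) : Prop :=
  ∃ φ : F₀ m ≃* F₀ m, ∀ i, abm (φ (FreeGroup.of i)) = ∑ j, M i j • e j

lemma liftable_mul {M N : Matrix (Fin m) (Fin m) ℤ} (hM : Liftable M) (hN : Liftable N) :
    Liftable (N * M) := by
  obtain ⟨φ, hφ⟩ := hM
  obtain ⟨ψ, hψ⟩ := hN
  refine ⟨ψ.trans φ, fun i => ?_⟩
  have h1 : abm ((ψ.trans φ) (FreeGroup.of i)) = ind φ.toMonoidHom (abm (ψ (FreeGroup.of i))) := by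
    rw [ind_abm]; rfl
  rw [h1, hψ i, map_sum]
  simp only [map_zsmul, ind_abm]
  calc ∑ j, N i j • abm (φ (FreeGroup.of j))
      = ∑ j, N i j • ∑ l, M j l • e l := by
        refine Finset.sum_congr rfl fun j _ => ?_
        rw [hφ]
    _ = ∑ j, ∑ l, (N i j * M j l) • e l := by
        simp [Finset.smul_sum, smul_smul]
    _ = ∑ l, ∑ j, (N i j * M j l) • e l := Finset.sum_comm
    _ = ∑ l, (N * M) i l • e l := by
        simp [Matrix.mul_apply, Finset.sum_smul]

lemma liftable_one : Liftable (1 : Matrix (Fin m) (Fin m) ℤ) := by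
  refine ⟨MulEquiv.refl _, fun i => ?_⟩
  simp [Matrix.one_apply, e]

lemma liftable_transfer {g g' M : Matrix (Fin m) (Fin m) ℤ} (hg' : Liftable g')
    (hinv : g' * g = 1) (h : Liftable (g * M)) : Liftable M := by
  have := liftable_mul h hg'
  rwa [← Matrix.mul_assoc, hinv, Matrix.one_mul] at this

lemma abm_mul (x y : F₀ m) : abm (x * y) = abm x + abm y := by
  rw [abm, _root_.map_mul]; rfl
lemma abm_inv (x : F₀ m) : abm x⁻¹ = -abm x := by
  rw [abm, map_inv]; rfl
lemma abm_zpow (x : F₀ m) (c : ℤ) : abm (x ^ c) = c • abm x := by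
  rw [abm, map_zpow]
  exact ofMul_zpow _ _

/-! ### permutation -/
def P (σ : Equiv.Perm (Fin m)) : Matrix (Fin m) (Fin m) ℤ :=
  Matrix.of fun i j => if σ i = j then 1 else 0

lemma P_mul (σ : Equiv.Perm (Fin m)) (M : Matrix (Fin m) (Fin m) ℤ) (i q : Fin m) :
    (P σ * M) i q = M (σ i) q := by
  simp [P, Matrix.mul_apply]

lemma P_swap_sq (a b : Fin m) : P (Equiv.swap a b) * P (Equiv.swap a b) = 1 := by
  ext i q
  rw [P_mul]
  simp [P, Matrix.one_apply, Equiv.swap_apply_self]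

lemma liftable_P (σ : Equiv.Perm (Fin m)) : Liftable (P σ) := by
  refine ⟨FreeGroup.freeGroupCongr σ, fun i => ?_⟩
  have : (FreeGroup.freeGroupCongr σ) (FreeGroup.of i) = FreeGroup.of (σ i) := by
    simp
  rw [this]
  simp [P, e]

/-! ### negation -/
def D (a : Fin m) : Matrix (Fin m) (Fin m) ℤ :=
  Matrix.diagonal (fun k => if k = a then -1 else 1)

lemma D_mul (a : Fin m) (M : Matrix (Fin m) (Fin m) ℤ) (p q : Fin m) :
    (D a * M) p q = (if p = a then -1 else 1) * M p q := by
  simp [D, Matrix.diagonal_mul]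

lemma D_sq (a : Fin m) : D a * D a = 1 := by
  rw [D, Matrix.diagonal_mul_diagonal]
  have h : (fun k => (if k = a then -1 else 1) * (if k = a then (-1:ℤ) else 1)) = fun _ => 1 := by
    funext k; by_cases h : k = a <;> simp [h]
  rw [h, Matrix.diagonal_one]

def negHom (a : Fin m) : F₀ m →* F₀ m :=
  FreeGroup.lift (fun k => if k = a then (FreeGroup.of k)⁻¹ else FreeGroup.of k)

lemma negHom_sq (a : Fin m) : (negHom a).comp (negHom a) = MonoidHom.id _ := by
  apply FreeGroup.ext_hom
  intro k
  by_cases h : k = a <;> simp [negHom, h]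

lemma liftable_D (a : Fin m) : Liftable (D a) := by
  refine ⟨MonoidHom.toMulEquiv (negHom a) (negHom a) (negHom_sq a) (negHom_sq a), fun i => ?_⟩
  have : (negHom a) (FreeGroup.of i) = if i = a then (FreeGroup.of i)⁻¹ else FreeGroup.of i := by
    simp [negHom]
  rw [show (MonoidHom.toMulEquiv (negHom a) (negHom a) (negHom_sq a) (negHom_sq a))
      (FreeGroup.of i) = (negHom a) (FreeGroup.of i) from rfl, this]
  have hsum : ∑ j, D a i j • e j = (if i = a then -1 else 1 : ℤ) • e i := by
    rw [Finset.sum_eq_single i]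
    · simp [D, Matrix.diagonal_apply_eq]
    · intro j _ hj; simp [D, Matrix.diagonal_apply_ne' _ hj]
    · simp
  rw [hsum]
  by_cases h : i = a <;> simp [h, abm_inv, e]

/-! ### transvection -/
def tvHom (a b : Fin m) (c : ℤ) : F₀ m →* F₀ m :=
  FreeGroup.lift (fun k => if k = a then FreeGroup.of a * FreeGroup.of b ^ c else FreeGroup.of k)

lemma tvHom_comp (a b : Fin m) (hab : a ≠ b) (c : ℤ) :
    (tvHom a b c).comp (tvHom a b (-c)) = MonoidHom.id _ := by
  apply FreeGroup.ext_hom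
  intro k
  by_cases h : k = a
  · subst h
    simp only [tvHom, MonoidHom.comp_apply, FreeGroup.lift_apply_of, if_pos rfl, MonoidHom.id_apply]
    simp only [if_true, eq_self_iff_true]
    rw [_root_.map_mul, map_zpow, FreeGroup.lift_apply_of, FreeGroup.lift_apply_of, if_pos rfl,
      if_neg (Ne.symm hab)]
    rw [mul_assoc, ← _root_.zpow_add, add_neg_cancel, zpow_zero, mul_one]
  · simp [tvHom, h]

lemma liftable_tv (a b : Fin m) (hab : a ≠ b) (c : ℤ) : Liftable (Matrix.transvection a b c) := by
  refine ⟨MonoidHom.toMulEquiv (tvHom a b c) (tvHom a b (-c))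
    (by simpa using tvHom_comp a b hab (-c)) (tvHom_comp a b hab c), fun i => ?_⟩
  rw [show (MonoidHom.toMulEquiv (tvHom a b c) (tvHom a b (-c)) _ _) (FreeGroup.of i)
      = (tvHom a b c) (FreeGroup.of i) from rfl]
  have hsum : ∑ j, Matrix.transvection a b c i j • e j
      = e i + (if i = a then c else 0) • e b := by
    rw [Matrix.transvection]
    simp only [Matrix.add_apply, add_smul, Finset.sum_add_distrib, Matrix.one_apply]
    congr 1
    · rw [Finset.sum_eq_single i] <;> simp +contextual [eq_comm]
    · rw [Finset.sum_eq_single b]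
      · by_cases h : i = a <;> simp [h, Matrix.single_apply_same,
          Matrix.single_apply_of_ne, Ne.symm]
      · intro j _ hj
        have : Matrix.single a b c i j = 0 := by
          apply Matrix.single_apply_of_ne
          rintro ⟨-, rfl⟩; exact hj rfl
        simp [this]
      · simp
  rw [hsum]
  by_cases h : i = a
  · subst h
    simp [tvHom, abm_mul, abm_zpow, e]
  · simp [tvHom, h, e]

/-- the column-K part of the matrix supported on rows `< k` contributes zero determinant -/
lemma det_updateColumn_low (k : ℕ) (hkm : k < m) (M : Matrix (Fin m) (Fin m) ℤ)
    (hstd : ∀ j i : Fin m, (j : ℕ) < k → M i j = if i = j then 1 else 0) :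
    (M.updateCol ⟨k, hkm⟩ (fun i => if (i : ℕ) < k then M i ⟨k, hkm⟩ else 0)).det = 0 := by
  set K : Fin m := ⟨k, hkm⟩ with hK
  have hKval : (K : ℕ) = k := rfl
  set v : Fin m → ℤ := fun i => if (i : ℕ) < k then M i K else 0 with hv
  set N := M.updateCol K v with hN
  rw [← Matrix.exists_mulVec_eq_zero_iff]
  refine ⟨fun j => if j = K then 1 else if (j : ℕ) < k then -M j K else 0, ?_, ?_⟩
  · intro h
    have := congrFun h K
    simp at this
  · funext i
    show ∑ j, N i j * _ = 0
    have hpt : ∀ j, N i j * (if j = K then 1 else if (j : ℕ) < k then -M j K else 0)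
        = (if j = K then v i else 0)
          + (if (i : ℕ) < k then (if j = i then -M i K else 0) else 0) := by
      intro j
      by_cases hjK : j = K
      · subst hjK
        simp only [eq_self_iff_true, if_true, mul_one, hN, Matrix.updateCol_self]
        by_cases hik : (i : ℕ) < k
        · rw [if_pos hik, if_neg (fun h : K = i => by rw [← h, hKval] at hik; exact lt_irrefl _ hik), add_zero]
        · rw [if_neg hik, add_zero]
      · have hNij : N i j = M i j := by rw [hN, Matrix.updateCol_ne (Ne.symm ?_)]; exact fun h => hjK h.symm
        rw [if_neg hjK, hNij]
        by_cases hjk : (j : ℕ) < k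
        · rw [if_pos hjk, hstd j i hjk]
          by_cases hij : i = j
          · subst hij
            rw [if_pos rfl, one_mul, if_neg hjK, if_pos hjk, if_pos rfl, zero_add]
          · rw [if_neg hij, zero_mul, if_neg hjK, zero_add]
            by_cases hik : (i : ℕ) < k
            · rw [if_pos hik, if_neg (fun h => hij h.symm)]
            · rw [if_neg hik]
        · rw [if_neg hjk, mul_zero, if_neg hjK, zero_add]
          by_cases hik : (i : ℕ) < k
          · rw [if_pos hik, if_neg (fun h : j = i => hjk (h ▸ hik)), ]
          · rw [if_neg hik]
    rw [Finset.sum_congr rfl (fun j _ => hpt j), Finset.sum_add_distrib]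
    rw [Finset.sum_ite_eq' Finset.univ K (fun _ => v i)]
    by_cases hik : (i : ℕ) < k
    · simp only [if_pos hik, Finset.mem_univ, if_true]
      rw [Finset.sum_ite_eq' Finset.univ i (fun _ => -M i K)]
      simp [hv, hik]
    · simp only [if_neg hik, Finset.sum_const_zero, Finset.mem_univ, if_true]
      simp [hv, hik]

/-- the pivot entry is a unit -/
lemma pivot_isUnit (k : ℕ) (hkm : k < m) (M : Matrix (Fin m) (Fin m) ℤ)
    (hdet : IsUnit M.det)
    (hstd : ∀ j i : Fin m, (j : ℕ) < k → M i j = if i = j then 1 else 0)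
    (i0 : Fin m) (hi0 : k ≤ (i0 : ℕ))
    (hz : ∀ i : Fin m, i ≠ i0 → k ≤ (i : ℕ) → M i ⟨k, hkm⟩ = 0) :
    IsUnit (M i0 ⟨k, hkm⟩) := by
  set K : Fin m := ⟨k, hkm⟩ with hK
  set d := M i0 K with hd
  set u : Fin m → ℤ := fun i => if i = i0 then d else 0 with hu
  set v : Fin m → ℤ := fun i => if (i : ℕ) < k then M i K else 0 with hv
  have hcol : (fun i => M i K) = u + v := by
    funext i
    by_cases hii : i = i0
    · subst hii
      have : ¬(i : ℕ) < k := by omega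
      simp [hu, hv, this, hd]
    · by_cases hik : (i : ℕ) < k
      · simp [hu, hv, hii, hik]
      · simp [hu, hv, hii, hik, hz i hii (by omega)]
  have hdet2 : M.det = d * (M.updateCol K (fun i => if i = i0 then 1 else 0)).det := by
    conv_lhs => rw [← Matrix.updateCol_eq_self M K, hcol]
    rw [Matrix.det_updateCol_add, det_updateColumn_low k hkm M hstd, add_zero]
    have : u = d • (fun i => if i = i0 then (1 : ℤ) else 0) := by
      funext i; by_cases hii : i = i0 <;> simp [hu, hii]
    rw [this, Matrix.det_updateCol_smul]
  rw [hdet2] at hdet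
  exact isUnit_of_mul_isUnit_left hdet

lemma elim (n : ℕ) : ∀ (k : ℕ), k + n = m → ∀ M : Matrix (Fin m) (Fin m) ℤ,
    IsUnit M.det → (∀ j i : Fin m, (j : ℕ) < k → M i j = if i = j then 1 else 0) →
    Liftable M := by
  induction n with
  | zero =>
    intro k hk M hdet hstd
    have hM : M = 1 := by
      ext i j
      rw [hstd j i (by omega), Matrix.one_apply]
    rw [hM]; exact liftable_one
  | succ n IH =>
    intro k hk M₀ hdet₀ hstd₀
    have hkm : k < m := by omega
    set K : Fin m := ⟨k, hkm⟩ with hKdef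
    have hKval : (K : ℕ) = k := rfl
    suffices H : ∀ μ (M : Matrix (Fin m) (Fin m) ℤ), (∑ i, (M i K).natAbs) = μ →
        IsUnit M.det → (∀ j i : Fin m, (j : ℕ) < k → M i j = if i = j then 1 else 0) →
        Liftable M by
      exact H _ M₀ rfl hdet₀ hstd₀
    intro μ
    induction μ using Nat.strong_induction_on with
    | _ μ IHμ =>
    intro M hμ hdet hstd
    -- sum splitting helper
    have hsplit : ∀ (a : Fin m) (N : Matrix (Fin m) (Fin m) ℤ), ∑ i, (N i K).natAbs
        = (N a K).natAbs + ∑ i ∈ Finset.univ.erase a, (N i K).natAbs := by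
      intro a N
      exact (Finset.add_sum_erase _ _ (Finset.mem_univ a)).symm
    by_cases hA : ∃ a b : Fin m, a ≠ b ∧ k ≤ (a : ℕ) ∧ k ≤ (b : ℕ) ∧ M a K ≠ 0 ∧ M b K ≠ 0
        ∧ (M b K).natAbs ≤ (M a K).natAbs
    · -- Euclid step between two rows ≥ k
      obtain ⟨a, b, hab, hak, hbk, ha0, hb0, hle⟩ := hA
      set c : ℤ := if 0 ≤ M a K * M b K then 1 else -1 with hc
      set M' := Matrix.transvection a b (-c) * M with hM'
      have hrow : ∀ q, M' a q = M a q + (-c) * M b q := fun q =>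
        Matrix.transvection_mul_apply_same a b q (-c) M
      have hother : ∀ p q, p ≠ a → M' p q = M p q := fun p q hp =>
        Matrix.transvection_mul_apply_of_ne a b p q hp (-c) M
      have hdec : (M' a K).natAbs < (M a K).natAbs := by
        rw [hrow K]
        by_cases hs : 0 ≤ M a K * M b K
        · rw [hc]; rw [if_pos hs]
          rcases Int.mul_nonneg_iff.mp hs with ⟨h1, h2⟩ | ⟨h1, h2⟩ <;> omega
        · rw [hc]; rw [if_neg hs]
          have hs' : M a K * M b K < 0 := by omega
          rcases mul_neg_iff.mp hs' with ⟨h1, h2⟩ | ⟨h1, h2⟩ <;> omega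
      have hμ' : ∑ i, (M' i K).natAbs < μ := by
        rw [hsplit a M', ← hμ, hsplit a M]
        have : ∑ i ∈ Finset.univ.erase a, (M' i K).natAbs
            = ∑ i ∈ Finset.univ.erase a, (M i K).natAbs := by
          refine Finset.sum_congr rfl fun i hi => ?_
          rw [hother i K (Finset.ne_of_mem_erase hi)]
        omega
      have hdet' : IsUnit M'.det := by
        rw [hM', Matrix.det_mul, Matrix.det_transvection_of_ne a b hab, one_mul]
        exact hdet
      have hstd' : ∀ j i : Fin m, (j : ℕ) < k → M' i j = if i = j then 1 else 0 := by
        intro j i hj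
        by_cases hia : i = a
        · subst hia
          rw [hrow j, hstd j i hj, hstd j b hj,
            if_neg (show ¬ b = j by intro h; rw [h] at hbk; omega), mul_zero, add_zero]
        · rw [hother i j hia, hstd j i hj]
      have hlift' := IHμ _ hμ' M' rfl hdet' hstd'
      exact liftable_transfer (liftable_tv a b hab c)
        (by rw [Matrix.transvection_mul_transvection_same _ _ hab, add_neg_cancel,
          Matrix.transvection_zero]) hlift'
    · by_cases hex : ∃ i0 : Fin m, k ≤ (i0 : ℕ) ∧ M i0 K ≠ 0
      · obtain ⟨i0, hi0k, hi00⟩ := hex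
        -- uniqueness of the nonzero row ≥ k
        have hz : ∀ i : Fin m, i ≠ i0 → k ≤ (i : ℕ) → M i K = 0 := by
          intro i hi hik
          by_contra hne
          apply hA
          rcases le_total (M i K).natAbs (M i0 K).natAbs with h | h
          · exact ⟨i0, i, fun h' => hi h'.symm, hi0k, hik, hi00, hne, h⟩
          · exact ⟨i, i0, hi, hik, hi0k, hne, hi00, h⟩
        have hdu : IsUnit (M i0 K) := pivot_isUnit k hkm M hdet hstd i0 hi0k hz
        set d := M i0 K with hd
        have hdd : d * d = 1 := by
          rcases Int.isUnit_iff.mp hdu with h | h <;> rw [h] <;> norm_num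
        by_cases hB1 : ∃ i : Fin m, i ≠ i0 ∧ M i K ≠ 0
        · -- clear a row above the pivot
          obtain ⟨i, hii0, hi0⟩ := hB1
          set q : ℤ := M i K * d with hq
          set M' := Matrix.transvection i i0 (-q) * M with hM'
          have hrow : ∀ p, M' i p = M i p + (-q) * M i0 p := fun p =>
            Matrix.transvection_mul_apply_same i i0 p (-q) M
          have hother : ∀ p r, p ≠ i → M' p r = M p r := fun p r hp =>
            Matrix.transvection_mul_apply_of_ne i i0 p r hp (-q) M
          have hclr : M' i K = 0 := by
            rw [hrow K, ← hd, hq]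
            calc M i K + -(M i K * d) * d = M i K - M i K * (d * d) := by ring
            _ = 0 := by rw [hdd]; ring
          have hμ' : ∑ j, (M' j K).natAbs < μ := by
            rw [hsplit i M', ← hμ, hsplit i M]
            have : ∑ p ∈ Finset.univ.erase i, (M' p K).natAbs
                = ∑ p ∈ Finset.univ.erase i, (M p K).natAbs := by
              refine Finset.sum_congr rfl fun p hp => ?_
              rw [hother p K (Finset.ne_of_mem_erase hp)]
            rw [hclr]
            have : (M i K).natAbs ≠ 0 := by omega
            omega
          have hdet' : IsUnit M'.det := by
            rw [hM', Matrix.det_mul, Matrix.det_transvection_of_ne i i0 hii0, one_mul]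
            exact hdet
          have hstd' : ∀ j p : Fin m, (j : ℕ) < k → M' p j = if p = j then 1 else 0 := by
            intro j p hj
            by_cases hpi : p = i
            · subst hpi
              rw [hrow j, hstd j p hj, hstd j i0 hj,
                if_neg (show ¬ i0 = j by intro h; rw [h] at hi0k; omega), mul_zero, add_zero]
            · rw [hother p j hpi, hstd j p hj]
          have hlift' := IHμ _ hμ' M' rfl hdet' hstd'
          exact liftable_transfer (liftable_tv i i0 hii0 q)
            (by rw [Matrix.transvection_mul_transvection_same _ _ hii0, add_neg_cancel,
              Matrix.transvection_zero]) hlift'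
        · -- column K is d • e_{i0}: swap, negate, and recurse on k+1
          push_neg at hB1
          have hcolK : ∀ i : Fin m, i ≠ i0 → M i K = 0 := hB1
          -- finishing helper
          have hfin : ∀ N : Matrix (Fin m) (Fin m) ℤ, IsUnit N.det →
              (∀ j i : Fin m, (j : ℕ) < k → N i j = if i = j then 1 else 0) →
              (∀ p : Fin m, N p K = if p = K then 1 else 0) → Liftable N := by
            intro N hNdet hNstd hNcol
            refine IH (k + 1) (by omega) N hNdet ?_
            intro j i hj
            by_cases hjk : (j : ℕ) < k
            · exact hNstd j i hjk
            · have : j = K := Fin.ext (by omega)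
              subst this
              exact hNcol i
          set σ := Equiv.swap K i0 with hσ
          set M₂ := P σ * M with hM₂
          have hM₂app : ∀ p r, M₂ p r = M (σ p) r := fun p r => P_mul σ M p r
          have hσj : ∀ j : Fin m, (j : ℕ) < k → σ j = j := by
            intro j hj
            apply Equiv.swap_apply_of_ne_of_ne
            · intro h; rw [h] at hj; omega
            · intro h; rw [h] at hj; omega
          have hstd₂ : ∀ j i : Fin m, (j : ℕ) < k → M₂ i j = if i = j then 1 else 0 := by
            intro j i hj
            rw [hM₂app i j, hstd j (σ i) hj]
            have hiff : σ i = j ↔ i = j := by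
              conv_lhs => rw [← hσj j hj]
              exact Equiv.apply_eq_iff_eq σ
            by_cases h : i = j
            · rw [if_pos (hiff.mpr h), if_pos h]
            · rw [if_neg (fun hh => h (hiff.mp hh)), if_neg h]
          have hcol₂ : ∀ p : Fin m, M₂ p K = if p = K then d else 0 := by
            intro p
            rw [hM₂app p K]
            by_cases hp : p = K
            · subst hp; rw [if_pos rfl, hσ, Equiv.swap_apply_left]
            · rw [if_neg hp]
              apply hcolK
              intro h
              apply hp
              have : σ p = σ K := by rw [h, hσ, Equiv.swap_apply_left]
              exact σ.injective this
          have hdet₂ : IsUnit M₂.det := by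
            rw [hM₂, Matrix.det_mul]
            exact (Matrix.isUnit_det_of_left_inverse (P_swap_sq K i0)).mul hdet
          rcases Int.isUnit_iff.mp hdu with hd1 | hdm1
          · -- d = 1 : no negation needed
            have hlift₂ := hfin M₂ hdet₂ hstd₂ (by
              intro p; rw [hcol₂ p, hd1])
            exact liftable_transfer (liftable_P σ) (by rw [hσ]; exact P_swap_sq K i0) hlift₂
          · -- d = -1 : negate row K
            set M₃ := D K * M₂ with hM₃
            have hM₃app : ∀ p r, M₃ p r = (if p = K then -1 else 1) * M₂ p r :=
              fun p r => D_mul K M₂ p r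
            have hstd₃ : ∀ j i : Fin m, (j : ℕ) < k → M₃ i j = if i = j then 1 else 0 := by
              intro j i hj
              rw [hM₃app i j, hstd₂ j i hj]
              by_cases hiK : i = K
              · subst hiK
                have hKj : ¬ (K = j) := by intro h; rw [← h, hKval] at hj; omega
                rw [if_pos rfl, if_neg hKj, mul_zero]
              · rw [if_neg hiK, one_mul]
            have hcol₃ : ∀ p : Fin m, M₃ p K = if p = K then 1 else 0 := by
              intro p
              rw [hM₃app p K, hcol₂ p]
              by_cases hp : p = K <;> simp [hp, hdm1]
            have hdet₃ : IsUnit M₃.det := by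
              rw [hM₃, Matrix.det_mul]
              exact (Matrix.isUnit_det_of_left_inverse (D_sq K)).mul hdet₂
            have hlift₃ := hfin M₃ hdet₃ hstd₃ hcol₃
            have hlift₂ := liftable_transfer (liftable_D K) (D_sq K) hlift₃
            exact liftable_transfer (liftable_P σ) (by rw [hσ]; exact P_swap_sq K i0) hlift₂
      · -- no nonzero entry in column K on rows ≥ k : determinant is zero, contradiction
        exfalso
        push_neg at hex
        have hvv : (fun i : Fin m => M i K) = (fun i : Fin m => if (i : ℕ) < k then M i K else 0) := by
          funext i
          by_cases hik : (i : ℕ) < k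
          · rw [if_pos hik]
          · rw [if_neg hik, hex i (by omega)]
        have hMv : M = M.updateCol K (fun i => if (i : ℕ) < k then M i K else 0) := by
          conv_lhs => rw [← Matrix.updateCol_eq_self M K]
          rw [hvv]
        have : M.det = 0 := by
          rw [hMv]
          exact det_updateColumn_low k hkm M hstd
        rw [this] at hdet
        exact (by simp : ¬ IsUnit (0 : ℤ)) hdet

lemma core (s : Module.Basis (Fin m) ℤ (A m)) :
    ∃ f : Fin m → F₀ m, IsFreeBasis f ∧ ∀ i, abm (f i) = s i := by
  classical
  set eb := FreeAbelianGroup.basis (Fin m) with heb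
  have hebi : ∀ i, eb i = e i := by
    intro i
    apply eb.repr.injective
    rw [Module.Basis.repr_self]
    have h2 : eb.repr (e i) = FreeAbelianGroup.toFinsupp (FreeAbelianGroup.of i) := rfl
    rw [h2, FreeAbelianGroup.toFinsupp_of]
  set M : Matrix (Fin m) (Fin m) ℤ := Matrix.of fun i j => eb.repr (s i) j with hM
  have hMT : eb.toMatrix s = Mᵀ := by
    ext i j
    rfl
  have hdet : IsUnit M.det := by
    have h1 : Invertible (eb.toMatrix s) := eb.invertibleToMatrix s
    have h2 : IsUnit (eb.toMatrix s).det := Matrix.isUnit_det_of_invertible _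
    rwa [hMT, Matrix.det_transpose] at h2
  obtain ⟨φ, hφ⟩ := elim (m := m) m 0 (by omega) M hdet (fun j i hj => absurd hj (by omega))
  refine ⟨fun i => φ (FreeGroup.of i), ?_, ?_⟩
  · have hL : FreeGroup.lift (fun i => φ (FreeGroup.of i)) = φ.toMonoidHom :=
      FreeGroup.ext_hom _ _ (fun a => by simp)
    show Function.Bijective _
    rw [hL]
    exact φ.bijective
  · intro i
    rw [hφ i]
    have : ∀ j, M i j • e j = eb.repr (s i) j • eb j := by
      intro j; rw [hebi j]; rfl
    rw [Finset.sum_congr rfl (fun j _ => this j)]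
    exact eb.sum_repr (s i)


end LB

/-- Let `F` be a free group of rank `m` and let `Ab : F → F/[F,F]` be the abelianisation map,
so that `A = F/[F,F]` is free abelian of rank `m`.  Any `ℤ`-basis `s_1, …, s_m` of `A`
lifts under `Ab` to a basis `f_1, …, f_m` of the free group `F`. -/
theorem basis_of_abelianization_lifts
    (m : ℕ) (F : Type) [Group F]
    (b : Fin m → F) (hb : IsFreeBasis b)
    (s : Module.Basis (Fin m) ℤ (Additive (Abelianization F))) :
    ∃ f : Fin m → F, IsFreeBasis f ∧
      ∀ i : Fin m, Additive.ofMul (Abelianization.of (f i)) = s i := by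
  classical
  set L : FreeGroup (Fin m) →* F := FreeGroup.lift b with hLdef
  set φ : FreeGroup (Fin m) ≃* F := MulEquiv.ofBijective L hb with hφdef
  set ψ : Abelianization (FreeGroup (Fin m)) ≃* Abelianization F := φ.abelianizationCongr with hψdef
  set ψ' : LB.A m ≃ₗ[ℤ] Additive (Abelianization F) :=
    (MulEquiv.toAdditive ψ).toIntLinearEquiv with hψ'def
  obtain ⟨f₀, hf₀basis, hf₀⟩ := LB.core (s.map ψ'.symm)
  refine ⟨fun i => L (f₀ i), ?_, ?_⟩
  · have hL : FreeGroup.lift (fun i => L (f₀ i)) = L.comp (FreeGroup.lift f₀) :=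
      FreeGroup.ext_hom _ _ (fun a => by simp)
    show Function.Bijective _
    rw [hL, MonoidHom.coe_comp]
    exact hb.comp hf₀basis
  · intro i
    have h1 : Additive.ofMul (Abelianization.of (L (f₀ i))) = ψ' (LB.abm (f₀ i)) := by
      show _ = Additive.ofMul (ψ (Abelianization.of (f₀ i)))
      rw [hψdef, abelianizationCongr_of]
      rfl
    rw [h1, hf₀ i, Module.Basis.map_apply]
    exact ψ'.apply_symm_apply (s i)
end

section
/- Let n, m ≥ 1 and r ≤ m, and let F^(1), …, F^(n) be free groups of rank m. If θ and θ' are two group homomorphisms from the direct product F^(1) × … × F^(n) to the free abelian group ℤ^r each of whose restrictions to every factor F^(i) is surjective, then there is an automorphism of F^(1) × … × F^(n) which preserves each direct factor (i.e., is a product of automorphisms of the individual factors) and which carries ker θ onto ker θ'. In particular ker θ and ker θ' are isomorphic groups. -/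
set_option linter.unusedSectionVars false

open FreeGroup Function Multiplicative

namespace KernelsIso

variable {ι : Type} [DecidableEq ι] {ρ : Type}

def liftHom (v : ι → ρ → ℤ) : FreeGroup ι →* Multiplicative (ρ → ℤ) :=
  FreeGroup.lift fun i => ofAdd (v i)

@[simp] lemma liftHom_of (v : ι → ρ → ℤ) (i : ι) :
    liftHom v (of i) = ofAdd (v i) := FreeGroup.lift_apply_of

def Rel (v w : ι → ρ → ℤ) : Prop :=
  ∃ α : FreeGroup ι ≃* FreeGroup ι, (liftHom w).comp α.toMonoidHom = liftHom v

lemma Rel.refl (v : ι → ρ → ℤ) : Rel v v :=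
  ⟨MulEquiv.refl _, by ext a; simp⟩

lemma Rel.symm {v w : ι → ρ → ℤ} (h : Rel v w) : Rel w v := by
  obtain ⟨α, hα⟩ := h
  refine ⟨α.symm, ?_⟩
  ext a : 1
  have := DFunLike.congr_fun hα (α.symm (of a))
  simpa using this.symm

lemma Rel.trans {u v w : ι → ρ → ℤ} (h1 : Rel u v) (h2 : Rel v w) : Rel u w := by
  obtain ⟨α, hα⟩ := h1
  obtain ⟨β, hβ⟩ := h2
  refine ⟨α.trans β, ?_⟩
  ext a : 1
  have h1' := DFunLike.congr_fun hα (of a)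
  have h2' := DFunLike.congr_fun hβ (α (of a))
  simpa using h2'.trans h1'

lemma Rel.surj {v w : ι → ρ → ℤ} (h : Rel v w)
    (hs : Surjective (liftHom v)) : Surjective (liftHom w) := by
  obtain ⟨α, hα⟩ := h
  intro y
  obtain ⟨g, hg⟩ := hs y
  exact ⟨α g, by have := DFunLike.congr_fun hα g; simp at this; rw [this, hg]⟩

/-- Embedding of the free group on a subtype. -/
def emb (i0 : ι) : FreeGroup {i // i ≠ i0} →* FreeGroup ι :=
  FreeGroup.map Subtype.val

@[simp] lemma emb_of (i0 : ι) (j : {i // i ≠ i0}) : emb i0 (of j) = of j.val :=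
  FreeGroup.map.of

lemma liftHom_comp_emb (i0 : ι) (v : ι → ρ → ℤ) :
    (liftHom v).comp (emb i0) = liftHom (fun j : {i // i ≠ i0} => v j.val) := by
  apply FreeGroup.ext_hom; intro a; simp

/-- The Nielsen move `of i0 ↦ of i0 * x`, `x` a word not involving `i0`. -/
def moveHom (i0 : ι) (x : FreeGroup {i // i ≠ i0}) : FreeGroup ι →* FreeGroup ι :=
  FreeGroup.lift fun i => if h : i = i0 then of i0 * emb i0 x else of i

lemma moveHom_of_self (i0 : ι) (x : FreeGroup {i // i ≠ i0}) :
    moveHom i0 x (of i0) = of i0 * emb i0 x := by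
  simp [moveHom]

lemma moveHom_of_ne (i0 : ι) (x : FreeGroup {i // i ≠ i0}) {i : ι} (h : i ≠ i0) :
    moveHom i0 x (of i) = of i := by
  simp [moveHom, h]

lemma moveHom_comp_emb (i0 : ι) (x : FreeGroup {i // i ≠ i0}) :
    (moveHom i0 x).comp (emb i0) = emb i0 := by
  apply FreeGroup.ext_hom; intro a
  simp [moveHom_of_ne i0 x a.prop]

lemma moveHom_comp_inv (i0 : ι) (x : FreeGroup {i // i ≠ i0}) :
    (moveHom i0 x⁻¹).comp (moveHom i0 x) = MonoidHom.id _ := by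
  apply FreeGroup.ext_hom; intro a
  by_cases h : a = i0
  · subst h
    have h2 : moveHom a x⁻¹ (emb a x) = emb a x :=
      DFunLike.congr_fun (moveHom_comp_emb a x⁻¹) x
    simp [moveHom_of_self, h2, moveHom_of_self a x⁻¹, mul_assoc]
  · simp [moveHom_of_ne _ _ h]

/-- The Nielsen move as an automorphism. -/
def moveEquiv (i0 : ι) (x : FreeGroup {i // i ≠ i0}) : FreeGroup ι ≃* FreeGroup ι :=
  MonoidHom.toMulEquiv (moveHom i0 x) (moveHom i0 x⁻¹)
    (moveHom_comp_inv i0 x) (by simpa using moveHom_comp_inv i0 x⁻¹)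

lemma rel_move (v : ι → ρ → ℤ) (i0 : ι) (x : FreeGroup {i // i ≠ i0}) :
    Rel v (update v i0 (v i0 +
      toAdd (liftHom (fun j : {i // i ≠ i0} => v j.val) x))) := by
  set T := toAdd (liftHom (fun j : {i // i ≠ i0} => v j.val) x) with hT
  set w := update v i0 (v i0 + T) with hw
  refine ⟨moveEquiv i0 x⁻¹, ?_⟩
  apply FreeGroup.ext_hom; intro a
  have hcoe : ∀ g, (moveEquiv i0 x⁻¹ : FreeGroup ι ≃* FreeGroup ι) g = moveHom i0 x⁻¹ g :=
    fun g => rfl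
  by_cases h : a = i0
  · subst h
    have hvw : (fun j : {i // i ≠ a} => w j.val) = (fun j : {i // i ≠ a} => v j.val) := by
      funext j; simp only [hw]; rw [update_of_ne j.prop]
    have key : liftHom w (emb a x⁻¹) = ofAdd (-T) := by
      have := DFunLike.congr_fun (liftHom_comp_emb a w) (x⁻¹ : FreeGroup {i // i ≠ a})
      simp only [MonoidHom.comp_apply] at this
      rw [this, hvw, _root_.map_inv, hT]
      simp
    simp only [MonoidHom.comp_apply, MulEquiv.coe_toMonoidHom, hcoe,
      moveHom_of_self, _root_.map_mul, liftHom_of, key, hw, update_self]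
    rw [← hw, key, ← ofAdd_add]
    congr 1
    abel
  · simp only [MonoidHom.comp_apply, MulEquiv.coe_toMonoidHom, hcoe,
      moveHom_of_ne _ _ h, liftHom_of, hw]
    rw [update_of_ne h]

/-- Inverting one generator. -/
def negHom (i0 : ι) : FreeGroup ι →* FreeGroup ι :=
  FreeGroup.lift fun i => if i = i0 then (of i)⁻¹ else of i

lemma negHom_invol (i0 : ι) : (negHom i0).comp (negHom i0) = MonoidHom.id _ := by
  apply FreeGroup.ext_hom; intro a
  by_cases h : a = i0 <;> simp [negHom, h]

def negEquiv (i0 : ι) : FreeGroup ι ≃* FreeGroup ι :=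
  MonoidHom.toMulEquiv (negHom i0) (negHom i0) (negHom_invol i0) (negHom_invol i0)

lemma rel_neg (v : ι → ρ → ℤ) (i0 : ι) : Rel v (update v i0 (-v i0)) := by
  refine ⟨negEquiv i0, ?_⟩
  apply FreeGroup.ext_hom; intro a
  have hcoe : ∀ g, (negEquiv i0 : FreeGroup ι ≃* FreeGroup ι) g = negHom i0 g := fun g => rfl
  by_cases h : a = i0
  · subst h
    simp [hcoe, negHom, update_self]
  · simp only [MonoidHom.comp_apply, MulEquiv.coe_toMonoidHom, hcoe, negHom,
      FreeGroup.lift_apply_of, if_neg h, liftHom_of]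
    rw [update_of_ne h]

section Span

variable [Fintype ι]

lemma liftHom_inv_of (v : ι → ρ → ℤ) (i : ι) :
    liftHom v ((of i)⁻¹) = ofAdd (-(v i)) := by simp

lemma mem_span_of_liftHom (v : ι → ρ → ℤ) (g : FreeGroup ι) :
    toAdd (liftHom v g) ∈ Submodule.span ℤ (Set.range v) := by
  induction g using FreeGroup.induction_on with
  | C1 => simpa using Submodule.zero_mem _
  | of i =>
      show toAdd (liftHom v (of i)) ∈ _
      rw [liftHom_of]
      simpa using Submodule.subset_span (Set.mem_range_self i)
  | inv_of i _ =>
      show toAdd (liftHom v ((of i)⁻¹)) ∈ _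
      rw [liftHom_inv_of]
      exact Submodule.neg_mem _ (Submodule.subset_span (Set.mem_range_self i))
  | mul g h hg hh =>
      rw [_root_.map_mul]
      exact Submodule.add_mem _ hg hh

lemma surjective_liftHom_iff (v : ι → ρ → ℤ) :
    Surjective (liftHom v) ↔ Submodule.span ℤ (Set.range v) = ⊤ := by
  constructor
  · intro hs
    rw [eq_top_iff]
    intro y _
    obtain ⟨g, hg⟩ := hs (ofAdd y)
    have := mem_span_of_liftHom v g
    rwa [hg] at this
  · intro hsp y
    have hy : toAdd y ∈ Submodule.span ℤ (Set.range v) := by rw [hsp]; trivial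
    have : ∃ g : FreeGroup ι, liftHom v g = ofAdd (toAdd y) := by
      refine Submodule.span_induction ?_ ?_ ?_ ?_ hy
      · rintro z ⟨i, rfl⟩; exact ⟨of i, liftHom_of v i⟩
      · exact ⟨1, (_root_.map_one _)⟩
      · rintro z1 z2 _ _ ⟨g1, hg1⟩ ⟨g2, hg2⟩
        refine ⟨g1 * g2, ?_⟩
        rw [_root_.map_mul, hg1, hg2]
        rfl
      · rintro c z _ ⟨g, hg⟩
        refine ⟨g ^ c, ?_⟩
        rw [map_zpow, hg]
        show (ofAdd (toAdd z)) ^ c = _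
        rw [← ofAdd_zsmul]
        rfl
    simpa using this

lemma dvd_liftHom_coord [DecidableEq ρ] (v : ι → ρ → ℤ) (k : ρ) (d : ℤ)
    (hd : ∀ i, d ∣ v i k) (g : FreeGroup ι) :
    d ∣ toAdd (liftHom v g) k := by
  induction g using FreeGroup.induction_on with
  | C1 => simpa using dvd_zero d
  | of i =>
      show d ∣ toAdd (liftHom v (of i)) k
      rw [liftHom_of]
      simpa using hd i
  | inv_of i _ =>
      show d ∣ toAdd (liftHom v ((of i)⁻¹)) k
      rw [liftHom_inv_of]
      simpa using (hd i).neg_right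
  | mul g h hg hh =>
      rw [_root_.map_mul]
      have : toAdd (liftHom v g * liftHom v h) k
          = toAdd (liftHom v g) k + toAdd (liftHom v h) k := rfl
      rw [this]
      exact dvd_add hg hh

lemma isUnit_of_dvd_row {r : ℕ} (v : ι → Fin (r + 1) → ℤ) (d : ℤ)
    (hd : ∀ i, d ∣ v i 0) (hs : Surjective (liftHom v)) : IsUnit d := by
  obtain ⟨g, hg⟩ := hs (ofAdd (Pi.single (0 : Fin (r + 1)) 1))
  have h1 := dvd_liftHom_coord v 0 d hd g
  rw [hg] at h1
  simp only [toAdd_ofAdd, Pi.single_eq_same] at h1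
  exact isUnit_of_dvd_one h1

end Span

lemma rel_single_move (v : ι → ρ → ℤ) (i0 : ι) (j : {i // i ≠ i0}) (c : ℤ) :
    Rel v (update v i0 (v i0 + c • v j.val)) := by
  have h := rel_move v i0 ((of j) ^ c)
  have hx : toAdd (liftHom (fun j' : {i // i ≠ i0} => v j'.val) ((of j) ^ c))
      = c • v j.val := by
    rw [map_zpow, liftHom_of, toAdd_zpow]
    rfl
  rwa [hx] at h

section Euclid

variable [Fintype ι]

lemma euclid {r : ℕ} (i0 : ι) (N : ℕ) :
    ∀ (v : ι → Fin (r + 1) → ℤ), (∑ i, (v i 0).natAbs) = N → Surjective (liftHom v) →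
      ∃ w, Rel v w ∧ Surjective (liftHom w) ∧ w i0 0 = 1 := by
  induction N using Nat.strong_induction_on with
  | _ N IH =>
  intro v hN hs
  by_cases h1 : ∃ i, v i 0 = 1 ∨ v i 0 = -1
  · obtain ⟨i, hi⟩ := h1
    by_cases hii : i = i0
    · subst hii
      rcases hi with h | h
      · exact ⟨v, Rel.refl v, hs, h⟩
      · refine ⟨update v i (-v i), rel_neg v i, (rel_neg v i).surj hs, ?_⟩
        simp [h]
    · have hne : i ≠ i0 := hii
      set c : ℤ := (1 - v i0 0) * (v i 0) with hc
      have hrel := rel_single_move v i0 ⟨i, hne⟩ c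
      refine ⟨_, hrel, hrel.surj hs, ?_⟩
      rw [update_self]
      have hval : (v i0 + c • v i) 0 = v i0 0 + c * v i 0 := rfl
      rw [hval, hc]
      have hsq : v i 0 * v i 0 = 1 := by rcases hi with h | h <;> rw [h] <;> ring
      linear_combination (1 - v i0 0) * hsq
  · push_neg at h1
    have h1' : ∀ i, (v i 0).natAbs ≠ 1 := by
      intro i h
      rcases Int.natAbs_eq_iff.mp h with h' | h'
      · exact (h1 i).1 (by exact_mod_cast h')
      · exact (h1 i).2 (by exact_mod_cast h')
    by_cases hz : ∀ i, v i 0 = 0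
    · exfalso
      have := isUnit_of_dvd_row v 0 (fun i => by rw [hz i]) hs
      simp at this
    push_neg at hz
    obtain ⟨j, hj⟩ := hz
    by_cases h2 : ∃ i, i ≠ j ∧ v i 0 ≠ 0
    · obtain ⟨i, hij, hi0⟩ := h2
      have key : ∀ p q : ι, q ≠ p → v q 0 ≠ 0 → (v q 0).natAbs ≤ (v p 0).natAbs →
          ∃ w, Rel v w ∧ Surjective (liftHom w) ∧ w i0 0 = 1 := by
        intro p q hqp hq hle
        set c : ℤ := -(v p 0 / v q 0) with hc
        have hrel := rel_single_move v p ⟨q, hqp⟩ c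
        set w := update v p (v p + c • v q) with hwdef
        have hw0 : w p 0 = v p 0 % v q 0 := by
          rw [hwdef, update_self]
          have hval : (v p + c • v q) 0 = v p 0 + c * v q 0 := rfl
          rw [hval, hc, Int.emod_def]
          ring
        have hlt2 : (w p 0).natAbs < (v p 0).natAbs := by
          rw [hw0]
          have hb1 : 0 ≤ v p 0 % v q 0 := Int.emod_nonneg _ hq
          have hb2 : v p 0 % v q 0 < |v q 0| := Int.emod_lt_abs _ hq
          rw [Int.abs_eq_natAbs] at hb2
          omega
        have hsum : (∑ i', ((w i') 0).natAbs) < N := by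
          have ew := (Finset.add_sum_erase Finset.univ
            (fun i' => ((w i') 0).natAbs) (Finset.mem_univ p)).symm
          have ev := (Finset.add_sum_erase Finset.univ
            (fun i' => ((v i') 0).natAbs) (Finset.mem_univ p)).symm
          have hcong : (∑ i' ∈ Finset.univ.erase p, ((w i') 0).natAbs)
              = ∑ i' ∈ Finset.univ.erase p, ((v i') 0).natAbs := by
            apply Finset.sum_congr rfl
            intro x hx
            rw [hwdef, update_of_ne (Finset.mem_erase.mp hx).1]
          calc (∑ i', ((w i') 0).natAbs)
              = ((w p) 0).natAbs + ∑ i' ∈ Finset.univ.erase p, ((w i') 0).natAbs := ew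
            _ = ((w p) 0).natAbs + ∑ i' ∈ Finset.univ.erase p, ((v i') 0).natAbs := by
                rw [hcong]
            _ < ((v p) 0).natAbs + ∑ i' ∈ Finset.univ.erase p, ((v i') 0).natAbs :=
                Nat.add_lt_add_right hlt2 _
            _ = (∑ i', ((v i') 0).natAbs) := ev.symm
            _ = N := hN
        obtain ⟨w', hrel', hs', hw'⟩ := IH _ hsum w rfl (hrel.surj hs)
        exact ⟨w', hrel.trans hrel', hs', hw'⟩
      rcases le_or_gt (v i 0).natAbs (v j 0).natAbs with hle | hlt
      · exact key j i hij hi0 hle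
      · exact key i j (Ne.symm hij) hj hlt.le
    · push_neg at h2
      exfalso
      have hdvd : ∀ i, v j 0 ∣ v i 0 := by
        intro i
        by_cases hijj : i = j
        · subst hijj; exact dvd_refl _
        · rw [h2 i hijj]; exact dvd_zero _
      have := isUnit_of_dvd_row v (v j 0) hdvd hs
      rw [Int.isUnit_iff] at this
      rcases this with h | h
      · exact (h1 j).1 h
      · exact (h1 j).2 h

lemma rel_clear_aux {r : ℕ} (v : ι → Fin (r + 1) → ℤ) (i0 : ι) :
    ∀ s : Finset ι, i0 ∉ s →
      Rel v (fun i => if i ∈ s then v i - v i 0 • v i0 else v i) := by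
  intro s
  induction s using Finset.induction_on with
  | empty => intro _; simpa using Rel.refl v
  | @insert a s ha IH =>
    intro hins
    have ha' : i0 ∉ s := fun h => hins (Finset.mem_insert_of_mem h)
    have hai0 : i0 ≠ a := fun h => hins (h ▸ Finset.mem_insert_self a s)
    set vs := fun i => if i ∈ s then v i - v i 0 • v i0 else v i with hvs
    have h1 := IH ha'
    have h2 : Rel vs (update vs a (vs a + (-(v a 0)) • vs i0)) :=
      rel_single_move vs a ⟨i0, hai0⟩ (-(v a 0))
    have hvsa : vs a = v a := by simp [hvs, ha]
    have hvsi0 : vs i0 = v i0 := by simp [hvs, ha']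
    have heq : update vs a (vs a + (-(v a 0)) • vs i0)
        = fun i => if i ∈ insert a s then v i - v i 0 • v i0 else v i := by
      funext i
      by_cases hia : i = a
      · subst hia
        rw [update_self, if_pos (Finset.mem_insert_self i s), hvsa, hvsi0,
          sub_eq_add_neg, neg_smul]
      · rw [update_of_ne hia]
        simp only [hvs, Finset.mem_insert, hia, false_or]
    rw [heq] at h2
    exact h1.trans h2

lemma rel_clear {r : ℕ} (v : ι → Fin (r + 1) → ℤ) (i0 : ι) (h : v i0 0 = 1)
    (hs : Surjective (liftHom v)) :
    ∃ w, Rel v w ∧ Surjective (liftHom w) ∧ w i0 = v i0 ∧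
      ∀ i, i ≠ i0 → w i 0 = 0 := by
  have hrel := rel_clear_aux v i0 (Finset.univ.erase i0) (Finset.notMem_erase i0 _)
  refine ⟨_, hrel, hrel.surj hs, ?_, ?_⟩
  · simp [Finset.notMem_erase]
  · intro i hi
    have hmem : i ∈ Finset.univ.erase i0 := Finset.mem_erase.mpr ⟨hi, Finset.mem_univ i⟩
    simp only [if_pos hmem, Pi.sub_apply, Pi.smul_apply, smul_eq_mul, h, mul_one, sub_self]

end Euclid

section Extend

variable (i0 : ι)

/-- Extending an automorphism of the free group on the complement of `i0`. -/
def extHom (φ : FreeGroup {i // i ≠ i0} →* FreeGroup {i // i ≠ i0}) :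
    FreeGroup ι →* FreeGroup ι :=
  FreeGroup.lift fun i => if h : i = i0 then of i0 else emb i0 (φ (of ⟨i, h⟩))

lemma extHom_of_self (φ : FreeGroup {i // i ≠ i0} →* FreeGroup {i // i ≠ i0}) :
    extHom i0 φ (of i0) = of i0 := by simp [extHom]

lemma extHom_of_ne (φ : FreeGroup {i // i ≠ i0} →* FreeGroup {i // i ≠ i0})
    {i : ι} (h : i ≠ i0) : extHom i0 φ (of i) = emb i0 (φ (of ⟨i, h⟩)) := by
  simp [extHom, h]

lemma extHom_comp_emb (φ : FreeGroup {i // i ≠ i0} →* FreeGroup {i // i ≠ i0}) :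
    (extHom i0 φ).comp (emb i0) = (emb i0).comp φ := by
  apply FreeGroup.ext_hom; intro a
  simp [extHom_of_ne i0 φ a.prop]

lemma extHom_comp (φ ψ : FreeGroup {i // i ≠ i0} →* FreeGroup {i // i ≠ i0}) :
    (extHom i0 ψ).comp (extHom i0 φ) = extHom i0 (ψ.comp φ) := by
  apply FreeGroup.ext_hom; intro a
  by_cases h : a = i0
  · subst h
    simp only [MonoidHom.comp_apply, extHom_of_self]
  · rw [MonoidHom.comp_apply, extHom_of_ne i0 φ h, extHom_of_ne i0 (ψ.comp φ) h]
    have := DFunLike.congr_fun (extHom_comp_emb i0 ψ) (φ (of ⟨a, h⟩))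
    simpa using this

lemma extHom_id : extHom i0 (MonoidHom.id _) = MonoidHom.id _ := by
  apply FreeGroup.ext_hom; intro a
  by_cases h : a = i0
  · subst h; simp [extHom_of_self]
  · simp [extHom_of_ne i0 _ h]

/-- The extension as an automorphism. -/
def extEquiv (α : FreeGroup {i // i ≠ i0} ≃* FreeGroup {i // i ≠ i0}) :
    FreeGroup ι ≃* FreeGroup ι := by
  refine MonoidHom.toMulEquiv (extHom i0 α.toMonoidHom) (extHom i0 α.symm.toMonoidHom) ?_ ?_
  · rw [extHom_comp]
    have : α.symm.toMonoidHom.comp α.toMonoidHom = MonoidHom.id _ := by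
      ext x; simp
    rw [this, extHom_id]
  · rw [extHom_comp]
    have : α.toMonoidHom.comp α.symm.toMonoidHom = MonoidHom.id _ := by
      ext x; simp
    rw [this, extHom_id]

lemma extEquiv_coe (α : FreeGroup {i // i ≠ i0} ≃* FreeGroup {i // i ≠ i0})
    (g : FreeGroup ι) : extEquiv i0 α g = extHom i0 α.toMonoidHom g := rfl

end Extend

section Cons

/-- Prepending a zero coordinate, as a homomorphism. -/
def consHom (r : ℕ) : Multiplicative (Fin r → ℤ) →* Multiplicative (Fin (r + 1) → ℤ) :=
  AddMonoidHom.toMultiplicative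
    (AddMonoidHom.mk' (fun y => Fin.cons 0 y) (by
      intro x y
      funext j
      refine Fin.cases ?_ (fun j => ?_) j <;>
        simp [Fin.cons_zero, Fin.cons_succ]))

lemma consHom_ofAdd (r : ℕ) (y : Fin r → ℤ) :
    consHom r (ofAdd y) = ofAdd (Fin.cons 0 y) := rfl

lemma liftHom_cons {κ : Type} [DecidableEq κ] (r : ℕ) (u : κ → Fin r → ℤ) :
    liftHom (fun i => Fin.cons 0 (u i)) = (consHom r).comp (liftHom u) := by
  apply FreeGroup.ext_hom; intro a
  rw [MonoidHom.comp_apply, liftHom_of, liftHom_of, consHom_ofAdd]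

end Cons

section Std

/-- The standard tuple relative to an embedding. -/
noncomputable def stdT {r : ℕ} (f : Fin r ↪ ι) : ι → Fin r → ℤ :=
  Function.extend f (fun k => Pi.single k 1) 0

lemma stdT_apply_f {r : ℕ} (f : Fin r ↪ ι) (k : Fin r) :
    stdT f (f k) = Pi.single k 1 := f.injective.extend_apply _ _ k

lemma stdT_apply_ne {r : ℕ} (f : Fin r ↪ ι) {i : ι} (h : ¬∃ k, f k = i) :
    stdT f i = 0 := Function.extend_apply' _ _ _ h

end Std

section Main

lemma main_rel : ∀ (r : ℕ) (ι : Type) [Fintype ι] [DecidableEq ι]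
    (f : Fin r ↪ ι) (v : ι → Fin r → ℤ),
    Surjective (liftHom v) → Rel v (stdT f) := by
  intro r
  induction r with
  | zero =>
    intro ι _ _ f v _
    refine ⟨MulEquiv.refl _, ?_⟩
    apply FreeGroup.ext_hom
    intro a
    exact Subsingleton.elim _ _
  | succ r IH =>
    intro ι instF instD f v hs
    set i0 := f 0 with hi0
    obtain ⟨v0, R0, hs0, h00⟩ := euclid i0 (∑ i, (v i 0).natAbs) v rfl hs
    obtain ⟨v1, R1, hs1, h1i0, h1row⟩ := rel_clear v0 i0 h00 hs0
    have h10 : v1 i0 0 = 1 := by rw [h1i0]; exact h00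
    have hfsucc : ∀ k : Fin r, f k.succ ≠ i0 := fun k h =>
      Fin.succ_ne_zero k (f.injective h)
    set f' : Fin r ↪ {i : ι // i ≠ i0} :=
      ⟨fun k => ⟨f k.succ, hfsucc k⟩, by
        intro a b hab
        have hab' : f a.succ = f b.succ := congrArg Subtype.val hab
        exact Fin.succ_injective r (f.injective hab')⟩ with hf'def
    set w : {i : ι // i ≠ i0} → Fin r → ℤ := fun i => Fin.tail (v1 i.val) with hwdef
    have hsw : Surjective (liftHom w) := by
      rw [surjective_liftHom_iff] at hs1 ⊢
      rw [eq_top_iff]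
      rintro y -
      have hmem : Fin.cons 0 y ∈ Submodule.span ℤ (Set.range v1) := by rw [hs1]; trivial
      obtain ⟨c, hc⟩ := (Submodule.mem_span_range_iff_exists_fun ℤ).mp hmem
      have hci0 : c i0 = 0 := by
        have h0 := congrFun hc 0
        rw [Finset.sum_apply] at h0
        have e1 : (∑ i, (c i • v1 i) 0) = c i0 := by
          rw [Finset.sum_eq_single i0]
          · simp [h10]
          · intro b _ hb
            simp [h1row b hb]
          · intro h; exact absurd (Finset.mem_univ i0) h
        rw [e1] at h0
        simpa using h0
      rw [Submodule.mem_span_range_iff_exists_fun ℤ]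
      refine ⟨fun i' => c i'.val, ?_⟩
      have key2 : Fin.tail (∑ i, c i • v1 i) = ∑ i, c i • Fin.tail (v1 i) := by
        funext j
        show (∑ i, c i • v1 i) j.succ = (∑ i, c i • Fin.tail (v1 i)) j
        rw [Finset.sum_apply, Finset.sum_apply]
        exact Finset.sum_congr rfl (fun i _ => rfl)
      have key3 : (∑ i' : {i : ι // i ≠ i0}, c i'.val • w i')
          = ∑ i ∈ Finset.univ.erase i0, c i • Fin.tail (v1 i) :=
        (Finset.sum_subtype (Finset.univ.erase i0)
          (fun x => by simp [Finset.mem_erase]) (fun i => c i • Fin.tail (v1 i))).symm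
      have key4 : (∑ i ∈ Finset.univ.erase i0, c i • Fin.tail (v1 i))
          = ∑ i, c i • Fin.tail (v1 i) :=
        Finset.sum_erase _ (by rw [hci0, zero_smul])
      rw [key3, key4, ← key2, hc]
      exact Fin.tail_cons _ _
    obtain ⟨α', hα'⟩ := IH {i : ι // i ≠ i0} f' w hsw
    set v2 : ι → Fin (r + 1) → ℤ :=
      fun i => if h : i = i0 then v1 i0 else Fin.cons 0 (stdT f' ⟨i, h⟩) with hv2
    have hv2i0 : v2 i0 = v1 i0 := by simp [hv2]
    have hv2val : (fun j : {i : ι // i ≠ i0} => v2 j.val)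
        = fun j : {i : ι // i ≠ i0} => Fin.cons 0 (stdT f' j) := by
      funext j
      simp [hv2, j.prop]
    have R2 : Rel v1 v2 := by
      refine ⟨extEquiv i0 α', ?_⟩
      apply FreeGroup.ext_hom; intro a
      have hco : ∀ g : FreeGroup ι, (extEquiv i0 α').toMonoidHom g
          = extHom i0 α'.toMonoidHom g := fun g => rfl
      rw [MonoidHom.comp_apply, hco]
      by_cases h : a = i0
      · subst h
        rw [extHom_of_self, liftHom_of, liftHom_of, hv2i0]
      · rw [extHom_of_ne i0 _ h]
        have e1 : liftHom v2 (emb i0 (α'.toMonoidHom (of ⟨a, h⟩)))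
            = liftHom (fun j : {i : ι // i ≠ i0} => v2 j.val) (α'.toMonoidHom (of ⟨a, h⟩)) :=
          DFunLike.congr_fun (liftHom_comp_emb i0 v2) _
        rw [e1, hv2val, liftHom_cons, MonoidHom.comp_apply]
        have e2 : liftHom (stdT f') (α'.toMonoidHom (of ⟨a, h⟩)) = liftHom w (of ⟨a, h⟩) :=
          DFunLike.congr_fun hα' _
        rw [e2, liftHom_of, consHom_ofAdd, liftHom_of]
        congr 1
        funext j
        refine Fin.cases ?_ (fun j => ?_) j
        · rw [Fin.cons_zero]; exact (h1row a h).symm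
        · rw [Fin.cons_succ]; rfl
    set t : Fin r → ℤ := Fin.tail (v1 i0) with ht
    set x3 : FreeGroup {i : ι // i ≠ i0} :=
      (List.ofFn fun k : Fin r => (of (f' k)) ^ (-(t k))).prod with hx3
    have hT : toAdd (liftHom (fun j : {i : ι // i ≠ i0} => v2 j.val) x3)
        = Fin.cons 0 (fun j => -(t j)) := by
      rw [hv2val, liftHom_cons]
      have e3 : liftHom (stdT f') x3 = ofAdd (fun j => -(t j)) := by
        rw [hx3, map_list_prod, List.map_ofFn, List.prod_ofFn]
        have e4 : ∀ k : Fin r, (⇑(liftHom (stdT f')) ∘ fun k : Fin r => (of (f' k)) ^ (-(t k))) k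
            = ofAdd ((-(t k)) • Pi.single k (1 : ℤ)) := by
          intro k
          show liftHom (stdT f') ((of (f' k)) ^ (-(t k))) = _
          rw [map_zpow, liftHom_of, stdT_apply_f, ← ofAdd_zsmul]
        rw [Finset.prod_congr rfl (fun k _ => e4 k), ← ofAdd_sum]
        congr 1
        funext j
        rw [Finset.sum_apply, Finset.sum_eq_single j]
        · simp
        · intro b _ hb
          rw [Pi.smul_apply, Pi.single_eq_of_ne (Ne.symm hb), smul_zero]
        · intro h; exact absurd (Finset.mem_univ j) h
      rw [MonoidHom.comp_apply, e3]
      rfl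
    have R3 := rel_move v2 i0 x3
    rw [hT] at R3
    have hfinal : update v2 i0 (v2 i0 + Fin.cons 0 (fun j => -(t j))) = stdT f := by
      funext i
      by_cases h : i = i0
      · subst h
        rw [update_self, hv2i0]
        have hstd : stdT f i0 = Pi.single (0 : Fin (r + 1)) 1 := by
          rw [hi0]
          exact stdT_apply_f f 0
        rw [hstd]
        funext j
        refine Fin.cases ?_ (fun j => ?_) j
        · rw [Pi.add_apply, Fin.cons_zero, h10, Pi.single_eq_same, add_zero]
        · rw [Pi.add_apply, Fin.cons_succ, Pi.single_eq_of_ne (Fin.succ_ne_zero j)]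
          show v1 i0 j.succ + -(v1 i0 j.succ) = 0
          exact add_neg_cancel _
      · rw [update_of_ne h]
        have hv2a : v2 i = Fin.cons 0 (stdT f' ⟨i, h⟩) := by simp [hv2, h]
        rw [hv2a]
        by_cases hk : ∃ k : Fin r, f k.succ = i
        · obtain ⟨k, hk⟩ := hk
          have hstd' : stdT f' ⟨i, h⟩ = Pi.single k 1 := by
            have : f' k = ⟨i, h⟩ := Subtype.ext hk
            rw [← this]
            exact stdT_apply_f f' k
          have hstd : stdT f i = Pi.single k.succ 1 := by
            rw [← hk]; exact stdT_apply_f f k.succ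
          rw [hstd', hstd]
          funext j
          refine Fin.cases ?_ (fun j => ?_) j
          · rw [Fin.cons_zero, Pi.single_eq_of_ne (Ne.symm (Fin.succ_ne_zero k))]
          · rw [Fin.cons_succ]
            by_cases hjk : j = k
            · subst hjk; rw [Pi.single_eq_same, Pi.single_eq_same]
            · rw [Pi.single_eq_of_ne hjk,
                Pi.single_eq_of_ne (fun hh => hjk (Fin.succ_injective r hh))]
        · have hz1 : stdT f' ⟨i, h⟩ = 0 := stdT_apply_ne f' (by
            rintro ⟨k, hkk⟩
            exact hk ⟨k, congrArg Subtype.val hkk⟩)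
          have hz2 : stdT f i = 0 := stdT_apply_ne f (by
            rintro ⟨k', hk'⟩
            rcases Fin.eq_zero_or_eq_succ k' with h0 | ⟨k, rfl⟩
            · rw [h0] at hk'
              exact h (hk'.symm.trans hi0.symm)
            · exact hk ⟨k, hk'⟩)
          rw [hz1, hz2]
          funext j
          refine Fin.cases ?_ (fun j => ?_) j
          · rw [Fin.cons_zero]; rfl
          · rw [Fin.cons_succ]; rfl
    rw [hfinal] at R3
    exact ((R0.trans R1).trans R2).trans R3

end Main

/-- Two surjective homomorphisms from a free group onto `ℤ^r` differ by an automorphism. -/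
lemma exists_auto {m r : ℕ} (hr : r ≤ m)
    (ψ ψ' : FreeGroup (Fin m) →* Multiplicative (Fin r → ℤ))
    (hψ : Surjective ψ) (hψ' : Surjective ψ') :
    ∃ α : FreeGroup (Fin m) ≃* FreeGroup (Fin m), ψ'.comp α.toMonoidHom = ψ := by
  have hrep : ∀ χ : FreeGroup (Fin m) →* Multiplicative (Fin r → ℤ),
      χ = liftHom (fun j => toAdd (χ (of j))) := by
    intro χ
    apply FreeGroup.ext_hom; intro a
    rw [liftHom_of, ofAdd_toAdd]
  set f : Fin r ↪ Fin m := Fin.castLEEmb hr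
  have R1 : Rel (fun j => toAdd (ψ (of j))) (stdT f) :=
    main_rel r (Fin m) f _ (by rw [← hrep ψ]; exact hψ)
  have R2 : Rel (fun j => toAdd (ψ' (of j))) (stdT f) :=
    main_rel r (Fin m) f _ (by rw [← hrep ψ']; exact hψ')
  obtain ⟨α, hα⟩ := R1.trans R2.symm
  refine ⟨α, ?_⟩
  rw [hrep ψ', hrep ψ]
  exact hα

end KernelsIso

/-- Let `F^(1), …, F^(n)` be free groups of rank `m ≥ 1`, let `r ≤ m`, and let
`θ, θ' : F^(1) × ⋯ × F^(n) → ℤ^r` be homomorphisms whose restrictions to every factor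
are surjective.  Then there is an automorphism of the product preserving each factor
(i.e. a product of automorphisms of the individual factors) carrying `ker θ` onto `ker θ'`;
in particular `ker θ ≅ ker θ'`. -/
theorem kernels_isomorphic_of_factorwise_surjective
    (n m r : ℕ) (hn : 1 ≤ n) (hm : 1 ≤ m) (hr : r ≤ m)
    (θ θ' : (∀ _ : Fin n, FreeGroup (Fin m)) →* Multiplicative (Fin r → ℤ))
    (hθ : ∀ i : Fin n, Function.Surjective
      (θ.comp (MonoidHom.mulSingle (fun _ : Fin n => FreeGroup (Fin m)) i)))
    (hθ' : ∀ i : Fin n, Function.Surjective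
      (θ'.comp (MonoidHom.mulSingle (fun _ : Fin n => FreeGroup (Fin m)) i))) :
    ∃ σ : Fin n → (FreeGroup (Fin m) ≃* FreeGroup (Fin m)),
      Subgroup.map (MulEquiv.piCongrRight σ).toMonoidHom θ.ker = θ'.ker ∧
      Nonempty (θ.ker ≃* θ'.ker) := by
  have key := fun i : Fin n => KernelsIso.exists_auto hr
    (θ.comp (MonoidHom.mulSingle (fun _ : Fin n => FreeGroup (Fin m)) i))
    (θ'.comp (MonoidHom.mulSingle (fun _ : Fin n => FreeGroup (Fin m)) i))
    (hθ i) (hθ' i)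
  choose σ hσ using key
  have hcomp : θ'.comp (MulEquiv.piCongrRight σ).toMonoidHom = θ := by
    apply MonoidHom.pi_ext
    intro i x
    have hps : (MulEquiv.piCongrRight σ) (Pi.mulSingle i x) = Pi.mulSingle i (σ i x) := by
      funext j
      rw [MulEquiv.piCongrRight_apply]
      by_cases h : j = i
      · subst h
        rw [Pi.mulSingle_eq_same, Pi.mulSingle_eq_same]
      · rw [Pi.mulSingle_eq_of_ne h, Pi.mulSingle_eq_of_ne h, _root_.map_one]
    rw [MonoidHom.comp_apply]
    have hco : (MulEquiv.piCongrRight σ).toMonoidHom (Pi.mulSingle i x)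
        = (MulEquiv.piCongrRight σ) (Pi.mulSingle i x) := rfl
    rw [hco, hps]
    have := DFunLike.congr_fun (hσ i) x
    simpa using this
  have hker : Subgroup.map (MulEquiv.piCongrRight σ).toMonoidHom θ.ker = θ'.ker := by
    ext x
    rw [Subgroup.mem_map_equiv]
    simp only [MonoidHom.mem_ker]
    have h1 : θ ((MulEquiv.piCongrRight σ).symm x)
        = θ' x := by
      conv_lhs => rw [← hcomp]
      rw [MonoidHom.comp_apply]
      congr 1
      exact (MulEquiv.piCongrRight σ).apply_symm_apply x
    rw [h1]
  refine ⟨σ, hker, ⟨?_⟩⟩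
  exact (MulEquiv.subgroupMap (MulEquiv.piCongrRight σ) θ.ker).trans
    (MulEquiv.subgroupCongr hker)
end

section
/- Let n ≥ 2, m ≥ 1 and r ≤ m. Then the group K^n_m(r) is generated by the set S_1 ∪ S_2 ∪ S_3, where S_1 = { e^(1)_i (e^(j)_i)^{-1} : 1 ≤ i ≤ r, 2 ≤ j ≤ n }, S_2 = { e^(j)_i : r+1 ≤ i ≤ m, 1 ≤ j ≤ n }, and S_3 = { [e^(1)_i, e^(1)_j] : 1 ≤ i < j ≤ r }. (Here [x,y] denotes xyx^{-1}y^{-1}.) -/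
/-- The element `t_j` of `ℤ^r` (written multiplicatively), where indices `j ≥ r` map to `0`. -/
def tvec (m r : ℕ) (j : Fin m) : Multiplicative (Fin r → ℤ) :=
  Multiplicative.ofAdd (if h : (j : ℕ) < r then Pi.single (⟨j, h⟩ : Fin r) (1 : ℤ) else 0)

/-- The homomorphism `F_m → ℤ^r` sending `e_j ↦ t_j` for `j ≤ r` and `e_j ↦ 0` for `j > r`. -/
def facHom (m r : ℕ) : FreeGroup (Fin m) →* Multiplicative (Fin r → ℤ) :=
  FreeGroup.lift (tvec m r)

/-- The homomorphism `θ : F_m^(1) × ⋯ × F_m^(n) → ℤ^r` with `θ(e^(i)_j) = t_j` for `j ≤ r`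
and `θ(e^(i)_j) = 0` for `j > r`. -/
def thetaHom (n m r : ℕ) : (∀ _ : Fin n, FreeGroup (Fin m)) →* Multiplicative (Fin r → ℤ) where
  toFun g := ∏ i, facHom m r (g i)
  map_one' := by simp
  map_mul' a b := by simp [Finset.prod_mul_distrib]

/-- The group `K^n_m(r) = ker θ`. -/
def Kgrp (n m r : ℕ) : Subgroup (∀ _ : Fin n, FreeGroup (Fin m)) := (thetaHom n m r).ker

/-- The generator `e^(i)_j` of the `i`-th factor, as an element of the direct product. -/
def gen (n m : ℕ) (i : Fin n) (j : Fin m) : ∀ _ : Fin n, FreeGroup (Fin m) :=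
  Pi.mulSingle i (FreeGroup.of j)

open scoped commutatorElement

namespace KgrpAux

open Subgroup

abbrev Gp (n m : ℕ) := ∀ _ : Fin n, FreeGroup (Fin m)

def Sset (n m r : ℕ) (z : Fin n) : Set (Gp n m) :=
  {x | ∃ (i : Fin m) (j : Fin n), (i : ℕ) < r ∧ 1 ≤ (j : ℕ) ∧
      x = gen n m z i * (gen n m j i)⁻¹} ∪
  {x | ∃ (i : Fin m) (j : Fin n), r ≤ (i : ℕ) ∧ x = gen n m j i} ∪
  {x | ∃ (i j : Fin m), (i : ℕ) < (j : ℕ) ∧ (j : ℕ) < r ∧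
      x = ⁅gen n m z i, gen n m z j⁆}

section AbstractGroup

variable {Γ : Type*} [Group Γ]

lemma conj_eq_of_commute {c s : Γ} (h : Commute c s) : c * s * c⁻¹ = s := by
  rw [h.eq, mul_inv_cancel_right]

lemma conj_eq_of_commute' {c s : Γ} (h : Commute c s) : c⁻¹ * s * c = s := by
  have := conj_eq_of_commute h.inv_left
  rwa [inv_inv] at this

lemma conj_aux (a x b : Γ) (h : Commute a b) :
    a * (x * b⁻¹) * a⁻¹ = ⁅a, x⁆ * (x * b⁻¹) := by
  have h2 : b⁻¹ * a⁻¹ = a⁻¹ * b⁻¹ := (h.inv_left.inv_right.symm).eq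
  calc a * (x * b⁻¹) * a⁻¹ = a * x * (b⁻¹ * a⁻¹) := by group
    _ = a * x * (a⁻¹ * b⁻¹) := by rw [h2]
    _ = ⁅a, x⁆ * (x * b⁻¹) := by rw [commutatorElement_def]; group

lemma conj_aux2 (c x b : Γ) (h : Commute c x) :
    c * (x * b⁻¹) * c⁻¹ = (x * b⁻¹) * ⁅b, c⁆ := by
  calc c * (x * b⁻¹) * c⁻¹ = (c * x) * (b⁻¹ * c⁻¹) := by group
    _ = (x * c) * (b⁻¹ * c⁻¹) := by rw [h.eq]
    _ = (x * b⁻¹) * ⁅b, c⁆ := by rw [commutatorElement_def]; group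

lemma conj_aux_inv (a x b : Γ) (h : Commute a b) :
    a⁻¹ * (x * b⁻¹) * a = ⁅a⁻¹, x⁆ * (x * b⁻¹) := by
  have := conj_aux a⁻¹ x b h.inv_left
  rwa [inv_inv] at this

lemma conj_aux2_inv (c x b : Γ) (h : Commute c x) :
    c⁻¹ * (x * b⁻¹) * c = (x * b⁻¹) * ⁅b, c⁻¹⁆ := by
  have := conj_aux2 c⁻¹ x b h.inv_left
  rwa [inv_inv] at this

lemma comm_decomp (a b p q : Γ) :
    ⁅p, q⁆ = (a * p⁻¹)⁻¹ * (a * (b * q⁻¹) * a⁻¹)⁻¹ * ⁅a, b⁆ *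
      (b * (a * p⁻¹) * b⁻¹) * (b * q⁻¹) := by
  rw [commutatorElement_def, commutatorElement_def]; group

lemma comm_inv_left (a x : Γ) : ⁅a⁻¹, x⁆ = a⁻¹ * ⁅a, x⁆⁻¹ * a := by
  rw [commutatorElement_def, commutatorElement_def]; group

lemma comm_inv_right (p q : Γ) : ⁅p, q⁻¹⁆ = q⁻¹ * ⁅p, q⁆⁻¹ * q := by
  rw [commutatorElement_def, commutatorElement_def]; group

lemma normalizer_aux {S : Set Γ} {g : Γ}
    (h1 : ∀ s ∈ S, g * s * g⁻¹ ∈ closure S) (h2 : ∀ s ∈ S, g⁻¹ * s * g ∈ closure S) :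
    g ∈ normalizer (closure S : Set Γ) := by
  have key : ∀ t : Γ, (∀ s ∈ S, t * s * t⁻¹ ∈ closure S) →
      ∀ x ∈ closure S, t * x * t⁻¹ ∈ closure S := by
    intro t ht x hx
    induction hx using closure_induction with
    | mem y hy => exact ht y hy
    | one => simpa using one_mem _
    | mul y w hy hw hy' hw' =>
        have e : t * (y * w) * t⁻¹ = (t * y * t⁻¹) * (t * w * t⁻¹) := by group
        rw [e]; exact mul_mem hy' hw'
    | inv y hy hy' =>
        have e : t * y⁻¹ * t⁻¹ = (t * y * t⁻¹)⁻¹ := by group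
        rw [e]; exact inv_mem hy'
  rw [Subgroup.mem_normalizer_iff]
  intro x
  constructor
  · exact fun hx => key g h1 x hx
  · intro hx
    have h3 := key g⁻¹ (fun s hs => by rw [inv_inv]; exact h2 s hs) _ hx
    have e : g⁻¹ * (g * x * g⁻¹) * g⁻¹⁻¹ = x := by group
    rwa [e] at h3

end AbstractGroup

section Main

variable {n m r : ℕ}

lemma gen_apply_eq (k : Fin n) (l : Fin m) : gen n m k l k = FreeGroup.of l :=
  Pi.mulSingle_eq_same k _

lemma gen_apply_ne {k k' : Fin n} (h : k' ≠ k) (l : Fin m) : gen n m k l k' = 1 :=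
  Pi.mulSingle_eq_of_ne h _

lemma gen_commute {k k' : Fin n} (h : k ≠ k') (l l' : Fin m) :
    Commute (gen n m k l) (gen n m k' l') :=
  Pi.mulSingle_commute h _ _

lemma commute_gen {k : Fin n} (l : Fin m) {x : Gp n m} (hx : x k = 1) :
    Commute (gen n m k l) x := by
  show gen n m k l * x = x * gen n m k l
  funext i
  by_cases h : i = k
  · subst h
    simp [gen, Pi.mulSingle_eq_same, hx]
  · simp [gen, Pi.mulSingle_eq_of_ne h]

lemma comm_apply_one {x y : Gp n m} (k : Fin n) (hx : x k = 1) (hy : y k = 1) :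
    ⁅x, y⁆ k = 1 := by
  simp [commutatorElement_def, Pi.mul_apply, Pi.inv_apply, hx, hy]

variable (z : Fin n)

lemma one_le_of_ne (hz : (z : ℕ) = 0) {j : Fin n} (h : j ≠ z) : 1 ≤ (j : ℕ) := by
  have : (j : ℕ) ≠ (z : ℕ) := fun hh => h (Fin.ext hh)
  omega

lemma ne_z_of_one_le (hz : (z : ℕ) = 0) {j : Fin n} (h : 1 ≤ (j : ℕ)) : j ≠ z := by
  intro he; rw [he, hz] at h; omega

lemma mem_u {i : Fin m} {j : Fin n} (hi : (i : ℕ) < r) (hj : 1 ≤ (j : ℕ)) :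
    gen n m z i * (gen n m j i)⁻¹ ∈ closure (Sset n m r z) :=
  subset_closure (Or.inl (Or.inl ⟨i, j, hi, hj, rfl⟩))

lemma mem_s2 (j : Fin n) {i : Fin m} (hi : r ≤ (i : ℕ)) :
    gen n m j i ∈ closure (Sset n m r z) :=
  subset_closure (Or.inl (Or.inr ⟨i, j, hi, rfl⟩))

lemma mem_c {i l : Fin m} (hi : (i : ℕ) < r) (hl : (l : ℕ) < r) :
    ⁅gen n m z i, gen n m z l⁆ ∈ closure (Sset n m r z) := by
  rcases lt_trichotomy (i : ℕ) (l : ℕ) with h | h | h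
  · exact subset_closure (Or.inr ⟨i, l, h, hl, rfl⟩)
  · have : i = l := Fin.ext h
    subst this
    rw [commutatorElement_eq_one_iff_commute.mpr (Commute.refl _)]
    exact one_mem _
  · rw [← commutatorElement_inv]
    exact inv_mem (subset_closure (Or.inr ⟨l, i, h, hi, rfl⟩))

lemma mem_w {l : Fin m} (hl : (l : ℕ) < r) (hz : (z : ℕ) = 0) {k k' : Fin n} (hkk' : k ≠ k') :
    gen n m k l * (gen n m k' l)⁻¹ ∈ closure (Sset n m r z) := by
  by_cases hk : k = z
  · rw [hk]
    exact mem_u z hl (one_le_of_ne z hz (fun he => hkk' (hk.trans he.symm)))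
  · by_cases hk' : k' = z
    · rw [hk']
      have e : gen n m k l * (gen n m z l)⁻¹ = (gen n m z l * (gen n m k l)⁻¹)⁻¹ := by group
      rw [e]
      exact inv_mem (mem_u z hl (one_le_of_ne z hz hk))
    · have e : gen n m k l * (gen n m k' l)⁻¹ =
          (gen n m z l * (gen n m k l)⁻¹)⁻¹ * (gen n m z l * (gen n m k' l)⁻¹) := by group
      rw [e]
      exact mul_mem (inv_mem (mem_u z hl (one_le_of_ne z hz hk)))
        (mem_u z hl (one_le_of_ne z hz hk'))

lemma key0 {l : Fin m} (hl : (l : ℕ) < r) (hz : (z : ℕ) = 0) {k k' : Fin n} (hkk' : k ≠ k')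
    {s : Gp n m} (hs : s ∈ closure (Sset n m r z)) (hcomm : Commute (gen n m k' l) s) :
    gen n m k l * s * (gen n m k l)⁻¹ ∈ closure (Sset n m r z) ∧
      (gen n m k l)⁻¹ * s * gen n m k l ∈ closure (Sset n m r z) := by
  have hwmem : gen n m k l * (gen n m k' l)⁻¹ ∈ closure (Sset n m r z) := mem_w z hl hz hkk'
  set w := gen n m k l * (gen n m k' l)⁻¹ with hw
  constructor
  · have e : gen n m k l * s * (gen n m k l)⁻¹ =
        w * (gen n m k' l * s * (gen n m k' l)⁻¹) * w⁻¹ := by rw [hw]; group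
    rw [e, conj_eq_of_commute hcomm]
    exact mul_mem (mul_mem hwmem hs) (inv_mem hwmem)
  · have hc2 : gen n m k' l * w = gen n m k l := by
      rw [hw, ← mul_assoc]
      exact conj_eq_of_commute (gen_commute (Ne.symm hkk') l l)
    have e : (gen n m k l)⁻¹ * s * gen n m k l =
        w⁻¹ * ((gen n m k' l)⁻¹ * s * gen n m k' l) * w := by rw [← hc2]; group
    rw [e, conj_eq_of_commute' hcomm]
    exact mul_mem (mul_mem (inv_mem hwmem) hs) hwmem

lemma mem_cBB (hz : (z : ℕ) = 0) {i l : Fin m} (hi : (i : ℕ) < r) (hl : (l : ℕ) < r)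
    {j : Fin n} (hj : 1 ≤ (j : ℕ)) :
    ⁅gen n m j i, gen n m j l⁆ ∈ closure (Sset n m r z) := by
  have hzj : z ≠ j := Ne.symm (ne_z_of_one_le z hz hj)
  rw [comm_decomp (gen n m z i) (gen n m z l) (gen n m j i) (gen n m j l)]
  refine mul_mem (mul_mem (mul_mem (mul_mem ?_ ?_) ?_) ?_) ?_
  · exact inv_mem (mem_u z hi hj)
  · rw [conj_aux _ _ _ (gen_commute hzj i l)]
    exact inv_mem (mul_mem (mem_c z hi hl) (mem_u z hl hj))
  · exact mem_c z hi hl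
  · rw [conj_aux _ _ _ (gen_commute hzj l i)]
    exact mul_mem (mem_c z hl hi) (mem_u z hi hj)
  · exact mem_u z hl hj

def other (hn : 2 ≤ n) (k : Fin n) : Fin n :=
  ⟨if (k : ℕ) = 0 then 1 else 0, by split <;> omega⟩

lemma other_ne (hn : 2 ≤ n) (k : Fin n) : other hn k ≠ k := by
  intro he
  have h2 : (if (k : ℕ) = 0 then 1 else 0 : ℕ) = (k : ℕ) := congrArg Fin.val he
  split at h2 <;> omega

lemma mem_cBB' (hn : 2 ≤ n) (hz : (z : ℕ) = 0) {i l : Fin m} (hi : (i : ℕ) < r)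
    (hl : (l : ℕ) < r) {j : Fin n} (hj : 1 ≤ (j : ℕ)) :
    ⁅gen n m j i, (gen n m j l)⁻¹⁆ ∈ closure (Sset n m r z) := by
  rw [comm_inv_right]
  refine (key0 z hl hz (Ne.symm (other_ne hn j)) (inv_mem (mem_cBB z hz hi hl hj)) ?_).2
  refine commute_gen l ?_
  rw [Pi.inv_apply, comm_apply_one _ (gen_apply_ne (other_ne hn j) i)
    (gen_apply_ne (other_ne hn j) l), inv_one]

lemma conj_S (hn : 2 ≤ n) (hz : (z : ℕ) = 0) (k : Fin n) (l : Fin m) (hl : (l : ℕ) < r)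
    {s : Gp n m} (hs : s ∈ Sset n m r z) :
    gen n m k l * s * (gen n m k l)⁻¹ ∈ closure (Sset n m r z) ∧
      (gen n m k l)⁻¹ * s * gen n m k l ∈ closure (Sset n m r z) := by
  rcases hs with (⟨i, j, hi, hj, rfl⟩ | ⟨i, j, hi, rfl⟩) | ⟨i, i', hii', hi', rfl⟩
  · -- S₁
    have hjz : j ≠ z := ne_z_of_one_le z hz hj
    by_cases hk : k = z
    · rw [hk]
      constructor
      · rw [conj_aux _ _ _ (gen_commute (Ne.symm hjz) l i)]
        exact mul_mem (mem_c z hl hi) (mem_u z hi hj)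
      · rw [conj_aux_inv _ _ _ (gen_commute (Ne.symm hjz) l i)]
        refine mul_mem ?_ (mem_u z hi hj)
        rw [comm_inv_left]
        exact (key0 z hl hz (Ne.symm (other_ne hn z))
          (inv_mem (mem_c z hl hi))
          (commute_gen l (by
            rw [Pi.inv_apply, comm_apply_one _ (gen_apply_ne (other_ne hn z) l)
              (gen_apply_ne (other_ne hn z) i), inv_one]))).2
    · by_cases hk2 : k = j
      · subst hk2
        constructor
        · rw [conj_aux2 _ _ _ (gen_commute hjz l i)]
          exact mul_mem (mem_u z hi hj) (mem_cBB z hz hi hl hj)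
        · rw [conj_aux2_inv _ _ _ (gen_commute hjz l i)]
          exact mul_mem (mem_u z hi hj) (mem_cBB' z hn hz hi hl hj)
      · have hcomm : Commute (gen n m k l) (gen n m z i * (gen n m j i)⁻¹) :=
          commute_gen l (by
            rw [Pi.mul_apply, Pi.inv_apply, gen_apply_ne hk, gen_apply_ne hk2, inv_one,
              mul_one])
        exact ⟨by rw [conj_eq_of_commute hcomm]; exact mem_u z hi hj,
          by rw [conj_eq_of_commute' hcomm]; exact mem_u z hi hj⟩
  · -- S₂
    by_cases hk : k = j
    · subst hk
      exact key0 z hl hz (Ne.symm (other_ne hn k)) (mem_s2 z k hi)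
        (commute_gen l (gen_apply_ne (other_ne hn k) i))
    · have hcomm : Commute (gen n m k l) (gen n m j i) := gen_commute hk l i
      exact ⟨by rw [conj_eq_of_commute hcomm]; exact mem_s2 z j hi,
        by rw [conj_eq_of_commute' hcomm]; exact mem_s2 z j hi⟩
  · -- S₃
    have hmem : ⁅gen n m z i, gen n m z i'⁆ ∈ closure (Sset n m r z) :=
      mem_c z (lt_trans hii' hi') hi'
    by_cases hk : k = z
    · rw [hk]
      exact key0 z hl hz (Ne.symm (other_ne hn z)) hmem
        (commute_gen l (comm_apply_one _ (gen_apply_ne (other_ne hn z) i)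
          (gen_apply_ne (other_ne hn z) i')))
    · have hcomm : Commute (gen n m k l) ⁅gen n m z i, gen n m z i'⁆ :=
        commute_gen l (comm_apply_one _ (gen_apply_ne hk i) (gen_apply_ne hk i'))
      exact ⟨by rw [conj_eq_of_commute hcomm]; exact hmem,
        by rw [conj_eq_of_commute' hcomm]; exact hmem⟩

lemma mulSingle_mem_gen_closure (k : Fin n) (w : FreeGroup (Fin m)) :
    Pi.mulSingle k w ∈ Subgroup.closure {x : Gp n m | ∃ k l, x = gen n m k l} := by
  induction w using FreeGroup.induction_on with
  | C1 => rw [Pi.mulSingle_one]; exact one_mem _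
  | of l => exact subset_closure ⟨k, l, rfl⟩
  | inv_of l _ =>
      rw [Pi.mulSingle_inv]
      exact inv_mem (subset_closure ⟨k, l, rfl⟩)
  | mul a b ha hb =>
      rw [Pi.mulSingle_mul]
      exact mul_mem ha hb

lemma gen_top : Subgroup.closure {x : Gp n m | ∃ k l, x = gen n m k l} = ⊤ := by
  rw [eq_top_iff']
  intro x
  have main : ∀ s : Finset (Fin n), ∀ y : Gp n m, (∀ k, k ∉ s → y k = 1) →
      y ∈ Subgroup.closure {x : Gp n m | ∃ k l, x = gen n m k l} := by
    intro s
    induction s using Finset.induction_on with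
    | empty =>
        intro y hy
        have hy1 : y = 1 := funext fun k => hy k (Finset.notMem_empty k)
        rw [hy1]; exact one_mem _
    | @insert k s hk ih =>
        intro y hy
        have hdec : y = Pi.mulSingle k (y k) * Function.update y k 1 := by
          funext i
          by_cases h : i = k
          · subst h; simp
          · simp [Pi.mulSingle_eq_of_ne h, Function.update_of_ne h]
        rw [hdec]
        refine mul_mem (mulSingle_mem_gen_closure k _) (ih _ ?_)
        intro i hi
        by_cases h : i = k
        · subst h; simp
        · rw [Function.update_of_ne h]
          exact hy i (by simp [Finset.mem_insert, h, hi])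
  exact main Finset.univ x (fun k hk => absurd (Finset.mem_univ k) hk)

lemma H_normal (hn : 2 ≤ n) (hz : (z : ℕ) = 0) : (closure (Sset n m r z)).Normal := by
  rw [← Subgroup.normalizer_eq_top_iff, eq_top_iff, ← gen_top]
  refine (Subgroup.closure_le _).mpr ?_
  rintro x ⟨k, l, rfl⟩
  by_cases hl : (l : ℕ) < r
  · exact normalizer_aux (fun s hs => (conj_S z hn hz k l hl hs).1)
      (fun s hs => (conj_S z hn hz k l hl hs).2)
  · exact Subgroup.le_normalizer (mem_s2 z k (le_of_not_gt hl))

lemma theta_gen (k : Fin n) (l : Fin m) : thetaHom n m r (gen n m k l) = tvec m r l := by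
  have e : thetaHom n m r (gen n m k l) = ∏ i, facHom m r (gen n m k l i) := rfl
  rw [e, Fintype.prod_eq_single k (fun i hi => by rw [gen_apply_ne hi, map_one]),
    gen_apply_eq]
  exact FreeGroup.lift_apply_of

lemma tvec_eq_one {l : Fin m} (hl : r ≤ (l : ℕ)) : tvec m r l = 1 := by
  unfold tvec
  rw [dif_neg (not_lt.mpr hl)]
  rfl

lemma S_sub_ker (hz : (z : ℕ) = 0) : Sset n m r z ⊆ ↑(Kgrp n m r) := by
  rintro x ((⟨i, j, hi, hj, rfl⟩ | ⟨i, j, hi, rfl⟩) | ⟨i, j, hij, hj, rfl⟩)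
  · show _ ∈ (thetaHom n m r).ker
    rw [MonoidHom.mem_ker, map_mul, map_inv, theta_gen, theta_gen, mul_inv_cancel]
  · show _ ∈ (thetaHom n m r).ker
    rw [MonoidHom.mem_ker, theta_gen, tvec_eq_one hi]
  · show _ ∈ (thetaHom n m r).ker
    rw [MonoidHom.mem_ker, map_commutatorElement]
    exact commutatorElement_eq_one_iff_commute.mpr (Commute.all _ _)

theorem main (n m r : ℕ) (hn : 2 ≤ n) (hr : r ≤ m) (z : Fin n) (hz : (z : ℕ) = 0) :
    Subgroup.closure (Sset n m r z) = Kgrp n m r := by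
  haveI hN : (Subgroup.closure (Sset n m r z)).Normal := H_normal z hn hz
  apply le_antisymm
  · exact (Subgroup.closure_le _).mpr (S_sub_ker z hz)
  · intro x hx
    set H := Subgroup.closure (Sset n m r z) with hH
    let mk : Gp n m →* Gp n m ⧸ H := QuotientGroup.mk' H
    have hacomm : ∀ v w : Fin r,
        Commute (mk (gen n m z (Fin.castLE hr v))) (mk (gen n m z (Fin.castLE hr w))) := by
      intro v w
      rw [← commutatorElement_eq_one_iff_commute, ← map_commutatorElement]
      show (↑(⁅gen n m z (Fin.castLE hr v), gen n m z (Fin.castLE hr w)⁆) : Gp n m ⧸ H) = 1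
      rw [QuotientGroup.eq_one_iff]
      exact mem_c z (by rw [Fin.coe_castLE]; exact v.isLt)
        (by rw [Fin.coe_castLE]; exact w.isLt)
    let aQ : Fin r → Gp n m ⧸ H := fun v => mk (gen n m z (Fin.castLE hr v))
    have hpair : Pairwise fun v w : Fin r => ∀ x y : Multiplicative ℤ,
        Commute ((zpowersHom _ (aQ v)) x) ((zpowersHom _ (aQ w)) y) := by
      intro v w _ x y
      simp only [zpowersHom_apply]
      exact (hacomm v w).zpow_zpow _ _
    let φ' : (∀ _ : Fin r, Multiplicative ℤ) →* Gp n m ⧸ H :=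
      MonoidHom.noncommPiCoprod (fun v => zpowersHom _ (aQ v)) hpair
    let φ : Multiplicative (Fin r → ℤ) →* Gp n m ⧸ H :=
      φ'.comp (MulEquiv.funMultiplicative (Fin r) ℤ).toMonoidHom
    have hgen : ∀ (k : Fin n) (l : Fin m),
        φ (thetaHom n m r (gen n m k l)) = mk (gen n m k l) := by
      intro k l
      rw [theta_gen]
      by_cases hl : (l : ℕ) < r
      · have e1 : tvec m r l = Multiplicative.ofAdd (Pi.single (⟨l, hl⟩ : Fin r) (1 : ℤ)) := by
          unfold tvec; rw [dif_pos hl]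
        rw [e1]
        have hsing : (fun j : Fin r => Multiplicative.ofAdd
              ((Pi.single (⟨l, hl⟩ : Fin r) (1 : ℤ) : Fin r → ℤ) j)) =
            (Pi.mulSingle (⟨l, hl⟩ : Fin r) (Multiplicative.ofAdd (1 : ℤ)) :
              Fin r → Multiplicative ℤ) := by
          funext j
          by_cases h : j = ⟨l, hl⟩
          · subst h; rw [Pi.single_eq_same, Pi.mulSingle_eq_same]
          · rw [Pi.single_eq_of_ne h, Pi.mulSingle_eq_of_ne h]; rfl
        have e2 : φ (Multiplicative.ofAdd (Pi.single (⟨l, hl⟩ : Fin r) (1 : ℤ))) =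
            aQ ⟨l, hl⟩ := by
          calc φ (Multiplicative.ofAdd (Pi.single (⟨l, hl⟩ : Fin r) (1 : ℤ)))
              = φ' (Pi.mulSingle (⟨l, hl⟩ : Fin r) (Multiplicative.ofAdd (1 : ℤ))) := by
                have hh : φ (Multiplicative.ofAdd (Pi.single (⟨l, hl⟩ : Fin r) (1 : ℤ))) =
                    φ' (fun j : Fin r => Multiplicative.ofAdd
                      ((Pi.single (⟨l, hl⟩ : Fin r) (1 : ℤ) : Fin r → ℤ) j)) := rfl
                rw [hh, hsing]
            _ = zpowersHom _ (aQ ⟨l, hl⟩) (Multiplicative.ofAdd (1 : ℤ)) := by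
                show MonoidHom.noncommPiCoprod (fun v => zpowersHom _ (aQ v)) hpair
                  (Pi.mulSingle (⟨l, hl⟩ : Fin r) (Multiplicative.ofAdd (1 : ℤ))) = _
                exact MonoidHom.noncommPiCoprod_mulSingle _ _ _
            _ = aQ ⟨l, hl⟩ := by rw [zpowersHom_apply, toAdd_ofAdd, zpow_one]
        rw [e2]
        show mk (gen n m z (Fin.castLE hr ⟨l, hl⟩)) = mk (gen n m k l)
        have hcast : Fin.castLE hr (⟨l, hl⟩ : Fin r) = l := by
          apply Fin.ext; simp
        rw [hcast]
        show (↑(gen n m z l) : Gp n m ⧸ H) = ↑(gen n m k l)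
        rw [QuotientGroup.eq]
        by_cases hk : k = z
        · rw [hk, inv_mul_cancel]; exact one_mem _
        · have e3 : (gen n m z l)⁻¹ * gen n m k l = gen n m k l * (gen n m z l)⁻¹ :=
            ((gen_commute (fun he => hk he.symm) l l).inv_left).eq
          rw [e3]
          exact mem_w z hl hz hk
      · rw [tvec_eq_one (le_of_not_gt hl), map_one]
        show (1 : Gp n m ⧸ H) = ↑(gen n m k l)
        exact ((QuotientGroup.eq_one_iff _).mpr (mem_s2 z k (le_of_not_gt hl))).symm
    have hall : ∀ y : Gp n m, φ (thetaHom n m r y) = mk y := by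
      intro y
      have hy : y ∈ Subgroup.closure {x : Gp n m | ∃ k l, x = gen n m k l} := by
        rw [gen_top]; trivial
      induction hy using Subgroup.closure_induction with
      | mem g hg => obtain ⟨k, l, rfl⟩ := hg; exact hgen k l
      | one => simp
      | mul a b _ _ ha hb => rw [map_mul, map_mul, map_mul, ha, hb]
      | inv a _ ha => rw [map_inv, map_inv, map_inv, ha]
    have h1 := hall x
    have hx1 : thetaHom n m r x = 1 := hx
    rw [hx1, map_one] at h1
    exact (QuotientGroup.eq_one_iff x).mp h1.symm

end Main

end KgrpAux

/-- If `n ≥ 2`, `m ≥ 1` and `r ≤ m` then `K^n_m(r)` is generated by `S₁ ∪ S₂ ∪ S₃`, where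
`S₁ = {e^(1)_i (e^(j)_i)⁻¹ : 1 ≤ i ≤ r, 2 ≤ j ≤ n}`,
`S₂ = {e^(j)_i : r+1 ≤ i ≤ m, 1 ≤ j ≤ n}` and
`S₃ = {[e^(1)_i, e^(1)_j] : 1 ≤ i < j ≤ r}`. -/
theorem Kgrp_generated (n m r : ℕ) (hn : 2 ≤ n) (hm : 1 ≤ m) (hr : r ≤ m) :
    Subgroup.closure
      ({x | ∃ (i : Fin m) (j : Fin n), (i : ℕ) < r ∧ 1 ≤ (j : ℕ) ∧
          x = gen n m ⟨0, by omega⟩ i * (gen n m j i)⁻¹} ∪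
       {x | ∃ (i : Fin m) (j : Fin n), r ≤ (i : ℕ) ∧ x = gen n m j i} ∪
       {x | ∃ (i j : Fin m), (i : ℕ) < (j : ℕ) ∧ (j : ℕ) < r ∧
          x = ⁅gen n m ⟨0, by omega⟩ i, gen n m ⟨0, by omega⟩ j⁆}) = Kgrp n m r := by
  exact KgrpAux.main n m r hn hr ⟨0, by omega⟩ rfl
end

section
/- Let n ≥ 2 and m ≥ 1. Let M ≤ K^n_m(m) be the image of K^{n-1}_m(m) under the inclusion of the first n−1 factors into F^(1)_m × … × F^(n)_m, and let F̂ ≤ F^(n-1)_m × F^(n)_m ≤ F^(1)_m × … × F^(n)_m be the subgroup generated by the m elements e^(n-1)_1 (e^(n)_1)^{-1}, …, e^(n-1)_m (e^(n)_m)^{-1}. Then K^n_m(m) is the internal semidirect product M ⋊ F̂: that is, M is a normal subgroup of K^n_m(m), F̂ ≤ K^n_m(m), M ∩ F̂ = {1}, M·F̂ = K^n_m(m); moreover F̂ is a free group of rank m on the listed generators. -/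
/-- The inclusion of `F_m^(1) × ⋯ × F_m^(n-1)` as the first `n-1` factors of
`F_m^(1) × ⋯ × F_m^(n)`. -/
def inclFirst (n m : ℕ) :
    (∀ _ : Fin (n - 1), FreeGroup (Fin m)) →* (∀ _ : Fin n, FreeGroup (Fin m)) where
  toFun g := fun i => if h : (i : ℕ) < n - 1 then g ⟨i, h⟩ else 1
  map_one' := by funext i; by_cases h : (i : ℕ) < n - 1 <;> simp [h]
  map_mul' a b := by funext i; by_cases h : (i : ℕ) < n - 1 <;> simp [h]

/-- The generator `e^(n-1)_j (e^(n)_j)⁻¹` of the subgroup `F̂ ≤ F_m^(n-1) × F_m^(n)`. -/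
def ghat (n m : ℕ) (hn : 2 ≤ n) (j : Fin m) : ∀ _ : Fin n, FreeGroup (Fin m) :=
  Pi.mulSingle (⟨n - 2, by omega⟩ : Fin n) (FreeGroup.of j) *
    (Pi.mulSingle (⟨n - 1, by omega⟩ : Fin n) (FreeGroup.of j))⁻¹

section KgrpAux

/-- The automorphism of the free group inverting each generator. -/
def invGen (m : ℕ) : FreeGroup (Fin m) →* FreeGroup (Fin m) :=
  FreeGroup.lift (fun j => (FreeGroup.of j)⁻¹)

lemma invGen_invGen (m : ℕ) (x : FreeGroup (Fin m)) : invGen m (invGen m x) = x := by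
  have h : (invGen m).comp (invGen m) = MonoidHom.id _ := by
    apply FreeGroup.ext_hom
    intro a
    simp [invGen]
  exact DFunLike.congr_fun h x

lemma thetaHom_apply (n m r : ℕ) (g : ∀ _ : Fin n, FreeGroup (Fin m)) :
    thetaHom n m r g = ∏ i, facHom m r (g i) := rfl

lemma mem_Kgrp (n m r : ℕ) (g : ∀ _ : Fin n, FreeGroup (Fin m)) :
    g ∈ Kgrp n m r ↔ thetaHom n m r g = 1 := Iff.rfl

lemma theta_mulSingle (n m r : ℕ) (a : Fin n) (x : FreeGroup (Fin m)) :
    thetaHom n m r (Pi.mulSingle a x) = facHom m r x := by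
  rw [thetaHom_apply, Fintype.prod_eq_single a]
  · simp
  · intro i hi
    rw [Pi.mulSingle_eq_of_ne hi, map_one]

lemma theta_ghat (n m : ℕ) (hn : 2 ≤ n) (j : Fin m) :
    thetaHom n m m (ghat n m hn j) = 1 := by
  rw [ghat, map_mul, map_inv, theta_mulSingle, theta_mulSingle, mul_inv_cancel]

lemma inclFirst_apply (n m : ℕ) (g : ∀ _ : Fin (n - 1), FreeGroup (Fin m)) (i : Fin n) :
    inclFirst n m g i = if h : (i : ℕ) < n - 1 then g ⟨i, h⟩ else 1 := rfl

lemma theta_incl (l m : ℕ) (g : ∀ _ : Fin (l + 1), FreeGroup (Fin m)) :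
    thetaHom (l + 2) m m (inclFirst (l + 2) m g) = thetaHom (l + 1) m m g := by
  rw [thetaHom_apply, thetaHom_apply, Fin.prod_univ_castSucc]
  have h1 : inclFirst (l + 2) m g (Fin.last (l + 1)) = 1 := by
    rw [inclFirst_apply, dif_neg (by simp)]
  rw [h1, map_one, mul_one]
  refine Finset.prod_congr rfl fun i _ => ?_
  rw [inclFirst_apply, dif_pos (by simpa [show l + 2 - 1 = l + 1 from rfl] using i.isLt)]
  exact congrArg (fun z => facHom m m (g z)) (Fin.ext (by simp))

lemma mem_M_iff (l m : ℕ) (x : ∀ _ : Fin (l + 2), FreeGroup (Fin m)) :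
    x ∈ Subgroup.map (inclFirst (l + 2) m) (Kgrp (l + 1) m m) ↔
      x ∈ Kgrp (l + 2) m m ∧ x (Fin.last (l + 1)) = 1 := by
  constructor
  · rintro ⟨g, hg, rfl⟩
    refine ⟨?_, ?_⟩
    · rw [mem_Kgrp, theta_incl]
      exact hg
    · rw [inclFirst_apply, dif_neg (by simp)]
  · rintro ⟨hx, hlast⟩
    refine ⟨fun i => x (Fin.castSucc i), ?_, ?_⟩
    · show thetaHom (l + 1) m m (fun i : Fin (l + 1) => x (Fin.castSucc i)) = 1
      have key : thetaHom (l + 2) m m x =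
          thetaHom (l + 1) m m (fun i : Fin (l + 1) => x (Fin.castSucc i)) := by
        rw [thetaHom_apply (l + 2), Fin.prod_univ_castSucc, hlast, map_one, mul_one,
          thetaHom_apply]
      exact key.symm.trans hx
    · funext i
      rw [inclFirst_apply]
      by_cases h : (i : ℕ) < l + 2 - 1
      · rw [dif_pos h]
        exact congrArg x (Fin.ext rfl)
      · rw [dif_neg h]
        have hi := i.isLt
        have : i = Fin.last (l + 1) := Fin.ext (by simp only [Fin.val_last]; omega)
        rw [this, hlast]

lemma ghat_apply_last (l m : ℕ) (hn : 2 ≤ l + 2) (j : Fin m) :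
    ghat (l + 2) m hn j (Fin.last (l + 1)) = (FreeGroup.of j)⁻¹ := by
  have h1 : Fin.last (l + 1) ≠ (⟨l + 2 - 2, by omega⟩ : Fin (l + 2)) :=
    fun h => absurd (congrArg Fin.val h) (show ¬(l + 1 = l) by omega)
  have h2 : Fin.last (l + 1) = (⟨l + 2 - 1, by omega⟩ : Fin (l + 2)) := Fin.ext rfl
  rw [ghat, Pi.mul_apply, Pi.inv_apply, Pi.mulSingle_apply, Pi.mulSingle_apply,
    if_neg h1, if_pos h2, one_mul]

lemma ghat_apply_pen (l m : ℕ) (hn : 2 ≤ l + 2) (j : Fin m) :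
    ghat (l + 2) m hn j (⟨l, by omega⟩ : Fin (l + 2)) = FreeGroup.of j := by
  have h1 : (⟨l, by omega⟩ : Fin (l + 2)) = ⟨l + 2 - 2, by omega⟩ := Fin.ext rfl
  have h2 : (⟨l, by omega⟩ : Fin (l + 2)) ≠ ⟨l + 2 - 1, by omega⟩ :=
    fun h => absurd (congrArg Fin.val h) (show ¬(l = l + 1) by omega)
  rw [ghat, Pi.mul_apply, Pi.inv_apply, Pi.mulSingle_apply, Pi.mulSingle_apply,
    if_pos h1, if_neg h2, inv_one, mul_one]

lemma lift_ghat_last (l m : ℕ) (hn : 2 ≤ l + 2) (w : FreeGroup (Fin m)) :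
    FreeGroup.lift (ghat (l + 2) m hn) w (Fin.last (l + 1)) = invGen m w := by
  have h : (Pi.evalMonoidHom (fun _ : Fin (l + 2) => FreeGroup (Fin m))
        (Fin.last (l + 1))).comp (FreeGroup.lift (ghat (l + 2) m hn)) = invGen m := by
    apply FreeGroup.ext_hom
    intro a
    simp only [MonoidHom.comp_apply, FreeGroup.lift_apply_of, Pi.evalMonoidHom_apply, invGen]
    rw [ghat_apply_last]
  exact DFunLike.congr_fun h w

lemma lift_ghat_pen (l m : ℕ) (hn : 2 ≤ l + 2) (w : FreeGroup (Fin m)) :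
    FreeGroup.lift (ghat (l + 2) m hn) w (⟨l, by omega⟩ : Fin (l + 2)) = w := by
  have h : (Pi.evalMonoidHom (fun _ : Fin (l + 2) => FreeGroup (Fin m))
        (⟨l, by omega⟩ : Fin (l + 2))).comp (FreeGroup.lift (ghat (l + 2) m hn)) =
      MonoidHom.id _ := by
    apply FreeGroup.ext_hom
    intro a
    simp only [MonoidHom.comp_apply, FreeGroup.lift_apply_of, Pi.evalMonoidHom_apply,
      MonoidHom.id_apply]
    rw [ghat_apply_pen]
  exact DFunLike.congr_fun h w

end KgrpAux

/-- For `n ≥ 2` and `m ≥ 1`, let `M` be the image of `K^{n-1}_m(m)` under the inclusion of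
the first `n-1` factors, and let `F̂` be the subgroup generated by
`e^(n-1)_1 (e^(n)_1)⁻¹, …, e^(n-1)_m (e^(n)_m)⁻¹`.  Then `K^n_m(m)` is the internal
semidirect product `M ⋊ F̂`: both are contained in `K^n_m(m)`, `M` is normal in `K^n_m(m)`,
`M ∩ F̂ = 1` and `M·F̂ = K^n_m(m)`; moreover `F̂` is free of rank `m` on the listed
generators. -/
theorem Kgrp_internal_semidirect_product (n m : ℕ) (hn : 2 ≤ n) (hm : 1 ≤ m) :
    Subgroup.map (inclFirst n m) (Kgrp (n - 1) m m) ≤ Kgrp n m m ∧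
    Subgroup.closure (Set.range (ghat n m hn)) ≤ Kgrp n m m ∧
    (∀ x ∈ Kgrp n m m, ∀ y ∈ Subgroup.map (inclFirst n m) (Kgrp (n - 1) m m),
      x * y * x⁻¹ ∈ Subgroup.map (inclFirst n m) (Kgrp (n - 1) m m)) ∧
    Subgroup.map (inclFirst n m) (Kgrp (n - 1) m m) ⊓
        Subgroup.closure (Set.range (ghat n m hn)) = ⊥ ∧
    (∀ x ∈ Kgrp n m m, ∃ a ∈ Subgroup.map (inclFirst n m) (Kgrp (n - 1) m m),
      ∃ b ∈ Subgroup.closure (Set.range (ghat n m hn)), x = a * b) ∧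
    Function.Injective
      (FreeGroup.lift (ghat n m hn) : FreeGroup (Fin m) →* ∀ _ : Fin n, FreeGroup (Fin m)) := by
  obtain ⟨l, rfl⟩ : ∃ l, n = l + 2 := ⟨n - 2, by omega⟩
  have hMK : Subgroup.map (inclFirst (l + 2) m) (Kgrp (l + 2 - 1) m m) ≤ Kgrp (l + 2) m m := by
    rintro x ⟨g, hg, rfl⟩
    show thetaHom (l + 2) m m (inclFirst (l + 2) m g) = 1
    exact (theta_incl l m g).trans hg
  have hFK : Subgroup.closure (Set.range (ghat (l + 2) m hn)) ≤ Kgrp (l + 2) m m := by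
    rw [Subgroup.closure_le]
    rintro x ⟨j, rfl⟩
    exact theta_ghat (l + 2) m hn j
  refine ⟨hMK, hFK, ?_, ?_, ?_, ?_⟩
  · intro x hx y hy
    obtain ⟨hy1, hy2⟩ := (mem_M_iff l m y).mp hy
    exact (mem_M_iff l m _).mpr ⟨mul_mem (mul_mem hx hy1) (inv_mem hx),
      by simp [Pi.mul_apply, Pi.inv_apply, hy2]⟩
  · rw [eq_bot_iff]
    intro x hx
    obtain ⟨hxM, hxF⟩ := Subgroup.mem_inf.mp hx
    rw [← FreeGroup.range_lift_eq_closure] at hxF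
    obtain ⟨w, rfl⟩ := hxF
    have hlast := ((mem_M_iff l m _).mp hxM).2
    have h1 : invGen m w = 1 := by rw [← lift_ghat_last l m hn w]; exact hlast
    have hw : w = 1 := by
      have h2 := invGen_invGen m w
      rw [h1, map_one] at h2
      exact h2.symm
    rw [hw, map_one]
    exact Subgroup.mem_bot.mpr rfl
  · intro x hx
    set w := invGen m (x (Fin.last (l + 1))) with hw
    set b := FreeGroup.lift (ghat (l + 2) m hn) w with hb
    have hbF : b ∈ Subgroup.closure (Set.range (ghat (l + 2) m hn)) := by
      rw [← FreeGroup.range_lift_eq_closure]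
      exact ⟨w, rfl⟩
    have hbK : b ∈ Kgrp (l + 2) m m := hFK hbF
    have hblast : b (Fin.last (l + 1)) = x (Fin.last (l + 1)) := by
      rw [hb, lift_ghat_last, hw, invGen_invGen]
    refine ⟨x * b⁻¹, (mem_M_iff l m _).mpr ⟨mul_mem hx (inv_mem hbK), ?_⟩,
      b, hbF, (inv_mul_cancel_right x b).symm⟩
    simp [Pi.mul_apply, Pi.inv_apply, hblast]
  · intro u v huv
    have h1 := lift_ghat_pen l m hn u
    have h2 := lift_ghat_pen l m hn v
    rw [huv] at h1
    rw [h1] at h2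
    exact h2
end

section
/- Let Γ = G_1 ∗_H G_2 be an amalgamated free product of finitely generated groups, where H is a proper subgroup of both G_1 and G_2. Let ⟨A_i | R_i⟩ be presentations of G_i with A_i finite and with every generator a ∈ A_i representing an element of G_i ∖ H. Let B be a finite generating set of H, for each b ∈ B let u_b be a word in A_1^{±1} and v_b a word in A_2^{±1} each equal to b in Γ, let E = { b u_b^{-1}, b v_b^{-1} : b ∈ B }, and suppose R_1' ⊆ R_1 and R_2' ⊆ R_2 are finite sets such that P = ⟨A_1, A_2, B | R_1', R_2', E⟩ is a presentation of Γ. Let w be a word in A_1^{±1} representing an element h ∈ H, let u be a word in A_1^{±1} representing an element α ∈ G_1 ∖ H, and let v be a word in A_2^{±1} representing an element β ∈ G_2 ∖ H, and suppose [α, h] = 1 and [β, h] = 1 in Γ. Then for every n ≥ 1, Area_P([w, (uv)^n]) ≥ 2n·d_B(1, h), where d_B is the word metric on H with respect to the generating set B. -/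
/-- `AreaLE R g N` says that, in the free group, `g` is a product of `N` conjugates of
elements of `R ∪ R⁻¹`. -/
def AreaLE {X : Type} (R : Set (FreeGroup X)) (g : FreeGroup X) (N : ℕ) : Prop :=
  ∃ x r : Fin N → FreeGroup X, (∀ i, r i ∈ R ∪ R⁻¹) ∧
    g = (List.ofFn (fun i => x i * r i * (x i)⁻¹)).prod

/-- The area of a null-homotopic word over the presentation with relator set `R`: the least
`N` such that the word is freely equal to a product of `N` conjugates of relators. -/
noncomputable def area {X : Type} (R : Set (FreeGroup X)) (g : FreeGroup X) : ℕ :=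
  sInf {N | AreaLE R g N}

/-- The word metric `d_B(1, h)` on a group `H` with respect to the generating family
`βmap : B → H`: the least `L` such that `h` is a product of `L` elements of `B ∪ B⁻¹`. -/
noncomputable def wordDist {B : Type} {H : Type} [Group H] (βmap : B → H) (h : H) : ℕ :=
  sInf {L | ∃ f : Fin L → H,
    (∀ i, ∃ b, f i = βmap b ∨ f i = (βmap b)⁻¹) ∧ (List.ofFn f).prod = h}

open scoped commutatorElement

section AmalgamatedProduct

variable (H : Type) [Group H] (G : Bool → Type) [∀ b, Group (G b)]
  (ι : ∀ b, H →* G b) (A : Bool → Type) (gpres : ∀ b, FreeGroup (A b) →* G b)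
  (B : Type) (βmap : B → H)

/-- The marking of the generators `A false ⊔ A true ⊔ B` of the presentation `P` in the
amalgamated product `Γ = G₁ ∗_H G₂`: a generator `a ∈ A b` is sent to the image in `Γ` of
the element of `G b` it represents, and a generator `b ∈ B` is sent to the image in `Γ` of
the corresponding element of `H`. -/
def muHom : FreeGroup (A false ⊕ A true ⊕ B) →* Monoid.PushoutI ι :=
  FreeGroup.lift (Sum.elim
    (fun a => Monoid.PushoutI.of (φ := ι) false (gpres false (FreeGroup.of a)))
    (Sum.elim
      (fun a => Monoid.PushoutI.of (φ := ι) true (gpres true (FreeGroup.of a)))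
      (fun b => Monoid.PushoutI.base ι (βmap b))))

/-- The relator set `R₁' ∪ R₂' ∪ E` of the presentation
`P = ⟨A false, A true, B | R₁', R₂', E⟩`, where `E = {b (u b)⁻¹, b (v b)⁻¹ : b ∈ B}`, all
viewed as words in the generators `A false ⊔ A true ⊔ B`. -/
def relSet (R₁' : Set (FreeGroup (A false))) (R₂' : Set (FreeGroup (A true)))
    (u : B → FreeGroup (A false)) (v : B → FreeGroup (A true)) :
    Set (FreeGroup (A false ⊕ A true ⊕ B)) :=
  FreeGroup.map Sum.inl '' R₁' ∪
  FreeGroup.map (Sum.inr ∘ Sum.inl) '' R₂' ∪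
  {x | ∃ b : B,
    x = FreeGroup.of (Sum.inr (Sum.inr b)) * (FreeGroup.map Sum.inl (u b))⁻¹ ∨
    x = FreeGroup.of (Sum.inr (Sum.inr b)) * (FreeGroup.map (Sum.inr ∘ Sum.inl) (v b))⁻¹}

end AmalgamatedProduct

namespace ALB

variable {Γ : Type} [Group Γ]
abbrev Vf (Γ : Type) : Type := Γ → Multiplicative ℤ
def actA : Γ →* MulAut (Vf Γ) where
  toFun γ :=
    { toFun := fun F x => F (x * γ)
      invFun := fun F x => F (x * γ⁻¹)
      left_inv := fun F => by funext x; simp [mul_assoc]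
      right_inv := fun F => by funext x; simp [mul_assoc]
      map_mul' := fun F G => rfl }
  map_one' := by ext F x; show F (x * 1) = F x; rw [mul_one]
  map_mul' γ₁ γ₂ := by ext F x; exact congrArg F (mul_assoc x γ₁ γ₂).symm
@[simp] lemma actA_apply (γ : Γ) (F : Vf Γ) (x : Γ) : actA γ F x = F (x * γ) := rfl
@[simp] lemma actA_inv_apply (γ : Γ) (F : Vf Γ) (x : Γ) : (actA γ)⁻¹ F x = F (x * γ⁻¹) := rfl
def jump (f : Γ → ℤ) (g : Γ) : Vf Γ := fun x => Multiplicative.ofAdd (f (x * g) - f x)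
@[simp] lemma toAdd_jump (f : Γ → ℤ) (g x : Γ) :
    Multiplicative.toAdd (jump f g x) = f (x * g) - f x := rfl
lemma jump_one (f : Γ → ℤ) : jump f (1 : Γ) = 1 := by funext x; simp [jump]
def cocycleHom (f : Γ → ℤ) : Γ →* (Vf Γ) ⋊[actA] Γ where
  toFun g := ⟨jump f g, g⟩
  map_one' := SemidirectProduct.ext (by simp [jump_one]) rfl
  map_mul' g₁ g₂ := SemidirectProduct.ext (by
    funext x
    show Multiplicative.ofAdd _ = jump f g₁ x * actA g₁ (jump f g₂) x
    simp only [actA_apply, jump, ← ofAdd_add, mul_assoc]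
    ring_nf) rfl
@[simp] lemma cocycleHom_left (f : Γ → ℤ) (g : Γ) : (cocycleHom f g).left = jump f g := rfl
@[simp] lemma cocycleHom_right (f : Γ → ℤ) (g : Γ) : (cocycleHom f g).right = g := rfl
lemma toAdd_left_mul (p q : (Vf Γ) ⋊[actA] Γ) (x : Γ) :
    Multiplicative.toAdd ((p * q).left x) =
      Multiplicative.toAdd (p.left x) + Multiplicative.toAdd (q.left (x * p.right)) := by simp
lemma toAdd_left_inv (p : (Vf Γ) ⋊[actA] Γ) (x : Γ) :
    Multiplicative.toAdd (p⁻¹.left x) = - Multiplicative.toAdd (p.left (x * p.right⁻¹)) := by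
  have : p⁻¹.left = (actA p.right⁻¹) p.left⁻¹ := by
    show (actA p.right)⁻¹ p.left⁻¹ = _
    rw [← map_inv actA]
  rw [this]; simp
lemma toAdd_left_commutator (p q : (Vf Γ) ⋊[actA] Γ)
    (hc : p.right * q.right = q.right * p.right) (x : Γ) :
    Multiplicative.toAdd ((⁅p, q⁆).left x) =
      Multiplicative.toAdd (p.left x) + Multiplicative.toAdd (q.left (x * p.right))
      - Multiplicative.toAdd (p.left (x * q.right))
      - Multiplicative.toAdd (q.left x) := by
  have hc' : p.right * q.right * p.right⁻¹ = q.right := by rw [hc]; group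
  have h1 : ⁅p, q⁆ = p * q * p⁻¹ * q⁻¹ := rfl
  rw [h1, toAdd_left_mul, toAdd_left_mul, toAdd_left_mul, toAdd_left_inv, toAdd_left_inv]
  simp only [SemidirectProduct.mul_right, SemidirectProduct.inv_right]
  have e1 : x * (p.right * q.right) * p.right⁻¹ = x * q.right := by rw [mul_assoc x, hc']
  have e2 : x * (p.right * q.right * p.right⁻¹) * q.right⁻¹ = x := by rw [hc']; group
  rw [e1, e2]; ring

/-- two cocycles with the same base element: left part of `c_f(g) * (c_{f'}(g))⁻¹`. -/
lemma cocycle_pair (f f' : Γ → ℤ) (g : Γ) :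
    (cocycleHom f g * (cocycleHom f' g)⁻¹).right = 1 ∧
    ∀ x, Multiplicative.toAdd ((cocycleHom f g * (cocycleHom f' g)⁻¹).left x) =
      (f (x * g) - f x) - (f' (x * g) - f' x) := by
  constructor
  · simp
  · intro x
    rw [toAdd_left_mul, toAdd_left_inv]
    simp [mul_assoc]
    ring

lemma conj_bound (C : ℤ) (p q : (Vf Γ) ⋊[actA] Γ) (hq : q.right = 1)
    (hb : ∀ x, |Multiplicative.toAdd (q.left x)| ≤ C) :
    ((p * q * p⁻¹).right = 1) ∧
      ∀ x, |Multiplicative.toAdd ((p * q * p⁻¹).left x)| ≤ C := by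
  constructor
  · simp [hq]
  · intro x
    rw [toAdd_left_mul, toAdd_left_mul, toAdd_left_inv]
    simp only [SemidirectProduct.mul_right, SemidirectProduct.inv_right, hq, mul_one, inv_inv]
    have : x * p.right * p.right⁻¹ = x := by group
    rw [this]
    have h2 : Multiplicative.toAdd (p.left x) + Multiplicative.toAdd (q.left (x * p.right)) +
        -Multiplicative.toAdd (p.left x) = Multiplicative.toAdd (q.left (x * p.right)) := by ring
    rw [h2]
    exact hb _

lemma inv_bound (C : ℤ) (q : (Vf Γ) ⋊[actA] Γ) (hq : q.right = 1)
    (hb : ∀ x, |Multiplicative.toAdd (q.left x)| ≤ C) :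
    (q⁻¹.right = 1) ∧ ∀ x, |Multiplicative.toAdd (q⁻¹.left x)| ≤ C := by
  constructor
  · simp [hq]
  · intro x
    rw [toAdd_left_inv, abs_neg, hq]
    simpa using hb (x * 1⁻¹)

lemma prod_conj_bound (C : ℤ) :
    ∀ (N : ℕ) (f : Fin N → (Vf Γ) ⋊[actA] Γ),
      (∀ i, (f i).right = 1 ∧ ∀ x, |Multiplicative.toAdd ((f i).left x)| ≤ C) →
      ((List.ofFn f).prod.right = 1 ∧
        ∀ x, |Multiplicative.toAdd ((List.ofFn f).prod.left x)| ≤ N * C) := by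
  intro N
  induction N with
  | zero =>
    intro f _
    constructor
    · simp
    · intro x
      simp only [List.ofFn_zero, List.prod_nil]
      show |Multiplicative.toAdd ((1 : Vf Γ) x)| ≤ 0 * C
      simp
  | succ N ih =>
    intro f hf
    rw [List.ofFn_succ, List.prod_cons]
    obtain ⟨hr, hl⟩ := ih (fun i => f i.succ) (fun i => hf i.succ)
    constructor
    · rw [SemidirectProduct.mul_right, (hf 0).1, hr, one_mul]
    · intro x
      rw [toAdd_left_mul]
      calc |Multiplicative.toAdd ((f 0).left x) +
            Multiplicative.toAdd ((List.ofFn fun i => f i.succ).prod.left (x * (f 0).right))|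
          ≤ |Multiplicative.toAdd ((f 0).left x)| +
            |Multiplicative.toAdd ((List.ofFn fun i => f i.succ).prod.left (x * (f 0).right))| :=
            abs_add_le _ _
        _ ≤ C + N * C := add_le_add ((hf 0).2 x) (hl _)
        _ = (N + 1 : ℕ) * C := by push_cast; ring

lemma mul_pow_swap (a b : Γ) : ∀ t : ℕ, (a * b) ^ t * a = a * (b * a) ^ t := by
  intro t
  induction t with
  | zero => simp
  | succ t ih =>
    rw [pow_succ', mul_assoc (a * b), ih, pow_succ']
    simp [mul_assoc]



/-! ### word metric lemmas -/

section WordDist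

variable {B H : Type} [Group H] (βmap : B → H)

lemma wordDist_le_of_list (l : List H)
    (hl : ∀ y ∈ l, ∃ b, y = βmap b ∨ y = (βmap b)⁻¹) {x : H} (hx : l.prod = x) :
    wordDist βmap x ≤ l.length := by
  apply Nat.sInf_le
  refine ⟨l.get, fun i => hl _ (l.get_mem _), ?_⟩
  rw [List.ofFn_get]; exact hx

lemma exists_list_repr (hβ : Subgroup.closure (Set.range βmap) = ⊤) (x : H) :
    ∃ l : List H, (∀ y ∈ l, ∃ b, y = βmap b ∨ y = (βmap b)⁻¹) ∧ l.prod = x := by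
  have hx : x ∈ Subgroup.closure (Set.range βmap) := by rw [hβ]; trivial
  induction hx using Subgroup.closure_induction with
  | mem y hy =>
    obtain ⟨b, rfl⟩ := hy
    exact ⟨[βmap b], by
      intro u hu
      rw [List.mem_singleton] at hu
      exact ⟨b, Or.inl hu⟩, by simp⟩
  | one => exact ⟨[], by simp, by simp⟩
  | mul y z _ _ hy hz =>
    obtain ⟨l₁, h₁, h₁'⟩ := hy
    obtain ⟨l₂, h₂, h₂'⟩ := hz
    refine ⟨l₁ ++ l₂, ?_, by simp [h₁', h₂']⟩
    intro u hu
    rcases List.mem_append.1 hu with hu | hu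
    · exact h₁ u hu
    · exact h₂ u hu
  | inv y _ hy =>
    obtain ⟨l, hmem, hprod⟩ := hy
    refine ⟨(l.map fun u => u⁻¹).reverse, ?_, ?_⟩
    · intro u hu
      rw [List.mem_reverse, List.mem_map] at hu
      obtain ⟨v, hv, rfl⟩ := hu
      obtain ⟨b, hb | hb⟩ := hmem v hv
      · exact ⟨b, Or.inr (by rw [hb])⟩
      · exact ⟨b, Or.inl (by rw [hb, inv_inv])⟩
    · rw [← List.prod_inv_reverse, hprod]

lemma exists_list_repr_length (hβ : Subgroup.closure (Set.range βmap) = ⊤) (x : H) :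
    ∃ l : List H, (∀ y ∈ l, ∃ b, y = βmap b ∨ y = (βmap b)⁻¹) ∧ l.prod = x ∧
      l.length = wordDist βmap x := by
  have hne : {L | ∃ f : Fin L → H,
      (∀ i, ∃ b, f i = βmap b ∨ f i = (βmap b)⁻¹) ∧ (List.ofFn f).prod = x}.Nonempty := by
    obtain ⟨l, hmem, hprod⟩ := exists_list_repr βmap hβ x
    exact ⟨l.length, l.get, fun i => hmem _ (l.get_mem _), by rw [List.ofFn_get]; exact hprod⟩
  obtain ⟨f, hmem, hprod⟩ := Nat.sInf_mem hne
  refine ⟨List.ofFn f, ?_, hprod, by rw [List.length_ofFn]; rfl⟩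
  intro y hy
  rw [List.mem_ofFn] at hy
  obtain ⟨i, rfl⟩ := hy
  exact hmem i

lemma wordDist_one : wordDist βmap (1 : H) = 0 :=
  Nat.le_zero.1 (wordDist_le_of_list βmap [] (by simp) (by simp))

lemma wordDist_gen_mul_le (hβ : Subgroup.closure (Set.range βmap) = ⊤) (x c : H)
    (hc : ∃ b, c = βmap b ∨ c = (βmap b)⁻¹) :
    wordDist βmap (c * x) ≤ wordDist βmap x + 1 := by
  obtain ⟨l, hmem, hprod, hlen⟩ := exists_list_repr_length βmap hβ x
  have := wordDist_le_of_list βmap (c :: l) (by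
    intro y hy
    rcases List.mem_cons.1 hy with rfl | hy
    · exact hc
    · exact hmem y hy) (x := c * x) (by simp [hprod])
  simpa [hlen, Nat.add_comm] using this

lemma wordDist_gen_abs (hβ : Subgroup.closure (Set.range βmap) = ⊤) (x : H) (b : B) :
    |(wordDist βmap ((βmap b)⁻¹ * x) : ℤ) - (wordDist βmap x : ℤ)| ≤ 1 := by
  rw [abs_le]
  constructor
  · have h1 : wordDist βmap x ≤ wordDist βmap ((βmap b)⁻¹ * x) + 1 := by
      have := wordDist_gen_mul_le βmap hβ ((βmap b)⁻¹ * x) (βmap b) ⟨b, Or.inl rfl⟩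
      simpa [mul_assoc] using this
    have := (Int.ofNat_le.2 h1)
    push_cast at this ⊢
    omega
  · have h2 : wordDist βmap ((βmap b)⁻¹ * x) ≤ wordDist βmap x + 1 :=
      wordDist_gen_mul_le βmap hβ x ((βmap b)⁻¹) ⟨b, Or.inr rfl⟩
    have := (Int.ofNat_le.2 h2)
    push_cast at this ⊢
    omega

end WordDist

/-! ### AreaLE lemmas -/

section Area

variable {X : Type} (R : Set (FreeGroup X))

lemma areaLE_of_list (g : FreeGroup X) (l : List (FreeGroup X × FreeGroup X))
    (hmem : ∀ p ∈ l, p.2 ∈ R ∪ R⁻¹)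
    (hprod : g = (l.map fun p => p.1 * p.2 * p.1⁻¹).prod) :
    AreaLE R g l.length := by
  refine ⟨fun i => (l.get i).1, fun i => (l.get i).2, fun i => hmem _ (l.get_mem _), ?_⟩
  rw [hprod]
  congr 1
  conv_lhs => rw [← List.ofFn_get l]
  rw [List.map_ofFn]
  rfl

lemma exists_areaLE {g : FreeGroup X} (hg : g ∈ Subgroup.normalClosure R) :
    ∃ N, AreaLE R g N := by
  have : ∃ l : List (FreeGroup X × FreeGroup X), (∀ p ∈ l, p.2 ∈ R ∪ R⁻¹) ∧
      g = (l.map fun p => p.1 * p.2 * p.1⁻¹).prod := by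
    have hg' : g ∈ Subgroup.closure (Group.conjugatesOfSet R) := hg
    clear hg
    induction hg' using Subgroup.closure_induction with
    | mem y hy =>
      obtain ⟨a, ha, hconj⟩ := Group.mem_conjugatesOfSet_iff.1 hy
      obtain ⟨c, hc⟩ := isConj_iff.1 hconj
      exact ⟨[(c, a)], by simp [ha, Or.inl ha], by simp [hc]⟩
    | one => exact ⟨[], by simp, by simp⟩
    | mul y z _ _ hy hz =>
      obtain ⟨l₁, h₁, h₁'⟩ := hy
      obtain ⟨l₂, h₂, h₂'⟩ := hz
      refine ⟨l₁ ++ l₂, ?_, by simp [h₁', h₂']⟩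
      intro p hp
      rcases List.mem_append.1 hp with hp | hp
      · exact h₁ p hp
      · exact h₂ p hp
    | inv y _ hy =>
      obtain ⟨l, hmem, hprod⟩ := hy
      refine ⟨(l.map fun p => (p.1, p.2⁻¹)).reverse, ?_, ?_⟩
      · intro p hp
        rw [List.mem_reverse, List.mem_map] at hp
        obtain ⟨q, hq, rfl⟩ := hp
        rcases hmem q hq with hq' | hq'
        · exact Or.inr (by simpa using hq')
        · exact Or.inl (by simpa using hq')
      · rw [hprod, List.prod_inv_reverse]
        rw [List.map_reverse, List.map_map, List.map_map]
        congr 2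
        apply List.map_congr_left
        intro p _
        simp [mul_assoc]
  obtain ⟨l, hmem, hprod⟩ := this
  exact ⟨l.length, areaLE_of_list R g l hmem hprod⟩

end Area



open Monoid

section Alt

variable {H : Type} [Group H] {G : Bool → Type} [∀ b, Group (G b)] {ι : ∀ b, H →* G b}

/-- An alternating reduced word has product outside the image of the base group. -/
lemma alt_prod_not_base (hι : ∀ b, Function.Injective (ι b))
    (L : List ((i : Bool) × G i)) (hne : L ≠ [])
    (hch : L.Chain' fun l l' => l.1 ≠ l'.1)
    (hmem : ∀ l ∈ L, l.2 ∉ (ι l.1).range) :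
    (L.map fun l => Monoid.PushoutI.of (φ := ι) l.1 l.2).prod ∉
      (Monoid.PushoutI.base ι).range := by
  intro hbase
  have hne1 : ∀ l ∈ L, l.2 ≠ (1 : G l.1) := by
    intro l hl h1
    exact hmem l hl (h1 ▸ (MonoidHom.range (ι l.1)).one_mem)
  let w : Monoid.CoprodI.Word G := ⟨L, hne1, hch⟩
  have hred : Monoid.PushoutI.Reduced ι w := fun l hl => hmem l hl
  have hkey : Monoid.PushoutI.ofCoprodI (φ := ι) w.prod =
      (L.map fun l => Monoid.PushoutI.of (φ := ι) l.1 l.2).prod := by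
    show Monoid.PushoutI.ofCoprodI (φ := ι)
      (List.prod (L.map fun l => Monoid.CoprodI.of l.2)) = _
    rw [MonoidHom.map_list_prod, List.map_map]
    congr 1
  have := hred.eq_empty_of_mem_range hι (by rw [hkey]; exact hbase)
  apply hne
  have : w.toList = Monoid.CoprodI.Word.empty.toList := by rw [this]
  simpa [Monoid.CoprodI.Word.empty] using this

variable (x : G false) (y : G true)

/-- Alternating list starting with a `true` letter: `[y, x, y, x, ...]` of length `2n`. -/
def altT : ℕ → List ((i : Bool) × G i)
  | 0 => []
  | n + 1 => ⟨true, y⟩ :: ⟨false, x⟩ :: altT n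

/-- Alternating list starting with a `false` letter: `[x, y, x, y, ...]` of length `2n`. -/
def altF : ℕ → List ((i : Bool) × G i)
  | 0 => []
  | n + 1 => ⟨false, x⟩ :: ⟨true, y⟩ :: altF n

lemma altT_head : ∀ n l, l ∈ (altT x y n).head? → l.1 = true := by
  intro n l hl
  cases n with
  | zero => simp [altT] at hl
  | succ n => simp [altT] at hl; rw [← hl]

lemma altF_head : ∀ n l, l ∈ (altF x y n).head? → l.1 = false := by
  intro n l hl
  cases n with
  | zero => simp [altF] at hl
  | succ n => simp [altF] at hl; rw [← hl]

lemma altT_chain (n : ℕ) : (altT x y n).Chain' fun l l' => l.1 ≠ l'.1 := by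
  induction n with
  | zero => simp [altT, List.Chain']
  | succ n ih =>
    refine List.IsChain.cons (List.IsChain.cons ih ?_) (by simp)
    intro l hl
    have := altT_head x y n l hl
    simp [this]

lemma altF_chain (n : ℕ) : (altF x y n).Chain' fun l l' => l.1 ≠ l'.1 := by
  induction n with
  | zero => simp [altF, List.Chain']
  | succ n ih =>
    refine List.IsChain.cons (List.IsChain.cons ih ?_) (by simp)
    intro l hl
    have := altF_head x y n l hl
    simp [this]

lemma altT_mem (n : ℕ) : ∀ l ∈ altT x y n, l = ⟨true, y⟩ ∨ l = ⟨false, x⟩ := by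
  induction n with
  | zero => simp [altT]
  | succ n ih =>
    intro l hl
    rcases hl with _ | ⟨_, hl⟩
    · exact Or.inl rfl
    · rcases hl with _ | ⟨_, hl⟩
      · exact Or.inr rfl
      · exact ih l hl

lemma altF_mem (n : ℕ) : ∀ l ∈ altF x y n, l = ⟨true, y⟩ ∨ l = ⟨false, x⟩ := by
  induction n with
  | zero => simp [altF]
  | succ n ih =>
    intro l hl
    rcases hl with _ | ⟨_, hl⟩
    · exact Or.inr rfl
    · rcases hl with _ | ⟨_, hl⟩
      · exact Or.inl rfl
      · exact ih l hl

lemma altT_prod (n : ℕ) :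
    ((altT x y n).map fun l => Monoid.PushoutI.of (φ := ι) l.1 l.2).prod =
      (Monoid.PushoutI.of (φ := ι) true y * Monoid.PushoutI.of (φ := ι) false x) ^ n := by
  induction n with
  | zero => simp [altT]
  | succ n ih => rw [altT]; simp only [List.map_cons, List.prod_cons, ih, pow_succ']; group

lemma altF_prod (n : ℕ) :
    ((altF x y n).map fun l => Monoid.PushoutI.of (φ := ι) l.1 l.2).prod =
      (Monoid.PushoutI.of (φ := ι) false x * Monoid.PushoutI.of (φ := ι) true y) ^ n := by
  induction n with
  | zero => simp [altF]
  | succ n ih => rw [altF]; simp only [List.map_cons, List.prod_cons, ih, pow_succ']; group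

variable (hι : ∀ b, Function.Injective (ι b))
  (hx : x ∉ (ι false).range) (hy : y ∉ (ι true).range)

include hι hx hy

lemma notbase_TF (n : ℕ) (hn : 1 ≤ n) :
    (Monoid.PushoutI.of (φ := ι) true y * Monoid.PushoutI.of (φ := ι) false x) ^ n ∉
      (Monoid.PushoutI.base ι).range := by
  rw [← altT_prod]
  apply alt_prod_not_base hι _ _ (altT_chain x y n)
  · intro l hl
    rcases altT_mem x y n l hl with rfl | rfl
    · exact hy
    · exact hx
  · cases n with
    | zero => omega
    | succ n => simp [altT]

lemma notbase_consT (n : ℕ) :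
    Monoid.PushoutI.of (φ := ι) true y *
      (Monoid.PushoutI.of (φ := ι) false x * Monoid.PushoutI.of (φ := ι) true y) ^ n ∉
      (Monoid.PushoutI.base ι).range := by
  have hprod : Monoid.PushoutI.of (φ := ι) true y *
      (Monoid.PushoutI.of (φ := ι) false x * Monoid.PushoutI.of (φ := ι) true y) ^ n =
      (((⟨true, y⟩ : (i : Bool) × G i) :: altF x y n).map
        fun l => Monoid.PushoutI.of (φ := ι) l.1 l.2).prod := by
    simp only [List.map_cons, List.prod_cons, altF_prod]
  rw [hprod]
  apply alt_prod_not_base hι _ (by simp)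
  · refine List.IsChain.cons (altF_chain x y n) ?_
    intro l hl
    have := altF_head x y n l hl
    simp [this]
  · intro l hl
    rcases hl with _ | ⟨_, hl⟩
    · exact hy
    · rcases altF_mem x y n l hl with rfl | rfl
      · exact hy
      · exact hx

lemma notbase_consF (n : ℕ) :
    Monoid.PushoutI.of (φ := ι) false x *
      (Monoid.PushoutI.of (φ := ι) true y * Monoid.PushoutI.of (φ := ι) false x) ^ n ∉
      (Monoid.PushoutI.base ι).range := by
  have hprod : Monoid.PushoutI.of (φ := ι) false x *
      (Monoid.PushoutI.of (φ := ι) true y * Monoid.PushoutI.of (φ := ι) false x) ^ n =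
      (((⟨false, x⟩ : (i : Bool) × G i) :: altT x y n).map
        fun l => Monoid.PushoutI.of (φ := ι) l.1 l.2).prod := by
    simp only [List.map_cons, List.prod_cons, altT_prod]
  rw [hprod]
  apply alt_prod_not_base hι _ (by simp)
  · refine List.IsChain.cons (altT_chain x y n) ?_
    intro l hl
    have := altT_head x y n l hl
    simp [this]
  · intro l hl
    rcases hl with _ | ⟨_, hl⟩
    · exact hx
    · rcases altT_mem x y n l hl with rfl | rfl
      · exact hy
      · exact hx

end Alt


end ALB

section AmalgamatedProduct

variable (H : Type) [Group H] (G : Bool → Type) [∀ b, Group (G b)]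
  (ι : ∀ b, H →* G b) (A : Bool → Type) (gpres : ∀ b, FreeGroup (A b) →* G b)
  (B : Type) (βmap : B → H)

/-- **Theorem (lower bounds for areas in amalgamated products).**
Let `Γ = G₁ ∗_H G₂` (the pushout of injective maps `ι b : H →* G b`, `b : Bool`, with
proper images).  Let `⟨A b | Rel b⟩` be presentations of the `G b` with `A b` finite and
every generator representing an element of `G b ∖ H`; let `βmap : B → H` be a finite
generating set of `H`; for each `b : B` let `u b`, `v b` be words in `A false`, `A true`
equal to `b` in `Γ`; and let `R₁' ⊆ Rel false`, `R₂' ⊆ Rel true` be finite sets such that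
`P = ⟨A false, A true, B | R₁', R₂', E⟩` (with `E = {b (u b)⁻¹, b (v b)⁻¹ : b ∈ B}`) is a
presentation of `Γ`.  If `w` is a word in `A false` representing `h ∈ H`, `uw` a word in
`A false` representing `α ∈ G₁ ∖ H`, `vw` a word in `A true` representing `β ∈ G₂ ∖ H`,
and `[α, h] = [β, h] = 1`, then `Area_P([w, (uv)ⁿ]) ≥ 2n·d_B(1, h)` for all `n ≥ 1`. -/
theorem area_lower_bound_amalgamated_product
    (hιinj : ∀ b, Function.Injective (ι b))
    (hproper : ∀ b, (ι b).range ≠ ⊤)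
    [∀ b, Finite (A b)]
    (hgpres : ∀ b, Function.Surjective (gpres b))
    (Rel : ∀ b, Set (FreeGroup (A b)))
    (hRel : ∀ b, (gpres b).ker = Subgroup.normalClosure (Rel b))
    (hgen : ∀ b, ∀ a : A b, gpres b (FreeGroup.of a) ∉ (ι b).range)
    [Finite B] (hβ : Subgroup.closure (Set.range βmap) = ⊤)
    (u : B → FreeGroup (A false)) (v : B → FreeGroup (A true))
    (hu : ∀ b, Monoid.PushoutI.of (φ := ι) false (gpres false (u b)) =
      Monoid.PushoutI.base ι (βmap b))
    (hv : ∀ b, Monoid.PushoutI.of (φ := ι) true (gpres true (v b)) =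
      Monoid.PushoutI.base ι (βmap b))
    (R₁' : Set (FreeGroup (A false))) (hR₁ : R₁' ⊆ Rel false) (hR₁fin : R₁'.Finite)
    (R₂' : Set (FreeGroup (A true))) (hR₂ : R₂' ⊆ Rel true) (hR₂fin : R₂'.Finite)
    (hsurj : Function.Surjective (muHom H G ι A gpres B βmap))
    (hker : (muHom H G ι A gpres B βmap).ker =
      Subgroup.normalClosure (relSet A B R₁' R₂' u v))
    (w : FreeGroup (A false)) (h : H) (hw : gpres false w = ι false h)
    (uw : FreeGroup (A false)) (α : G false) (huw : gpres false uw = α)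
    (hα : α ∉ (ι false).range)
    (vw : FreeGroup (A true)) (β : G true) (hvw : gpres true vw = β)
    (hβ' : β ∉ (ι true).range)
    (hcomm₁ : ⁅α, ι false h⁆ = 1) (hcomm₂ : ⁅β, ι true h⁆ = 1) :
    ∀ n : ℕ, 1 ≤ n →
      2 * n * wordDist βmap h ≤
        area (relSet A B R₁' R₂' u v)
          ⁅(FreeGroup.map Sum.inl w : FreeGroup (A false ⊕ A true ⊕ B)),
            (FreeGroup.map Sum.inl uw *
              FreeGroup.map (Sum.inr ∘ Sum.inl) vw : FreeGroup (A false ⊕ A true ⊕ B)) ^ n⁆ := by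
  intro n hn
  classical
  set d : ℕ := wordDist βmap h with hd
  set av : Monoid.PushoutI ι := Monoid.PushoutI.of (φ := ι) false α with hav
  set bv : Monoid.PushoutI ι := Monoid.PushoutI.of (φ := ι) true β with hbv
  set zv : Monoid.PushoutI ι := av * bv with hzv
  set hbase : Monoid.PushoutI ι := Monoid.PushoutI.base ι h with hhbase
  have hofbase₁ : ∀ c : H, Monoid.PushoutI.of (φ := ι) false (ι false c) =
      Monoid.PushoutI.base ι c := fun c => Monoid.PushoutI.of_apply_eq_base ι false c
  have hofbase₂ : ∀ c : H, Monoid.PushoutI.of (φ := ι) true (ι true c) =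
      Monoid.PushoutI.base ι c := fun c => Monoid.PushoutI.of_apply_eq_base ι true c
  have hca : av * hbase = hbase * av := by
    have h1 := commutatorElement_eq_one_iff_mul_comm.1 hcomm₁
    rw [hav, hhbase, ← hofbase₁ h, ← map_mul, ← map_mul, h1]
  have hcb : bv * hbase = hbase * bv := by
    have h1 := commutatorElement_eq_one_iff_mul_comm.1 hcomm₂
    rw [hbv, hhbase, ← hofbase₂ h, ← map_mul, ← map_mul, h1]
  have hcz : Commute hbase zv := by
    have hzh : zv * hbase = hbase * zv := by
      rw [hzv, mul_assoc, hcb, ← mul_assoc, hca, mul_assoc]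
    exact hzh.symm
  have hbaseinj : Function.Injective (Monoid.PushoutI.base ι) :=
    Monoid.PushoutI.base_injective hιinj
  have hofinj : ∀ i, Function.Injective (Monoid.PushoutI.of (φ := ι) i) :=
    Monoid.PushoutI.of_injective hιinj
  have hanb : av ∉ (Monoid.PushoutI.base ι).range := by
    rintro ⟨c, hc⟩
    apply hα
    refine ⟨c, ?_⟩
    apply hofinj false
    rw [hofbase₁ c, hc]
  have key1 : ∀ t : ℕ, 1 ≤ t → ∀ c : H, zv ^ t * av ≠ av * Monoid.PushoutI.base ι c := by
    intro t ht c heq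
    have h2 : av⁻¹ * (zv ^ t * av) = Monoid.PushoutI.base ι c := by rw [heq]; group
    have h3 : av⁻¹ * (zv ^ t * av) = (bv * av) ^ t := by
      rw [hzv, ALB.mul_pow_swap av bv t]; group
    exact ALB.notbase_TF α β hιinj hα hβ' t ht ⟨c, by rw [h2.symm.trans h3]⟩
  have key2 : ∀ (t : ℕ) (c : H), zv ^ t ≠ av * Monoid.PushoutI.base ι c := by
    intro t c heq
    cases t with
    | zero =>
      rw [pow_zero] at heq
      exact hanb ⟨c⁻¹, by rw [map_inv]; exact inv_eq_of_mul_eq_one_left heq.symm⟩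
    | succ s =>
      have h2 : av⁻¹ * zv ^ (s + 1) = Monoid.PushoutI.base ι c := by rw [heq]; group
      have h3 : av⁻¹ * zv ^ (s + 1) = bv * (av * bv) ^ s := by
        rw [hzv, pow_succ', mul_assoc av bv, inv_mul_cancel_left]
      exact ALB.notbase_consT α β hιinj hα hβ' s ⟨c, by rw [h2.symm.trans h3]⟩
  have key3 : ∀ (s : ℕ) (c : H), zv ^ s * av ≠ Monoid.PushoutI.base ι c := by
    intro s c heq
    have h3 : zv ^ s * av = av * (bv * av) ^ s := by rw [hzv, ALB.mul_pow_swap av bv s]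
    exact ALB.notbase_consF α β hιinj hα hβ' s ⟨c, by rw [← heq, h3]⟩
  -- uniqueness of coset decompositions
  have U1aux : ∀ (k j : ℕ) (η η' : H), j ≤ k →
      zv ^ k * av * Monoid.PushoutI.base ι η = zv ^ j * av * Monoid.PushoutI.base ι η' →
      k = j ∧ η = η' := by
    intro k j η η' hjk heq
    obtain ⟨t, rfl⟩ : ∃ t, k = j + t := ⟨k - j, by omega⟩
    have h2 : zv ^ t * av * Monoid.PushoutI.base ι η = av * Monoid.PushoutI.base ι η' := by
      apply mul_left_cancel (a := zv ^ j)
      calc zv ^ j * (zv ^ t * av * Monoid.PushoutI.base ι η)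
          = zv ^ (j + t) * av * Monoid.PushoutI.base ι η := by rw [pow_add]; group
        _ = zv ^ j * av * Monoid.PushoutI.base ι η' := heq
        _ = zv ^ j * (av * Monoid.PushoutI.base ι η') := by group
    cases t with
    | zero =>
      rw [pow_zero, one_mul] at h2
      have := hbaseinj (mul_left_cancel h2)
      exact ⟨by omega, this⟩
    | succ s =>
      exfalso
      apply key1 (s + 1) (by omega) (η' * η⁻¹)
      rw [map_mul, map_inv, ← mul_assoc, eq_comm, mul_inv_eq_iff_eq_mul]
      exact h2.symm
  have U1 : ∀ (k j : ℕ) (η η' : H),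
      zv ^ k * av * Monoid.PushoutI.base ι η = zv ^ j * av * Monoid.PushoutI.base ι η' →
      k = j ∧ η = η' := by
    intro k j η η' heq
    rcases le_total j k with hjk | hkj
    · exact U1aux k j η η' hjk heq
    · obtain ⟨h1, h2⟩ := U1aux j k η' η hkj heq.symm
      exact ⟨h1.symm, h2.symm⟩
  have U2 : ∀ (k m : ℕ) (η η' : H),
      zv ^ k * Monoid.PushoutI.base ι η ≠ zv ^ m * av * Monoid.PushoutI.base ι η' := by
    intro k m η η' heq
    rcases le_total m k with hmk | hkm
    · obtain ⟨t, rfl⟩ : ∃ t, k = m + t := ⟨k - m, by omega⟩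
      apply key2 t (η' * η⁻¹)
      apply mul_left_cancel (a := zv ^ m)
      calc zv ^ m * zv ^ t = zv ^ (m + t) := by rw [pow_add]
        _ = zv ^ m * av * Monoid.PushoutI.base ι η' * (Monoid.PushoutI.base ι η)⁻¹ := by
            rw [← heq]; group
        _ = zv ^ m * (av * Monoid.PushoutI.base ι (η' * η⁻¹)) := by
            rw [map_mul, map_inv]; group
    · obtain ⟨s, rfl⟩ : ∃ s, m = k + s := ⟨m - k, by omega⟩
      apply key3 s (η * η'⁻¹)
      apply mul_left_cancel (a := zv ^ k)
      calc zv ^ k * (zv ^ s * av) = zv ^ (k + s) * av := by rw [pow_add]; group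
        _ = zv ^ k * Monoid.PushoutI.base ι η * (Monoid.PushoutI.base ι η')⁻¹ := by
            rw [heq]; group
        _ = zv ^ k * Monoid.PushoutI.base ι (η * η'⁻¹) := by
            rw [map_mul, map_inv]; group
  -- the potential function
  set P : Monoid.PushoutI ι → Prop :=
    fun γ => ∃ p : ℕ × H, γ = zv ^ p.1 * av * Monoid.PushoutI.base ι p.2 with hP
  set g0 : Monoid.PushoutI ι → ℤ := fun γ =>
    if hp : P γ then (d : ℤ) - (wordDist βmap ((hp.choose.2)⁻¹ * h) : ℤ) else 0 with hg0
  have g0_eval : ∀ (k : ℕ) (η : H),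
      g0 (zv ^ k * av * Monoid.PushoutI.base ι η) =
        (d : ℤ) - (wordDist βmap (η⁻¹ * h) : ℤ) := by
    intro k η
    have hp : P (zv ^ k * av * Monoid.PushoutI.base ι η) := ⟨(k, η), rfl⟩
    simp only [hg0]
    rw [dif_pos hp]
    obtain ⟨-, h2⟩ := U1 hp.choose.1 k hp.choose.2 η hp.choose_spec.symm
    rw [h2]
  have g0_zero : ∀ (k : ℕ) (η : H), g0 (zv ^ k * Monoid.PushoutI.base ι η) = 0 := by
    intro k η
    simp only [hg0]
    rw [dif_neg]
    rintro ⟨⟨m, η'⟩, hspec⟩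
    exact U2 k m η η' hspec
  have LIP : ∀ (γ : Monoid.PushoutI ι) (b : B),
      |g0 (γ * Monoid.PushoutI.base ι (βmap b)) - g0 γ| ≤ 1 := by
    intro γ b
    by_cases hp : P γ
    · obtain ⟨⟨k, η⟩, rfl⟩ := hp
      have e1 : zv ^ k * av * Monoid.PushoutI.base ι η * Monoid.PushoutI.base ι (βmap b) =
          zv ^ k * av * Monoid.PushoutI.base ι (η * βmap b) := by
        rw [map_mul, ← mul_assoc]
      rw [e1, g0_eval, g0_eval]
      have e2 : (η * βmap b)⁻¹ * h = (βmap b)⁻¹ * (η⁻¹ * h) := by group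
      rw [e2]
      have habs := ALB.wordDist_gen_abs βmap hβ (η⁻¹ * h) b
      have e3 : (d : ℤ) - (wordDist βmap ((βmap b)⁻¹ * (η⁻¹ * h)) : ℤ) -
          ((d : ℤ) - (wordDist βmap (η⁻¹ * h) : ℤ)) =
          -(((wordDist βmap ((βmap b)⁻¹ * (η⁻¹ * h)) : ℤ)) - (wordDist βmap (η⁻¹ * h) : ℤ)) := by
        ring
      rw [e3, abs_neg]
      exact habs
    · have hp2 : ¬ P (γ * Monoid.PushoutI.base ι (βmap b)) := by
        rintro ⟨⟨m, η'⟩, hspec⟩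
        apply hp
        refine ⟨(m, η' * (βmap b)⁻¹), ?_⟩
        rw [map_mul, map_inv, ← mul_assoc, ← hspec]
        group
      simp only [hg0]
      rw [dif_neg hp2, dif_neg hp]
      simp
  -- the cocycle homomorphism
  set G2 : Monoid.PushoutI ι → ℤ := fun γ => 2 * g0 γ with hG2
  set Φ : FreeGroup (A false ⊕ A true ⊕ B) →* (ALB.Vf (Monoid.PushoutI ι)) ⋊[ALB.actA] Monoid.PushoutI ι :=
    FreeGroup.lift (Sum.elim
      (fun a => ALB.cocycleHom G2
        (Monoid.PushoutI.of (φ := ι) false (gpres false (FreeGroup.of a))))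
      (Sum.elim
        (fun a => ALB.cocycleHom (fun _ => (0 : ℤ))
          (Monoid.PushoutI.of (φ := ι) true (gpres true (FreeGroup.of a))))
        (fun b => ALB.cocycleHom g0 (Monoid.PushoutI.base ι (βmap b))))) with hΦ
  have key_left : ∀ p : FreeGroup (A false),
      Φ (FreeGroup.map Sum.inl p) =
        ALB.cocycleHom G2 (Monoid.PushoutI.of (φ := ι) false (gpres false p)) := by
    have hcomp : Φ.comp (FreeGroup.map Sum.inl) =
        (ALB.cocycleHom G2).comp
          ((Monoid.PushoutI.of (φ := ι) false).comp (gpres false)) := by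
      apply FreeGroup.ext_hom
      intro a
      simp [hΦ]
    intro p
    exact DFunLike.congr_fun hcomp p
  have key_mid : ∀ p : FreeGroup (A true),
      Φ (FreeGroup.map (Sum.inr ∘ Sum.inl) p) =
        ALB.cocycleHom (fun _ => (0 : ℤ))
          (Monoid.PushoutI.of (φ := ι) true (gpres true p)) := by
    have hcomp : Φ.comp (FreeGroup.map (Sum.inr ∘ Sum.inl)) =
        (ALB.cocycleHom (fun _ => (0 : ℤ))).comp
          ((Monoid.PushoutI.of (φ := ι) true).comp (gpres true)) := by
      apply FreeGroup.ext_hom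
      intro a
      simp [hΦ]
    intro p
    exact DFunLike.congr_fun hcomp p
  have ΦB : ∀ b : B, Φ (FreeGroup.of (Sum.inr (Sum.inr b))) =
      ALB.cocycleHom g0 (Monoid.PushoutI.base ι (βmap b)) := by
    intro b
    simp [hΦ]
  have hright : ∀ p, (Φ p).right = muHom H G ι A gpres B βmap p := by
    have hcomp : (SemidirectProduct.rightHom).comp Φ = muHom H G ι A gpres B βmap := by
      apply FreeGroup.ext_hom
      rintro (a | a | b) <;> simp [hΦ, muHom]
    intro p
    exact DFunLike.congr_fun hcomp p
  -- bound on relators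
  have relbound : ∀ r ∈ relSet A B R₁' R₂' u v,
      (Φ r).right = 1 ∧ ∀ x, |Multiplicative.toAdd ((Φ r).left x)| ≤ 1 := by
    rintro r ((⟨r₁, hr₁, rfl⟩ | ⟨r₂, hr₂, rfl⟩) | ⟨b, hb | hb⟩)
    · rw [key_left]
      have hker1 : gpres false r₁ = 1 := by
        have : r₁ ∈ (gpres false).ker := by
          rw [hRel false]
          exact Subgroup.subset_normalClosure (hR₁ hr₁)
        exact this
      rw [hker1, map_one, map_one]
      constructor
      · rfl
      · intro x
        show |Multiplicative.toAdd ((1 : ALB.Vf (Monoid.PushoutI ι)) x)| ≤ 1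
        simp
    · rw [key_mid]
      have hker1 : gpres true r₂ = 1 := by
        have : r₂ ∈ (gpres true).ker := by
          rw [hRel true]
          exact Subgroup.subset_normalClosure (hR₂ hr₂)
        exact this
      rw [hker1, map_one, map_one]
      constructor
      · rfl
      · intro x
        show |Multiplicative.toAdd ((1 : ALB.Vf (Monoid.PushoutI ι)) x)| ≤ 1
        simp
    · subst hb
      rw [map_mul, map_inv, key_left, ΦB, hu b]
      obtain ⟨hr, hl⟩ := ALB.cocycle_pair g0 G2 (Monoid.PushoutI.base ι (βmap b))
      refine ⟨hr, fun x => ?_⟩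
      rw [hl x]
      have e1 : g0 (x * Monoid.PushoutI.base ι (βmap b)) - g0 x -
          (G2 (x * Monoid.PushoutI.base ι (βmap b)) - G2 x) =
          -(g0 (x * Monoid.PushoutI.base ι (βmap b)) - g0 x) := by
        rw [hG2]; ring
      rw [e1, abs_neg]
      exact LIP x b
    · subst hb
      rw [map_mul, map_inv, key_mid, ΦB, hv b]
      obtain ⟨hr, hl⟩ := ALB.cocycle_pair g0 (fun _ => (0 : ℤ)) (Monoid.PushoutI.base ι (βmap b))
      refine ⟨hr, fun x => ?_⟩
      rw [hl x]
      simpa using LIP x b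
  have relbound' : ∀ r ∈ relSet A B R₁' R₂' u v ∪ (relSet A B R₁' R₂' u v)⁻¹,
      (Φ r).right = 1 ∧ ∀ x, |Multiplicative.toAdd ((Φ r).left x)| ≤ 1 := by
    rintro r (hr | hr)
    · exact relbound r hr
    · have h1 : r⁻¹ ∈ relSet A B R₁' R₂' u v := Set.mem_inv.1 hr
      obtain ⟨hr1, hr2⟩ := relbound r⁻¹ h1
      have : Φ r = (Φ r⁻¹)⁻¹ := by rw [← map_inv, inv_inv]
      rw [this]
      exact ALB.inv_bound 1 (Φ r⁻¹) hr1 hr2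
  -- evaluation of the cocycle on the commutator
  have g0a : ∀ k : ℕ, g0 (zv ^ k * av) = 0 := by
    intro k
    have := g0_eval k 1
    rw [map_one, mul_one] at this
    rw [this]
    simp [hd]
  have g0ah : ∀ k : ℕ, g0 (zv ^ k * av * hbase) = (d : ℤ) := by
    intro k
    rw [hhbase, g0_eval k h]
    rw [inv_mul_cancel, ALB.wordDist_one]
    simp
  have g0z : ∀ k : ℕ, g0 (zv ^ k) = 0 := by
    intro k
    have := g0_zero k 1
    rw [map_one, mul_one] at this
    exact this
  have g0zh : ∀ k : ℕ, g0 (zv ^ k * hbase) = 0 := by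
    intro k
    rw [hhbase]
    exact g0_zero k h
  have g0one : g0 1 = 0 := by
    have := g0z 0
    rw [pow_zero] at this
    exact this
  have g0h : g0 hbase = 0 := by
    have := g0zh 0
    rw [pow_zero, one_mul] at this
    exact this
  set W : FreeGroup (A false ⊕ A true ⊕ B) := FreeGroup.map Sum.inl w with hW
  set Zw : FreeGroup (A false ⊕ A true ⊕ B) :=
    FreeGroup.map Sum.inl uw * FreeGroup.map (Sum.inr ∘ Sum.inl) vw with hZw
  have ΦW : Φ W = ALB.cocycleHom G2 hbase := by
    rw [hW, key_left, hw, hofbase₁, hhbase]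
  have ΦZ : Φ Zw = ALB.cocycleHom G2 av * ALB.cocycleHom (fun _ => (0 : ℤ)) bv := by
    rw [hZw, map_mul, key_left, key_mid, huw, hvw, hav, hbv]
  have ΦZright : (Φ Zw).right = zv := by rw [ΦZ]; simp [hzv]
  have ΦZleft : ∀ x, Multiplicative.toAdd ((Φ Zw).left x) = G2 (x * av) - G2 x := by
    intro x
    rw [ΦZ, ALB.toAdd_left_mul]
    simp
  have Qright : ∀ m : ℕ, ((Φ Zw) ^ m).right = zv ^ m := by
    intro m
    induction m with
    | zero => simp
    | succ m ih => rw [pow_succ, pow_succ, SemidirectProduct.mul_right, ih, ΦZright]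
  have Qleft : ∀ (m : ℕ) (x : Monoid.PushoutI ι),
      Multiplicative.toAdd (((Φ Zw) ^ m).left x) =
        ∑ k ∈ Finset.range m, (G2 (x * zv ^ k * av) - G2 (x * zv ^ k)) := by
    intro m
    induction m with
    | zero =>
      intro x
      rw [pow_zero]
      show Multiplicative.toAdd ((1 : ALB.Vf (Monoid.PushoutI ι)) x) = _
      simp
    | succ m ih =>
      intro x
      rw [pow_succ, ALB.toAdd_left_mul, ih, Qright, ΦZleft, Finset.sum_range_succ]
  -- the commutator word and its value
  have hzcommn : hbase * zv ^ n = zv ^ n * hbase := (hcz.pow_right n).eq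
  have hWright : (Φ W).right = hbase := by rw [ΦW]; simp
  have EVAL : Multiplicative.toAdd ((Φ ⁅W, Zw ^ n⁆).left 1) = 2 * (n : ℤ) * (d : ℤ) := by
    rw [map_commutatorElement, map_pow]
    rw [ALB.toAdd_left_commutator _ _ (by rw [hWright, Qright n, hzcommn])]
    rw [hWright, Qright n]
    rw [Qleft, Qleft]
    rw [ΦW]
    simp only [ALB.cocycleHom_left, ALB.toAdd_jump]
    have t1 : G2 (1 * hbase) - G2 1 = 0 := by rw [one_mul, hG2]; simp [g0h, g0one]
    have t2 : G2 (1 * zv ^ n * hbase) - G2 (1 * zv ^ n) = 0 := by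
      rw [one_mul, hG2]; simp [g0zh, g0z]
    have t3 : ∑ k ∈ Finset.range n, (G2 (1 * zv ^ k * av) - G2 (1 * zv ^ k)) = 0 := by
      apply Finset.sum_eq_zero
      intro k _
      rw [one_mul, hG2]
      simp [g0a, g0z]
    have t4 : ∑ k ∈ Finset.range n, (G2 (1 * hbase * zv ^ k * av) - G2 (1 * hbase * zv ^ k)) =
        (n : ℤ) * (2 * (d : ℤ)) := by
      have term : ∀ k ∈ Finset.range n,
          (G2 (1 * hbase * zv ^ k * av) - G2 (1 * hbase * zv ^ k)) = 2 * (d : ℤ) := by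
        intro k _
        have e1 : (1 : Monoid.PushoutI ι) * hbase * zv ^ k * av = zv ^ k * av * hbase := by
          rw [one_mul, (hcz.pow_right k).eq, mul_assoc, ← hca, ← mul_assoc]
        have e2 : (1 : Monoid.PushoutI ι) * hbase * zv ^ k = zv ^ k * hbase := by
          rw [one_mul, (hcz.pow_right k).eq]
        rw [e1, e2]
        simp only [hG2, g0ah, g0zh]
        ring
      rw [Finset.sum_congr rfl term, Finset.sum_const, Finset.card_range, nsmul_eq_mul]
    rw [t1, t2, t3, t4]
    ring
  -- nonemptiness of the area set
  have hword1 : muHom H G ι A gpres B βmap ⁅W, Zw ^ n⁆ = 1 := by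
    rw [← hright]
    rw [map_commutatorElement, map_pow]
    show (⁅Φ W, (Φ Zw) ^ n⁆ : _).right = 1
    have : (⁅Φ W, (Φ Zw) ^ n⁆ : _).right = ⁅(Φ W).right, ((Φ Zw) ^ n).right⁆ := rfl
    rw [this, hWright, Qright n]
    exact commutatorElement_eq_one_iff_mul_comm.2 hzcommn
  have hSnonempty : ∃ N, AreaLE (relSet A B R₁' R₂' u v) ⁅W, Zw ^ n⁆ N := by
    apply ALB.exists_areaLE
    rw [← hker]
    exact hword1
  -- conclusion
  set N : ℕ := area (relSet A B R₁' R₂' u v) ⁅W, Zw ^ n⁆ with hN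
  have hmem : AreaLE (relSet A B R₁' R₂' u v) ⁅W, Zw ^ n⁆ N := Nat.sInf_mem hSnonempty
  obtain ⟨xs, rs, hrs, hprod⟩ := hmem
  have hΦword : Φ ⁅W, Zw ^ n⁆ = (List.ofFn (fun i => Φ (xs i * rs i * (xs i)⁻¹))).prod := by
    rw [hprod, MonoidHom.map_list_prod, List.map_ofFn]
    congr 1
  have hbounds : ∀ i : Fin N, (Φ (xs i * rs i * (xs i)⁻¹)).right = 1 ∧
      ∀ x, |Multiplicative.toAdd ((Φ (xs i * rs i * (xs i)⁻¹)).left x)| ≤ 1 := by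
    intro i
    rw [map_mul, map_mul, map_inv]
    obtain ⟨h1, h2⟩ := relbound' (rs i) (hrs i)
    exact ALB.conj_bound 1 (Φ (xs i)) (Φ (rs i)) h1 h2
  obtain ⟨-, hfinal⟩ := ALB.prod_conj_bound 1 N (fun i => Φ (xs i * rs i * (xs i)⁻¹)) hbounds
  have := hfinal 1
  rw [← hΦword, EVAL] at this
  have h2 : (2 * (n : ℤ) * (d : ℤ)) ≤ (N : ℤ) := by
    have habs : |2 * (n : ℤ) * (d : ℤ)| = 2 * (n : ℤ) * (d : ℤ) := by
      apply abs_of_nonneg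
      positivity
    rw [habs] at this
    simpa using this
  exact_mod_cast h2
end AmalgamatedProduct
end

section
/- Let F_2 × F_2 be the direct product of two free groups of rank 2, with bases x_1, y_1 and x_2, y_2 respectively, and let B = { x_1 x_2^{-1}, y_1 y_2^{-1}, [x_1, y_1] } (where x_1, y_1, x_2, y_2 denote the images in the product and [x,y] = xyx^{-1}y^{-1}). For n ≥ 1 let h_n = [x_1^n, y_1^n] ∈ F_2 × F_2. Then every product of elements of B ∪ B^{-1} which equals h_n has at least n² factors, i.e., d_B(1, h_n) ≥ n²; on the other hand h_n has word length at most 4n with respect to the generating set {x_1, y_1, x_2, y_2} of F_2 × F_2. In particular the subgroup generated by B (which is K^2_2(2)) is at least quadratically distorted in F_2 × F_2. -/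
open scoped commutatorElement

/-- `x_1 = (x, 1)` in `F_2 × F_2`. -/
def x1 : FreeGroup (Fin 2) × FreeGroup (Fin 2) := (FreeGroup.of 0, 1)
/-- `y_1 = (y, 1)` in `F_2 × F_2`. -/
def y1 : FreeGroup (Fin 2) × FreeGroup (Fin 2) := (FreeGroup.of 1, 1)
/-- `x_2 = (1, x)` in `F_2 × F_2`. -/
def x2 : FreeGroup (Fin 2) × FreeGroup (Fin 2) := (1, FreeGroup.of 0)
/-- `y_2 = (1, y)` in `F_2 × F_2`. -/
def y2 : FreeGroup (Fin 2) × FreeGroup (Fin 2) := (1, FreeGroup.of 1)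

/-- The generating set `B = {x_1 x_2⁻¹, y_1 y_2⁻¹, [x_1, y_1]}` of `K^2_2(2)`. -/
def Bset : Set (FreeGroup (Fin 2) × FreeGroup (Fin 2)) :=
  {x1 * x2⁻¹, y1 * y2⁻¹, ⁅x1, y1⁆}

/-- The element `h_n = [x_1^n, y_1^n]` of `F_2 × F_2`. -/
def hElt (n : ℕ) : FreeGroup (Fin 2) × FreeGroup (Fin 2) := ⁅x1 ^ n, y1 ^ n⁆

/-- The discrete Heisenberg group, modelled on `ℤ³`. -/
@[ext] structure Heis where
  x : ℤ
  y : ℤ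
  z : ℤ

instance : Mul Heis := ⟨fun a b => ⟨a.x + b.x, a.y + b.y, a.z + b.z + a.x * b.y⟩⟩
instance : One Heis := ⟨⟨0, 0, 0⟩⟩
instance : Inv Heis := ⟨fun a => ⟨-a.x, -a.y, -a.z + a.x * a.y⟩⟩

@[simp] lemma Heis.mul_x (a b : Heis) : (a * b).x = a.x + b.x := rfl
@[simp] lemma Heis.mul_y (a b : Heis) : (a * b).y = a.y + b.y := rfl
@[simp] lemma Heis.mul_z (a b : Heis) : (a * b).z = a.z + b.z + a.x * b.y := rfl
@[simp] lemma Heis.one_x : (1 : Heis).x = 0 := rfl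
@[simp] lemma Heis.one_y : (1 : Heis).y = 0 := rfl
@[simp] lemma Heis.one_z : (1 : Heis).z = 0 := rfl
@[simp] lemma Heis.inv_x (a : Heis) : (a⁻¹).x = -a.x := rfl
@[simp] lemma Heis.inv_y (a : Heis) : (a⁻¹).y = -a.y := rfl
@[simp] lemma Heis.inv_z (a : Heis) : (a⁻¹).z = -a.z + a.x * a.y := rfl

instance : Group Heis where
  mul_assoc a b c := by ext <;> simp <;> try ring
  one_mul a := by ext <;> simp
  mul_one a := by ext <;> simp
  inv_mul_cancel a := by ext <;> simp <;> try ring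

/-- The map `F_2 → Heis`, `x ↦ (1,0,0)`, `y ↦ (0,1,0)`. -/
def ψ : FreeGroup (Fin 2) →* Heis :=
  FreeGroup.lift ![⟨1, 0, 0⟩, ⟨0, 1, 0⟩]

lemma psi_pow0 (n : ℕ) : ψ (FreeGroup.of 0 ^ n) = ⟨n, 0, 0⟩ := by
  rw [map_pow]
  induction n with
  | zero => ext <;> simp
  | succ k ih => rw [pow_succ, ih]; ext <;> simp [ψ] <;> push_cast <;> try ring

lemma psi_pow1 (n : ℕ) : ψ (FreeGroup.of 1 ^ n) = ⟨0, n, 0⟩ := by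
  rw [map_pow]
  induction n with
  | zero => ext <;> simp
  | succ k ih => rw [pow_succ, ih]; ext <;> simp [ψ] <;> push_cast <;> try ring

/-- `g` is balanced: the `x`- and `y`-coordinates of the two Heisenberg images cancel. -/
def Bal (g : FreeGroup (Fin 2) × FreeGroup (Fin 2)) : Prop :=
  (ψ g.1).x + (ψ g.2).x = 0 ∧ (ψ g.1).y + (ψ g.2).y = 0

/-- The commutator-counting function. -/
def μ (g : FreeGroup (Fin 2) × FreeGroup (Fin 2)) : ℤ :=
  (ψ g.1).z - (ψ g.2).z

lemma Bal.mul {a b} (ha : Bal a) (hb : Bal b) : Bal (a * b) := by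
  obtain ⟨ha1, ha2⟩ := ha; obtain ⟨hb1, hb2⟩ := hb
  constructor <;> simp [Prod.fst_mul, Prod.snd_mul] <;> linarith

lemma mu_mul {a b} (ha : Bal a) (hb : Bal b) : μ (a * b) = μ a + μ b := by
  obtain ⟨ha1, _⟩ := ha; obtain ⟨_, hb2⟩ := hb
  have h1 : (ψ a.2).x = -(ψ a.1).x := by linarith
  have h2 : (ψ b.2).y = -(ψ b.1).y := by linarith
  simp [μ, Prod.fst_mul, Prod.snd_mul, h1, h2]
  ring

lemma bal_one : Bal 1 := by constructor <;> simp

lemma mu_one : μ 1 = 0 := by simp [μ]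

lemma list_prod_bound (l : List (FreeGroup (Fin 2) × FreeGroup (Fin 2)))
    (h : ∀ a ∈ l, Bal a ∧ |μ a| ≤ 1) :
    Bal l.prod ∧ |μ l.prod| ≤ l.length := by
  induction l with
  | nil => simpa using ⟨bal_one, by simp [mu_one]⟩
  | cons a t ih =>
    obtain ⟨ha, hma⟩ := h a (by simp)
    obtain ⟨ht, hmt⟩ := ih fun b hb => h b (by simp [hb])
    refine ⟨by simpa using ha.mul ht, ?_⟩
    rw [List.prod_cons, mu_mul ha ht]
    calc |μ a + μ t.prod| ≤ |μ a| + |μ t.prod| := abs_add_le _ _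
      _ ≤ 1 + t.length := by exact add_le_add hma hmt
      _ = (a :: t).length := by simp; ring

lemma gen_bound {a} (ha : a ∈ Bset ∪ Bset⁻¹) : Bal a ∧ |μ a| ≤ 1 := by
  have key : ∀ b ∈ Bset, Bal b ∧ |μ b| ≤ 1 := by
    intro b hb
    rcases hb with rfl | rfl | rfl <;>
      constructor <;>
        simp [Bal, μ, x1, x2, y1, y2, commutatorElement_def, Prod.fst_mul, Prod.snd_mul, ψ]
  rcases ha with ha | ha
  · exact key a ha
  · obtain ⟨hb1, hb2⟩ := key a⁻¹ (Set.mem_inv.mp ha)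
    have hBal : Bal a := by
      constructor <;> [have := hb1.1; have := hb1.2] <;>
        simp only [Prod.fst_inv, Prod.snd_inv, map_inv, Heis.inv_x, Heis.inv_y] at this <;>
        linarith
    refine ⟨hBal, ?_⟩
    obtain ⟨h1, h2⟩ := hBal
    have e1 : (ψ a.2).x = -(ψ a.1).x := by linarith
    have e2 : (ψ a.2).y = -(ψ a.1).y := by linarith
    have hm : μ a⁻¹ = -μ a := by
      simp only [μ, Prod.fst_inv, Prod.snd_inv, map_inv, Heis.inv_z, e1, e2]
      ring
    rw [hm, abs_neg] at hb2
    exact hb2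

lemma mu_hElt (n : ℕ) : μ (hElt n) = (n : ℤ) ^ 2 := by
  have h0 := psi_pow0 n
  have h1 := psi_pow1 n
  simp only [μ, hElt, x1, y1, commutatorElement_def, Prod.pow_mk, Prod.fst_mul,
    Prod.snd_mul, Prod.fst_inv, Prod.snd_inv, Prod.mk_mul_mk, one_pow, Prod.fst, Prod.snd,
    map_mul, map_inv, map_one, h0, h1, Heis.mul_z, Heis.inv_z, Heis.mul_x, Heis.inv_x,
    Heis.mul_y, Heis.inv_y, Heis.one_z, one_mul, inv_one]
  ring

/-- For `n ≥ 1`, every product of elements of `B ∪ B⁻¹` equal to `h_n = [x_1^n, y_1^n]` has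
at least `n²` factors (i.e. `d_B(1, h_n) ≥ n²`), whereas `h_n` has word length at most `4n`
with respect to the generating set `{x_1, y_1, x_2, y_2}` of `F_2 × F_2`.  In particular
the subgroup `K^2_2(2)` generated by `B` is at least quadratically distorted in
`F_2 × F_2`. -/
theorem distortion_of_K22 (n : ℕ) (hn : 1 ≤ n) :
    (∀ (L : ℕ) (f : Fin L → FreeGroup (Fin 2) × FreeGroup (Fin 2)),
      (∀ i, f i ∈ Bset ∪ Bset⁻¹) → (List.ofFn f).prod = hElt n → n ^ 2 ≤ L) ∧
    (∃ L ≤ 4 * n, ∃ f : Fin L → FreeGroup (Fin 2) × FreeGroup (Fin 2),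
      (∀ i, f i ∈ ({x1, y1, x2, y2} : Set (FreeGroup (Fin 2) × FreeGroup (Fin 2))) ∪
        ({x1, y1, x2, y2} : Set (FreeGroup (Fin 2) × FreeGroup (Fin 2)))⁻¹) ∧
      (List.ofFn f).prod = hElt n) := by
  constructor
  · intro L f hf hprod
    have hall : ∀ a ∈ List.ofFn f, Bal a ∧ |μ a| ≤ 1 := by
      intro a ha
      obtain ⟨i, rfl⟩ := List.mem_ofFn.mp ha
      exact gen_bound (hf i)
    have hb := (list_prod_bound _ hall).2
    rw [hprod, mu_hElt, List.length_ofFn] at hb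
    have : (n : ℤ) ^ 2 ≤ (L : ℤ) := le_trans (le_abs_self _) hb
    exact_mod_cast this
  · set S : Set (FreeGroup (Fin 2) × FreeGroup (Fin 2)) := {x1, y1, x2, y2} with hS
    set l : List (FreeGroup (Fin 2) × FreeGroup (Fin 2)) :=
      List.replicate n x1 ++ List.replicate n y1 ++
        List.replicate n x1⁻¹ ++ List.replicate n y1⁻¹ with hl
    refine ⟨l.length, by simp [hl]; ring_nf; omega, l.get, ?_, ?_⟩
    · intro i
      have hi : l.get i ∈ l := List.get_mem l i
      have : ∀ a ∈ l, a ∈ S ∪ S⁻¹ := by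
        intro a ha
        simp only [hl, List.mem_append, List.mem_replicate] at ha
        rcases ha with ((⟨-, rfl⟩ | ⟨-, rfl⟩) | ⟨-, rfl⟩) | ⟨-, rfl⟩
        · exact Or.inl (by simp [hS])
        · exact Or.inl (by simp [hS])
        · exact Or.inr (by simp [hS, Set.mem_inv])
        · exact Or.inr (by simp [hS, Set.mem_inv])
      exact this _ hi
    · rw [List.ofFn_get]
      simp only [hl, List.prod_append, List.prod_replicate, inv_pow]
      simp [hElt, commutatorElement_def, mul_assoc]
end
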